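/- arXiv:1401.7209 — 9 statements merged into one kernel-verified Lean document; each statement's English description precedes it below -/
import Mathlib

section
/- Let α, β, γ, δ be real constants with α > 0 and δ > 0. Then hypothesis (H) — max(β, γ) ≥ 0 or βγ < αδ — holds if and only if there exist λ ≥ 0 and μ ≥ 0 such that λα + μγ > 0 and λβ + μδ > 0. -/
/-- For real constants `α, β, γ, δ` with `α > 0` and `δ > 0`, hypothesis (H)
(`max β γ ≥ 0` or `βγ < αδ`) holds iff there exist `λ ≥ 0`, `μ ≥ 0` with
`λα + μγ > 0` and `λβ + μδ > 0`. -/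
theorem hypothesis_H_iff_S_matrix (α β γ δ : ℝ) (hα : 0 < α) (hδ : 0 < δ) :
    (max β γ ≥ 0 ∨ β * γ < α * δ) ↔
      ∃ lam mu : ℝ, 0 ≤ lam ∧ 0 ≤ mu ∧ 0 < lam * α + mu * γ ∧ 0 < lam * β + mu * δ := by
  constructor
  · intro h
    rcases le_or_gt 0 β with hβ | hβ
    · refine ⟨2 * (|γ| + 1), α, by positivity, hα.le, ?_, ?_⟩
      · nlinarith [neg_abs_le γ, abs_nonneg γ]
      · nlinarith [abs_nonneg γ]
    rcases le_or_gt 0 γ with hγ | hγ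
    · refine ⟨δ, 2 * (|β| + 1), hδ.le, by positivity, ?_, ?_⟩
      · nlinarith [abs_nonneg β]
      · nlinarith [neg_abs_le β, abs_nonneg β]
    · have hlt : β * γ < α * δ := by
        rcases h with h | h
        · exact absurd h (not_le.mpr (max_lt hβ hγ))
        · exact h
      refine ⟨β * γ + α * δ, -2 * α * β, by nlinarith, by nlinarith, ?_, ?_⟩
      · nlinarith
      · nlinarith
  · rintro ⟨lam, mu, hlam, hmu, h1, h2⟩
    by_contra hc
    push_neg at hc
    obtain ⟨hmax, hge⟩ := hc
    obtain ⟨hβ, hγ⟩ := max_lt_iff.mp hmax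
    have hlam' : 0 < lam := by nlinarith
    have hmu' : 0 < mu := by nlinarith
    nlinarith [mul_pos h1 h2, mul_pos hlam' hmu']
end

section
/- Let α, β, γ, δ be real constants with α > 0, δ > 0, β < 0, γ < 0 and αδ < βγ. Then for every (x₀, y₀) ∈ S there exists no solution to the system starting at (x₀, y₀). -/
open MeasureTheory

/-- A solution to the system starting at `(x₀, y₀)`: a pair of continuous functions
`x, y : [0,∞) → [0,∞)` (modelled as functions `ℝ → ℝ` that are continuous and
nonnegative on `[0,∞)`) with `x 0 = x₀`, `y 0 = y₀`, such that for all `t ≥ 0`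
the sets `{s ∈ [0,t] | x s = 0}` and `{s ∈ [0,t] | y s = 0}` are Lebesgue-null, the
integrals `∫₀ᵗ ds / x s` and `∫₀ᵗ ds / y s` are finite (note `1 / 0 = 0` in Lean, so
`1 / x s` is the same as `1_{x(s) > 0} / x s`), and the two integral equations hold. -/
def IsSolution (α β γ δ x₀ y₀ : ℝ) (x y : ℝ → ℝ) : Prop :=
  ContinuousOn x (Set.Ici 0) ∧ ContinuousOn y (Set.Ici 0) ∧
  (∀ t ≥ (0:ℝ), 0 ≤ x t ∧ 0 ≤ y t) ∧
  x 0 = x₀ ∧ y 0 = y₀ ∧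
  ∀ t ≥ (0:ℝ),
    volume {s ∈ Set.Icc (0:ℝ) t | x s = 0} = 0 ∧
    volume {s ∈ Set.Icc (0:ℝ) t | y s = 0} = 0 ∧
    IntervalIntegrable (fun s => 1 / x s) volume 0 t ∧
    IntervalIntegrable (fun s => 1 / y s) volume 0 t ∧
    x t = x₀ + α * (∫ s in (0:ℝ)..t, 1 / x s) + β * (∫ s in (0:ℝ)..t, 1 / y s) ∧
    y t = y₀ + γ * (∫ s in (0:ℝ)..t, 1 / x s) + δ * (∫ s in (0:ℝ)..t, 1 / y s)

/-- If `α > 0`, `δ > 0`, `β < 0`, `γ < 0` and `αδ < βγ`, then for every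
`(x₀, y₀) ∈ S` there is no solution to the system starting at `(x₀, y₀)`. -/
theorem no_solution (α β γ δ : ℝ) (hα : 0 < α) (hδ : 0 < δ) (hβ : β < 0) (hγ : γ < 0)
    (h : α * δ < β * γ) (x₀ y₀ : ℝ) (hx₀ : 0 ≤ x₀) (hy₀ : 0 ≤ y₀) :
    ¬ ∃ x y : ℝ → ℝ, IsSolution α β γ δ x₀ y₀ x y := by
  rintro ⟨x, y, hcx, hcy, hnn, hx0, hy0, H⟩
  set e : ℝ := β * γ - α * δ with he_def
  set L : ℝ := δ + e / (2 * α) with hL_def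
  set M : ℝ := -β with hM_def
  set C : ℝ := L * x₀ + M * y₀ with hC_def
  have he : 0 < e := by rw [he_def]; linarith
  have hL : 0 < L := by rw [hL_def]; positivity
  have hM : 0 < M := by rw [hM_def]; linarith
  have hC : 0 ≤ C := by
    rw [hC_def]
    exact add_nonneg (mul_nonneg hL.le hx₀) (mul_nonneg hM.le hy₀)
  set A : ℝ → ℝ := fun t => ∫ s in (0:ℝ)..t, 1 / x s with hA_def
  set B : ℝ → ℝ := fun t => ∫ s in (0:ℝ)..t, 1 / y s with hB_def
  have hAnn : ∀ t ≥ (0:ℝ), 0 ≤ A t := fun t ht => by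
    rw [hA_def]
    exact intervalIntegral.integral_nonneg ht fun u hu => by
      have := (hnn u hu.1).1; positivity
  have hBnn : ∀ t ≥ (0:ℝ), 0 ≤ B t := fun t ht => by
    rw [hB_def]
    exact intervalIntegral.integral_nonneg ht fun u hu => by
      have := (hnn u hu.1).2; positivity
  have key : ∀ t ≥ (0:ℝ),
      L * x t + M * y t = C - (e / 2) * A t - (M * e / (2 * α)) * B t := by
    intro t ht
    obtain ⟨-, -, -, -, hx, hy⟩ := H t ht
    simp only [hA_def, hB_def]
    rw [hx, hy, hC_def, hL_def, hM_def, he_def]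
    field_simp
    ring
  clear_value e L M C A B
  have hub : ∀ t ≥ (0:ℝ), L * x t + M * y t ≤ C := by
    intro t ht
    have h1 := mul_nonneg (by positivity : (0:ℝ) ≤ e / 2) (hAnn t ht)
    have h2 := mul_nonneg (by positivity : (0:ℝ) ≤ M * e / (2 * α)) (hBnn t ht)
    have := key t ht
    linarith
  have hxb : ∀ s ≥ (0:ℝ), L * x s ≤ C := by
    intro s hs
    have h1 := mul_nonneg hM.le (hnn s hs).2
    have h2 := hub s hs
    linarith
  rcases hC.lt_or_eq with hCpos | hC0
  · -- C > 0
    set T : ℝ := 2 * C ^ 2 / (e * L) + 1 with hT_def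
    have hT : 0 < T := by rw [hT_def]; positivity
    clear_value T
    have hint := (H T hT.le).2.2.1
    have hnull := (H T hT.le).1
    have hsub : {s : ℝ | ¬ L / C ≤ 1 / x s} ∩ Set.Icc 0 T
        ⊆ {s | s ∈ Set.Icc (0:ℝ) T ∧ x s = 0} := by
      rintro s ⟨hsbad, hsIcc⟩
      refine ⟨hsIcc, ?_⟩
      by_contra hne
      have hxpos : 0 < x s := lt_of_le_of_ne (hnn s hsIcc.1).1 (Ne.symm hne)
      have hxle : x s ≤ C / L := by
        rw [le_div_iff₀ hL]
        have := hxb s hsIcc.1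
        linarith
      have h1 := one_div_le_one_div_of_le hxpos hxle
      rw [one_div_div] at h1
      exact hsbad h1
    have hae : (fun _ : ℝ => L / C) ≤ᵐ[volume.restrict (Set.Icc 0 T)]
        fun s => 1 / x s := by
      have hz : (volume.restrict (Set.Icc 0 T)) {s : ℝ | ¬ L / C ≤ 1 / x s} = 0 := by
        rw [Measure.restrict_apply' measurableSet_Icc]
        exact measure_mono_null hsub hnull
      exact MeasureTheory.ae_iff.mpr hz
    have hlow : L * T / C ≤ A T := by
      have h0 := intervalIntegral.integral_mono_ae_restrict hT.le
        (intervalIntegrable_const (c := L / C)) hint hae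
      rw [intervalIntegral.integral_const, sub_zero, smul_eq_mul] at h0
      calc L * T / C = T * (L / C) := by ring
        _ ≤ A T := by rw [hA_def]; exact h0
    have hup : (e / 2) * A T ≤ C := by
      have h1 := key T hT.le
      have h2 := mul_nonneg hL.le (hnn T hT.le).1
      have h3 := mul_nonneg hM.le (hnn T hT.le).2
      have h4 := mul_nonneg (by positivity : (0:ℝ) ≤ M * e / (2 * α)) (hBnn T hT.le)
      linarith
    have s1 : L * T ≤ A T * C := (div_le_iff₀ hCpos).mp hlow
    have s2 : (e / 2) * (L * T) ≤ (e / 2) * (A T * C) :=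
      mul_le_mul_of_nonneg_left s1 (by positivity)
    have s3 : ((e / 2) * A T) * C ≤ C * C := mul_le_mul_of_nonneg_right hup hC
    have hTval : e * L * T = 2 * C ^ 2 + e * L := by
      rw [hT_def]; field_simp
    nlinarith [mul_pos he hL]
  · -- C = 0 : then x vanishes identically on [0, 1]
    have hxz : ∀ s ∈ Set.Icc (0:ℝ) 1, x s = 0 := by
      intro s hs
      by_contra hne
      have hxpos : 0 < x s := lt_of_le_of_ne (hnn s hs.1).1 (Ne.symm hne)
      have h1 := hxb s hs.1
      nlinarith [mul_pos hL hxpos]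
    have hnull := (H 1 zero_le_one).1
    have : volume (Set.Icc (0:ℝ) 1) = 0 := by
      refine le_antisymm ?_ zero_le
      rw [← hnull]
      exact measure_mono fun s hs => ⟨hs, hxz s hs⟩
    simp [Real.volume_Icc] at this
end

section
/- Assume hypothesis (H) and fix λ > 0, μ > 0 with λα + μγ > 0 and λβ + μδ > 0. Let (x(·), y(·)) be a solution to the system starting at some point of S. Then the function z(t) := λ x(t) + μ y(t) is (strictly) increasing on [0,∞), and (x(t), y(t)) ∈ S° = S \ {(0,0)} for every t > 0. -/
open MeasureTheory

lemma pos_integral {f : ℝ → ℝ} {s t : ℝ} (hst : s < t)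
    (hnn : ∀ u ∈ Set.Ioc s t, 0 ≤ f u)
    (hnull : volume {u | u ∈ Set.Ioc s t ∧ f u = 0} = 0)
    (hint : IntervalIntegrable f volume s t) :
    0 < ∫ u in s..t, f u := by
  rw [intervalIntegral.integral_of_le hst.le]
  rw [MeasureTheory.setIntegral_pos_iff_support_of_nonneg_ae
      ((ae_restrict_iff' measurableSet_Ioc).2 (Filter.Eventually.of_forall hnn)) hint.1]
  have h1 : Set.Ioc s t \ {u | u ∈ Set.Ioc s t ∧ f u = 0} ⊆ Function.support f ∩ Set.Ioc s t :=
    fun u hu => ⟨fun h0 => hu.2 ⟨hu.1, h0⟩, hu.1⟩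
  calc (0:ENNReal) < volume (Set.Ioc s t) := by
        simp [Real.volume_Ioc, ENNReal.ofReal_pos, sub_pos, hst]
    _ = volume (Set.Ioc s t \ {u | u ∈ Set.Ioc s t ∧ f u = 0}) :=
        (measure_diff_null hnull).symm
    _ ≤ volume (Function.support f ∩ Set.Ioc s t) := measure_mono h1

/-- Under (H), with `λ, μ > 0` such that `λα + μγ > 0` and `λβ + μδ > 0`,
along any solution the function `z(t) = λ x(t) + μ y(t)` is strictly increasing on
`[0,∞)`, and `(x(t), y(t)) ∈ S° = S \ {(0,0)}` for every `t > 0`. -/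
theorem increasing_and_punctured (α β γ δ : ℝ) (hα : 0 < α) (hδ : 0 < δ)
    (hH : max β γ ≥ 0 ∨ β * γ < α * δ)
    (lam mu : ℝ) (hlam : 0 < lam) (hmu : 0 < mu)
    (h1 : 0 < lam * α + mu * γ) (h2 : 0 < lam * β + mu * δ)
    (x₀ y₀ : ℝ) (hx₀ : 0 ≤ x₀) (hy₀ : 0 ≤ y₀)
    (x y : ℝ → ℝ) (hsol : IsSolution α β γ δ x₀ y₀ x y) :
    StrictMonoOn (fun t => lam * x t + mu * y t) (Set.Ici 0) ∧
      ∀ t > (0:ℝ), ¬(x t = 0 ∧ y t = 0) := by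

  obtain ⟨hcx, hcy, hnn, hx0, hy0, heqs⟩ := hsol
  have key : ∀ s ∈ Set.Ici (0:ℝ), ∀ t ∈ Set.Ici (0:ℝ), s < t →
      lam * x s + mu * y s < lam * x t + mu * y t := by
    intro s hs t ht hst
    simp only [Set.mem_Ici] at hs ht
    obtain ⟨nxt, nyt, ixt, iyt, ext, eyt⟩ := heqs t ht
    obtain ⟨nxs, nys, ixs, iys, exs, eys⟩ := heqs s hs
    have hsub : Set.uIcc s t ⊆ Set.uIcc (0:ℝ) t := by
      rw [Set.uIcc_of_le hst.le, Set.uIcc_of_le ht]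
      exact Set.Icc_subset_Icc hs le_rfl
    have ixst : IntervalIntegrable (fun u => 1 / x u) volume s t := ixt.mono_set hsub
    have iyst : IntervalIntegrable (fun u => 1 / y u) volume s t := iyt.mono_set hsub
    have hA : 0 < ∫ u in s..t, 1 / x u := by
      refine pos_integral hst (fun u hu => one_div_nonneg.2 (hnn u (hs.trans hu.1.le)).1) ?_ ixst
      refine measure_mono_null (fun u hu => ?_) nxt
      rcases hu with ⟨hu1, hu2⟩
      have := (div_eq_zero_iff.1 hu2).resolve_left one_ne_zero
      exact ⟨⟨hs.trans hu1.1.le, hu1.2⟩, this⟩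
    have hB : 0 < ∫ u in s..t, 1 / y u := by
      refine pos_integral hst (fun u hu => one_div_nonneg.2 (hnn u (hs.trans hu.1.le)).2) ?_ iyst
      refine measure_mono_null (fun u hu => ?_) nyt
      rcases hu with ⟨hu1, hu2⟩
      have := (div_eq_zero_iff.1 hu2).resolve_left one_ne_zero
      exact ⟨⟨hs.trans hu1.1.le, hu1.2⟩, this⟩
    have addx : (∫ u in (0:ℝ)..s, 1 / x u) + ∫ u in s..t, 1 / x u = ∫ u in (0:ℝ)..t, 1 / x u :=
      intervalIntegral.integral_add_adjacent_intervals ixs ixst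
    have addy : (∫ u in (0:ℝ)..s, 1 / y u) + ∫ u in s..t, 1 / y u = ∫ u in (0:ℝ)..t, 1 / y u :=
      intervalIntegral.integral_add_adjacent_intervals iys iyst
    have hz : lam * x t + mu * y t =
        lam * x s + mu * y s + (lam * α + mu * γ) * (∫ u in s..t, 1 / x u)
          + (lam * β + mu * δ) * (∫ u in s..t, 1 / y u) := by
      rw [ext, eyt, exs, eys, ← addx, ← addy]; ring
    nlinarith [mul_pos h1 hA, mul_pos h2 hB]
  constructor
  · exact fun s hs t ht hst => key s hs t ht hst
  · intro t ht ⟨hxt, hyt⟩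
    have := key 0 Set.self_mem_Ici t ht.le ht
    rw [hx0, hy0, hxt, hyt] at this
    nlinarith
end

section
/- Assume hypothesis (H). Then the pair x(t) = c√t, y(t) = d√t is a solution to the system starting at (0,0), where c = (2α + (β/δ)(β − γ + √((β−γ)² + 4αδ)))^{1/2} and d = (2δ + (γ/α)(γ − β + √((β−γ)² + 4αδ)))^{1/2}; in particular the quantities 2α + (β/δ)(β − γ + √((β−γ)² + 4αδ)) and 2δ + (γ/α)(γ − β + √((β−γ)² + 4αδ)) are positive. -/
open MeasureTheory

/-- `1/(c√s)` agrees with `c⁻¹ s^{-1/2}` everywhere (with junk values matching). -/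
lemma aux_fun_eq (c : ℝ) :
    (fun s : ℝ => 1 / (c * Real.sqrt s)) = fun s : ℝ => c⁻¹ * s ^ (-(1/2) : ℝ) := by
  funext s
  rcases lt_trichotomy s 0 with h | h | h
  · rw [Real.sqrt_eq_zero'.2 h.le, Real.rpow_def_of_neg h]
    have hcos : Real.cos (-(1/2) * Real.pi) = 0 := by
      rw [show (-(1/2) * Real.pi : ℝ) = -(Real.pi/2) by ring, Real.cos_neg,
        Real.cos_pi_div_two]
    rw [hcos]
    simp
  · subst h
    rw [Real.sqrt_zero, Real.zero_rpow (by norm_num)]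
    simp
  · rw [Real.sqrt_eq_rpow, Real.rpow_neg h.le, one_div, mul_inv]

lemma aux_integral {t : ℝ} (ht : 0 ≤ t) :
    ∫ s in (0:ℝ)..t, s ^ (-(1/2) : ℝ) = 2 * Real.sqrt t := by
  rw [integral_rpow (Or.inl (by norm_num)), Real.zero_rpow (by norm_num),
    Real.sqrt_eq_rpow]
  norm_num
  ring

set_option maxHeartbeats 1000000 in
/-- Under (H), the pair `x(t) = c√t`, `y(t) = d√t` is a solution starting
at `(0,0)`, where `c = √(2α + (β/δ)(β − γ + √((β−γ)² + 4αδ)))` and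
`d = √(2δ + (γ/α)(γ − β + √((β−γ)² + 4αδ)))`; in particular the two quantities under
the outer square roots are positive. -/
theorem corner_solution (α β γ δ : ℝ) (hα : 0 < α) (hδ : 0 < δ)
    (hH : max β γ ≥ 0 ∨ β * γ < α * δ) :
    0 < 2 * α + β / δ * (β - γ + Real.sqrt ((β - γ) ^ 2 + 4 * α * δ)) ∧
    0 < 2 * δ + γ / α * (γ - β + Real.sqrt ((β - γ) ^ 2 + 4 * α * δ)) ∧
    IsSolution α β γ δ 0 0
      (fun t => Real.sqrt (2 * α + β / δ * (β - γ + Real.sqrt ((β - γ) ^ 2 + 4 * α * δ)))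
        * Real.sqrt t)
      (fun t => Real.sqrt (2 * δ + γ / α * (γ - β + Real.sqrt ((β - γ) ^ 2 + 4 * α * δ)))
        * Real.sqrt t) := by
  set R := Real.sqrt ((β - γ) ^ 2 + 4 * α * δ) with hRdef
  have hRsq : R ^ 2 = (β - γ) ^ 2 + 4 * α * δ := Real.sq_sqrt (by positivity)
  have hR0 : 0 ≤ R := Real.sqrt_nonneg _
  have hf : 0 < β - γ + R := by
    by_contra h
    push_neg at h
    have h1 : R ≤ γ - β := by linarith
    have h2 : R ^ 2 ≤ (γ - β) ^ 2 := by nlinarith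
    nlinarith [mul_pos hα hδ]
  have hg : 0 < γ - β + R := by
    by_contra h
    push_neg at h
    have h1 : R ≤ β - γ := by linarith
    have h2 : R ^ 2 ≤ (β - γ) ^ 2 := by nlinarith
    nlinarith [mul_pos hα hδ]
  have he : 0 < β + γ + R := by
    rcases lt_or_ge (β * γ) (α * δ) with h' | h'
    · by_contra h
      push_neg at h
      have h1 : R ≤ -(β + γ) := by linarith
      have h2 : R ^ 2 ≤ (β + γ) ^ 2 := by nlinarith
      nlinarith
    · have hmax : 0 ≤ max β γ := by
        rcases hH with h | h
        · exact h
        · linarith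
      have hbg : 0 < β * γ := lt_of_lt_of_le (mul_pos hα hδ) h'
      rcases le_max_iff.mp hmax with hb | hgn
      · have hγ1 : 0 < γ := by nlinarith
        linarith
      · have hβ1 : 0 < β := by nlinarith
        linarith
  have hfg : (β - γ + R) * (γ - β + R) = 4 * (α * δ) := by linear_combination hRsq
  set A := 2 * α + β / δ * (β - γ + R) with hAdef
  set B := 2 * δ + γ / α * (γ - β + R) with hBdef
  have hδc : β / δ * δ = β := div_mul_cancel₀ β hδ.ne'
  have hαc : γ / α * α = γ := div_mul_cancel₀ γ hα.ne'
  have hA : 2 * δ * A = (β - γ + R) * (β + γ + R) := by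
    rw [hAdef]
    linear_combination -hfg + 2 * (β - γ + R) * hδc
  have hB : 2 * α * B = (γ - β + R) * (β + γ + R) := by
    rw [hBdef]
    linear_combination -hfg + 2 * (γ - β + R) * hαc
  have hApos : 0 < A := by nlinarith [mul_pos hf he]
  have hBpos : 0 < B := by nlinarith [mul_pos hg he]
  refine ⟨hApos, hBpos, ?_⟩
  set c := Real.sqrt A with hcdef
  set d := Real.sqrt B with hddef
  have hc : 0 < c := Real.sqrt_pos.2 hApos
  have hd : 0 < d := Real.sqrt_pos.2 hBpos
  have hc2 : 2 * δ * c ^ 2 = (β - γ + R) * (β + γ + R) := by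
    rw [hcdef, Real.sq_sqrt hApos.le]; exact hA
  have hd2 : 2 * α * d ^ 2 = (γ - β + R) * (β + γ + R) := by
    rw [hddef, Real.sq_sqrt hBpos.le]; exact hB
  -- 2δc = (β-γ+R)d
  have hcd : 2 * δ * c = (β - γ + R) * d := by
    have h2 : 2 * α * ((2 * δ * c) ^ 2) = 2 * α * (((β - γ + R) * d) ^ 2) := by
      linear_combination (4 * α * δ) * hc2 - (β - γ + R) ^ 2 * hd2
        - ((β - γ + R) * (β + γ + R)) * hfg
    have hsq : (2 * δ * c) ^ 2 = ((β - γ + R) * d) ^ 2 :=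
      mul_left_cancel₀ (by positivity) h2
    have hdiff : (2 * δ * c - (β - γ + R) * d) * (2 * δ * c + (β - γ + R) * d) = 0 := by
      linear_combination hsq
    rcases mul_eq_zero.1 hdiff with h | h
    · linarith
    · linarith [mul_pos hδ hc, mul_pos hf hd]
  -- 2αd = (γ-β+R)c
  have hgd : 2 * α * d = (γ - β + R) * c := by
    have h2 : 2 * δ * ((2 * α * d) ^ 2) = 2 * δ * (((γ - β + R) * c) ^ 2) := by
      linear_combination (4 * α * δ) * hd2 - (γ - β + R) ^ 2 * hc2
        - ((γ - β + R) * (β + γ + R)) * hfg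
    have hsq : (2 * α * d) ^ 2 = ((γ - β + R) * c) ^ 2 :=
      mul_left_cancel₀ (by positivity) h2
    have hdiff : (2 * α * d - (γ - β + R) * c) * (2 * α * d + (γ - β + R) * c) = 0 := by
      linear_combination hsq
    rcases mul_eq_zero.1 hdiff with h | h
    · linarith
    · linarith [mul_pos hα hd, mul_pos hg hc]
  have hxeq : c ^ 2 * d = 2 * α * d + 2 * β * c := by
    have h2 : 2 * δ * (c ^ 2 * d) = 2 * δ * (2 * α * d + 2 * β * c) := by
      linear_combination d * hc2 + d * hfg - 2 * β * hcd
    exact mul_left_cancel₀ (by positivity) h2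
  have hyeq : c * d ^ 2 = 2 * γ * d + 2 * δ * c := by
    have h2 : 2 * α * (c * d ^ 2) = 2 * α * (2 * γ * d + 2 * δ * c) := by
      linear_combination c * hd2 + c * hfg - 2 * γ * hgd
    exact mul_left_cancel₀ (by positivity) h2
  refine ⟨(continuous_const.mul Real.continuous_sqrt).continuousOn,
    (continuous_const.mul Real.continuous_sqrt).continuousOn,
    fun t _ => ⟨mul_nonneg hc.le (Real.sqrt_nonneg t),
      mul_nonneg hd.le (Real.sqrt_nonneg t)⟩,
    by simp, by simp, ?_⟩
  intro t ht
  have hnull : ∀ e : ℝ, 0 < e →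
      volume {s ∈ Set.Icc (0:ℝ) t | e * Real.sqrt s = 0} = 0 := by
    intro e hep
    refine measure_mono_null (fun s hs => ?_) (measure_singleton (0:ℝ))
    obtain ⟨hs1, hs2⟩ := hs
    rcases mul_eq_zero.1 hs2 with h | h
    · exact absurd h hep.ne'
    · exact Set.mem_singleton_iff.2 (le_antisymm (Real.sqrt_eq_zero'.1 h) hs1.1)
  have hint : ∀ e : ℝ, IntervalIntegrable (fun s => 1 / (e * Real.sqrt s)) volume 0 t := by
    intro e
    rw [aux_fun_eq]
    exact (intervalIntegral.intervalIntegrable_rpow' (by norm_num)).const_mul _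
  have hval : ∀ e : ℝ, (∫ s in (0:ℝ)..t, 1 / (e * Real.sqrt s)) = e⁻¹ * (2 * Real.sqrt t) := by
    intro e
    rw [aux_fun_eq, intervalIntegral.integral_const_mul, aux_integral ht]
  refine ⟨hnull c hc, hnull d hd, hint c, hint d, ?_, ?_⟩
  · show c * Real.sqrt t = 0 + α * (∫ s in (0:ℝ)..t, 1 / (c * Real.sqrt s))
      + β * (∫ s in (0:ℝ)..t, 1 / (d * Real.sqrt s))
    rw [hval c, hval d]
    have hrt := Real.sqrt_nonneg t
    field_simp
    linear_combination Real.sqrt t * hxeq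
  · show d * Real.sqrt t = 0 + γ * (∫ s in (0:ℝ)..t, 1 / (c * Real.sqrt s))
      + δ * (∫ s in (0:ℝ)..t, 1 / (d * Real.sqrt s))
    rw [hval c, hval d]
    field_simp
    linear_combination Real.sqrt t * hyeq
end

section
/- Assume hypothesis (H). If α > 0, δ > 0 and the positive reals c, d satisfy c/2 = α/c + β/d and d/2 = γ/c + δ/d, then d/c = (γ − β + √((β−γ)² + 4αδ)) / (2α). -/
/-- Under (H), if `α > 0`, `δ > 0` and positive reals `c, d` satisfy
`c/2 = α/c + β/d` and `d/2 = γ/c + δ/d`, then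
`d/c = (γ − β + √((β−γ)² + 4αδ)) / (2α)`. -/
theorem slope_value (α β γ δ : ℝ) (hα : 0 < α) (hδ : 0 < δ)
    (hH : max β γ ≥ 0 ∨ β * γ < α * δ)
    (c d : ℝ) (hc : 0 < c) (hd : 0 < d)
    (h1 : c / 2 = α / c + β / d) (h2 : d / 2 = γ / c + δ / d) :
    d / c = (γ - β + Real.sqrt ((β - γ) ^ 2 + 4 * α * δ)) / (2 * α) := by
  have hc' := hc.ne'
  have hd' := hd.ne'
  have e1 : c * c * d = 2 * (α * d + β * c) := by
    field_simp at h1; nlinarith [h1]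
  have e2 : c * d * d = 2 * (γ * d + δ * c) := by
    field_simp at h2; nlinarith [h2]
  have key : α * d ^ 2 + (β - γ) * (c * d) - δ * c ^ 2 = 0 := by nlinarith [e1, e2]
  set s := Real.sqrt ((β - γ) ^ 2 + 4 * α * δ) with hs
  have hs0 : 0 ≤ s := Real.sqrt_nonneg _
  have hs2 : s ^ 2 = (β - γ) ^ 2 + 4 * α * δ := Real.sq_sqrt (by positivity)
  have hlin : 0 < α * d + (β - γ) * c := by
    nlinarith [key, mul_pos hδ (mul_pos hc hc)]
  have hbig : 0 < 2 * α * d + (β - γ) * c := by nlinarith [mul_pos hα hd]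
  have hsq : (2 * α * d + (β - γ) * c) ^ 2 = (c * s) ^ 2 := by
    rw [mul_pow, hs2]; nlinarith [key]
  have heq : 2 * α * d + (β - γ) * c = c * s := by
    have hz : (2 * α * d + (β - γ) * c - c * s) * (2 * α * d + (β - γ) * c + c * s) = 0 := by
      linear_combination hsq
    rcases mul_eq_zero.1 hz with h | h
    · linarith
    · nlinarith [mul_nonneg hc.le hs0]
  rw [div_eq_div_iff hc.ne' (by positivity : (2:ℝ) * α ≠ 0)]
  linear_combination heq
end

section
/- Assume hypothesis (H). Let (x(·), y(·)) be a solution to the system starting at (x₀,y₀) ∈ S° and set θ(t) = arctan(y(t)/x(t)) and θ* = arctan(d/c). Then for all t > 0: if arctan(y₀/x₀) < θ* then θ'(t) > 0 and θ(t) < θ*; if arctan(y₀/x₀) = θ* then θ'(t) = 0 and θ(t) = θ*; and if arctan(y₀/x₀) > θ* then θ'(t) < 0 and θ(t) > θ*. -/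
open MeasureTheory Set

set_option maxHeartbeats 4000000

section AuxLemmas

lemma arctan_diff_lb (B a b : ℝ) (ha : 0 ≤ a) (hab : a ≤ b) (hbB : b ≤ B) :
    b - a ≤ (1 + B ^ 2) * (Real.arctan b - Real.arctan a) := by
  have hBpos : 0 < 1 + B ^ 2 := by positivity
  set W : ℝ → ℝ := fun v => Real.arctan v - v / (1 + B ^ 2) with hW
  have hWd : ∀ v : ℝ, HasDerivAt W (1 / (1 + v ^ 2) - 1 / (1 + B ^ 2)) v := by
    intro v
    exact (Real.hasDerivAt_arctan v).sub ((hasDerivAt_id v).div_const _)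
  have hmono : MonotoneOn W (Icc 0 B) := by
    apply monotoneOn_of_deriv_nonneg (convex_Icc 0 B)
    · exact fun v _ => ((hWd v).continuousAt).continuousWithinAt
    · intro v hv
      exact (hWd v).differentiableAt.differentiableWithinAt
    · intro v hv
      rw [interior_Icc] at hv
      rw [(hWd v).deriv]
      have h1 : v ^ 2 ≤ B ^ 2 := by nlinarith [hv.1, hv.2]
      have : (1:ℝ) / (1 + B ^ 2) ≤ 1 / (1 + v ^ 2) := by
        apply one_div_le_one_div_of_le (by positivity) (by linarith)
      linarith
  have hb0 : 0 ≤ b := le_trans ha hab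
  have := hmono ⟨ha, le_trans hab hbB⟩ ⟨hb0, hbB⟩ hab
  simp only [hW] at this
  have h2 : b / (1 + B ^ 2) - a / (1 + B ^ 2) ≤ Real.arctan b - Real.arctan a := by linarith
  calc b - a = (1 + B ^ 2) * (b / (1 + B ^ 2) - a / (1 + B ^ 2)) := by field_simp
    _ ≤ (1 + B ^ 2) * (Real.arctan b - Real.arctan a) := by
        exact mul_le_mul_of_nonneg_left h2 hBpos.le

lemma no_zero_aux {p q t₁ : ℝ} {f g : ℝ → ℝ}
    (hp : 0 ≤ p) (ht₁ : 0 < t₁)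
    (hgc : ContinuousAt g t₁)
    (hf0 : f t₁ = 0) (hg0 : 0 < g t₁)
    (hfnn : ∀ s ∈ Icc (0:ℝ) t₁, 0 ≤ f s) (hgnn : ∀ s ∈ Icc (0:ℝ) t₁, 0 ≤ g s)
    (hfnull : volume {s ∈ Icc (0:ℝ) t₁ | f s = 0} = 0)
    (hintf : IntervalIntegrable (fun s => 1 / f s) volume 0 t₁)
    (hintg : IntervalIntegrable (fun s => 1 / g s) volume 0 t₁)
    (heq : ∀ t ∈ Icc (0:ℝ) t₁,
      f t = -(p * ∫ s in t..t₁, 1 / f s) - q * ∫ s in t..t₁, 1 / g s) :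
    False := by
  set ε := g t₁ / 2 with hε
  have hεpos : 0 < ε := by positivity
  obtain ⟨η₀, hη₀, hball⟩ := Metric.mem_nhds_iff.mp (hgc.preimage_mem_nhds
    (Ioi_mem_nhds (show ε < g t₁ by simp [hε]; linarith)))
  set η := min (η₀ / 2) (t₁ / 2) with hη
  have hηpos : 0 < η := by positivity
  have hηle : η ≤ t₁ / 2 := min_le_right _ _
  have hwin : ∀ s ∈ Icc (t₁ - η) t₁, ε < g s := by
    intro s hs
    have : s ∈ Metric.ball t₁ η₀ := by
      rw [Metric.mem_ball, Real.dist_eq, abs_sub_lt_iff]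
      constructor
      · linarith [hs.2]
      · have := hs.1
        have hη2 : η ≤ η₀ / 2 := min_le_left _ _
        linarith
    exact hball this
  obtain ⟨C, hCpos, hCge⟩ : ∃ C : ℝ, 0 < C ∧ |q| / ε ≤ C :=
    ⟨|q| / ε + 1, by positivity, by linarith⟩
  have hbound : ∀ t ∈ Icc (t₁ - η) t₁, f t ≤ C * (t₁ - t) := by
    intro t ht
    have ht0 : (0:ℝ) ≤ t := by linarith [ht.1]
    have htt₁ : t ≤ t₁ := ht.2
    have hIf : 0 ≤ ∫ s in t..t₁, 1 / f s := by
      apply intervalIntegral.integral_nonneg htt₁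
      intro s hs
      have : 0 ≤ f s := hfnn s ⟨le_trans ht0 hs.1, hs.2⟩
      positivity
    have hintg' : IntervalIntegrable (fun s => 1 / g s) volume t t₁ :=
      hintg.mono_set (by
        rw [uIcc_of_le htt₁, uIcc_of_le ht₁.le]
        exact Icc_subset_Icc ht0 le_rfl)
    have hIg : ∫ s in t..t₁, 1 / g s ≤ (t₁ - t) * (1 / ε) := by
      have := intervalIntegral.integral_mono_on htt₁ hintg'
        (intervalIntegrable_const (c := 1 / ε)) (fun s hs => by
          have hgs : ε < g s := hwin s ⟨le_trans ht.1 hs.1, hs.2⟩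
          rw [div_le_div_iff₀ (by linarith) hεpos]
          linarith)
      simpa [intervalIntegral.integral_const, smul_eq_mul] using this
    have hIgnn : 0 ≤ ∫ s in t..t₁, 1 / g s := by
      apply intervalIntegral.integral_nonneg htt₁
      intro s hs
      have : 0 ≤ g s := hgnn s ⟨le_trans ht0 hs.1, hs.2⟩
      positivity
    have := heq t ⟨ht0, htt₁⟩
    have hq : -(q * ∫ s in t..t₁, 1 / g s) ≤ |q| * ((t₁ - t) * (1 / ε)) := by
      calc -(q * ∫ s in t..t₁, 1 / g s) ≤ |q| * ∫ s in t..t₁, 1 / g s := by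
            rw [neg_mul_eq_neg_mul]
            exact mul_le_mul_of_nonneg_right (neg_le_abs q) hIgnn
        _ ≤ |q| * ((t₁ - t) * (1 / ε)) := mul_le_mul_of_nonneg_left hIg (abs_nonneg q)
    have hft : f t ≤ |q| * ((t₁ - t) * (1 / ε)) := by
      rw [this]
      have : -(p * ∫ s in t..t₁, 1 / f s) ≤ 0 := by
        simp only [neg_nonpos]
        positivity
      linarith
    have h1 : |q| * ((t₁ - t) * (1 / ε)) ≤ C * (t₁ - t) := by
      have ht₁t : 0 ≤ t₁ - t := by linarith
      calc |q| * ((t₁ - t) * (1 / ε)) = |q| / ε * (t₁ - t) := by ring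
        _ ≤ C * (t₁ - t) := mul_le_mul_of_nonneg_right hCge ht₁t
    linarith
  set D := Ioo (t₁ - η) t₁ with hD
  have hDsub : D ⊆ Icc 0 t₁ := fun s hs => ⟨by linarith [hs.1], (hs.2).le⟩
  have haepos : ∀ᵐ s ∂(volume.restrict D), 0 < f s := by
    have h1 : ∀ᵐ s ∂(volume : Measure ℝ), s ∉ {s ∈ Icc (0:ℝ) t₁ | f s = 0} :=
      (measure_eq_zero_iff_ae_notMem).mp hfnull
    have h2 : ∀ᵐ s ∂(volume.restrict D), s ∉ {s ∈ Icc (0:ℝ) t₁ | f s = 0} :=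
      ae_restrict_of_ae h1
    have h3 : ∀ᵐ s ∂(volume.restrict D), s ∈ D := ae_restrict_mem measurableSet_Ioo
    filter_upwards [h2, h3] with s hs hsD
    have hmem : s ∈ Icc (0:ℝ) t₁ := hDsub hsD
    have : f s ≠ 0 := fun h => hs ⟨hmem, h⟩
    exact lt_of_le_of_ne (hfnn s hmem) (Ne.symm this)
  have hintfD : IntegrableOn (fun s => 1 / f s) D := by
    have := hintf.1
    exact this.mono_set (fun s hs => ⟨by linarith [hs.1, hηpos, hηle, ht₁], hs.2.le⟩)
  have hcomp : IntegrableOn (fun s => (C * (t₁ - s))⁻¹) D := by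
    apply Integrable.mono' hintfD
    · apply Measurable.aestronglyMeasurable
      exact ((measurable_const.sub measurable_id).const_mul C).inv
    · filter_upwards [haepos, ae_restrict_mem measurableSet_Ioo] with s hs hsD
      have h1 : f s ≤ C * (t₁ - s) := hbound s ⟨hsD.1.le, hsD.2.le⟩
      have h2 : 0 < t₁ - s := by linarith [hsD.2]
      rw [Real.norm_eq_abs, abs_of_nonneg (by positivity)]
      rw [one_div]
      exact inv_anti₀ hs h1
  have hcomp2 : IntegrableOn (fun s => (t₁ - s)⁻¹) D := by
    have h' : IntegrableOn (fun s => C * (C * (t₁ - s))⁻¹) D := hcomp.const_mul C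
    apply h'.congr_fun ?_ measurableSet_Ioo
    intro s hs
    have h2 : (0:ℝ) < t₁ - s := by linarith [hs.2]
    show C * (C * (t₁ - s))⁻¹ = (t₁ - s)⁻¹
    rw [mul_inv, ← mul_assoc, mul_inv_cancel₀ hCpos.ne', one_mul]
  have hII : IntervalIntegrable (fun s => (t₁ - s)⁻¹) volume (t₁ - η) t₁ := by
    rwa [intervalIntegrable_iff_integrableOn_Ioo_of_le (by linarith)]
  have hII2 := hII.comp_sub_left t₁
  simp only [sub_sub_cancel, sub_self] at hII2
  have hII3 : IntervalIntegrable (fun u => u⁻¹) volume 0 η := hII2.symm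
  have hIoo : IntegrableOn (fun u : ℝ => u⁻¹) (Ioo 0 η) := by
    rwa [intervalIntegrable_iff_integrableOn_Ioo_of_le hηpos.le] at hII3
  have : IntegrableOn (fun u : ℝ => u ^ (-1 : ℝ)) (Ioo 0 η) := by
    apply hIoo.congr_fun ?_ measurableSet_Ioo
    intro s hs
    exact (Real.rpow_neg_one s).symm
  have := (intervalIntegral.integrableOn_Ioo_rpow_iff hηpos).mp this
  linarith

lemma const_facts (α β γ δ c d : ℝ) (hα : 0 < α) (hδ : 0 < δ)
    (hH : max β γ ≥ 0 ∨ β * γ < α * δ)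
    (hc : c = Real.sqrt (2 * α + β / δ * (β - γ + Real.sqrt ((β - γ) ^ 2 + 4 * α * δ))))
    (hd : d = Real.sqrt (2 * δ + γ / α * (γ - β + Real.sqrt ((β - γ) ^ 2 + 4 * α * δ)))) :
    ∃ u : ℝ, 0 < u ∧ α * u ^ 2 + (β - γ) * u - δ = 0 ∧ 0 < c ∧ d / c = u := by
  set s := Real.sqrt ((β - γ) ^ 2 + 4 * α * δ) with hsdef
  have hΔpos : 0 < (β - γ) ^ 2 + 4 * α * δ := by positivity
  have hs2 : s ^ 2 = (β - γ) ^ 2 + 4 * α * δ := Real.sq_sqrt hΔpos.le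
  have hsnn : 0 ≤ s := Real.sqrt_nonneg _
  set u := (γ - β + s) / (2 * α) with hudef
  have hupos : 0 < u := by
    apply div_pos ?_ (by linarith)
    nlinarith [mul_pos hα hδ]
  have hroot : α * u ^ 2 + (β - γ) * u - δ = 0 := by
    rw [hudef]
    field_simp
    ring_nf
    nlinarith [hs2]
  have hsum : 0 < α * u + β := by
    have h1 : α * u + β = (β + γ + s) / 2 := by rw [hudef]; field_simp; ring
    rw [h1]
    rcases hH with h | h
    · rcases le_max_iff.mp h with hb | hg
      · rcases le_or_gt 0 γ with hg | hg
        · have : 0 < s := Real.sqrt_pos.mpr hΔpos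
          linarith
        · nlinarith [mul_pos hα hδ, mul_nonneg hb (neg_nonneg.mpr hg.le)]
      · rcases le_or_gt 0 β with hb | hb
        · have : 0 < s := Real.sqrt_pos.mpr hΔpos
          linarith
        · nlinarith [mul_pos hα hδ, mul_nonneg hg (neg_nonneg.mpr hb.le)]
    · nlinarith [hs2, hsnn]
  have hid1 : (β - γ + s) * u = 2 * δ := by
    rw [hudef]
    field_simp
    ring_nf
    linear_combination hs2
  have hid2 : γ - β + s = 2 * α * u := by rw [hudef]; field_simp
  set A := 2 * α + β / δ * (β - γ + s) with hA
  set B := 2 * δ + γ / α * (γ - β + s) with hB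
  have hAu : A * u = 2 * (α * u + β) := by
    have h2 : β / δ * (2 * δ) = 2 * β := by field_simp
    calc A * u = 2 * α * u + β / δ * ((β - γ + s) * u) := by ring
      _ = 2 * α * u + 2 * β := by rw [hid1, h2]
      _ = 2 * (α * u + β) := by ring
  have hApos : 0 < A := by
    by_contra h
    push_neg at h
    nlinarith [mul_nonneg (neg_nonneg.mpr h) hupos.le]
  have hB2 : B = 2 * δ + 2 * γ * u := by
    rw [hB, hid2]
    field_simp
  have hBA : B = A * u ^ 2 := by linear_combination hB2 - u * hAu - 2 * hroot
  have hcpos : 0 < c := by rw [hc]; exact Real.sqrt_pos.mpr hApos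
  have hdval : d = Real.sqrt A * u := by
    rw [hd, hBA, Real.sqrt_mul hApos.le, Real.sqrt_sq hupos.le]
  refine ⟨u, hupos, hroot, hcpos, ?_⟩
  rw [hdval, hc]
  field_simp

lemma psi_factor (a dd u v gb : ℝ) (hu : u ≠ 0) (hv : v ≠ 0)
    (hroot : a * u ^ 2 + (-gb) * u - dd = 0) :
    dd / v - a * v + gb = (u - v) * (dd / (v * u) + a) := by
  field_simp
  ring_nf
  linear_combination (-v) * hroot

end AuxLemmas


/-- The angle `θ(x, y) = arctan (y / x)` of a point of the punctured quadrant `S°`,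
with the convention `θ = π/2` when `x = 0`. -/
noncomputable def thetaFun (X Y : ℝ) : ℝ :=
  if X = 0 then Real.pi / 2 else Real.arctan (Y / X)

/-- Under (H), for a solution starting at `(x₀, y₀) ∈ S°`, with
`θ(t) = arctan (y(t) / x(t))` and `θ* = arctan (d / c)`, for all `t > 0`: if
`θ(0) < θ*` then `θ'(t) > 0` and `θ(t) < θ*`; if `θ(0) = θ*` then `θ'(t) = 0` and
`θ(t) = θ*`; if `θ(0) > θ*` then `θ'(t) < 0` and `θ(t) > θ*`. -/
theorem angular_behavior (α β γ δ : ℝ) (hα : 0 < α) (hδ : 0 < δ)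
    (hH : max β γ ≥ 0 ∨ β * γ < α * δ)
    (c d : ℝ)
    (hc : c = Real.sqrt (2 * α + β / δ * (β - γ + Real.sqrt ((β - γ) ^ 2 + 4 * α * δ))))
    (hd : d = Real.sqrt (2 * δ + γ / α * (γ - β + Real.sqrt ((β - γ) ^ 2 + 4 * α * δ))))
    (x₀ y₀ : ℝ) (hx₀ : 0 ≤ x₀) (hy₀ : 0 ≤ y₀) (hne : ¬(x₀ = 0 ∧ y₀ = 0))
    (x y : ℝ → ℝ) (hsol : IsSolution α β γ δ x₀ y₀ x y) :
    ∀ t > (0:ℝ),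
      (thetaFun x₀ y₀ < Real.arctan (d / c) →
        (∃ θ' > (0:ℝ), HasDerivAt (fun s => thetaFun (x s) (y s)) θ' t) ∧
        thetaFun (x t) (y t) < Real.arctan (d / c)) ∧
      (thetaFun x₀ y₀ = Real.arctan (d / c) →
        HasDerivAt (fun s => thetaFun (x s) (y s)) 0 t ∧
        thetaFun (x t) (y t) = Real.arctan (d / c)) ∧
      (thetaFun x₀ y₀ > Real.arctan (d / c) →
        (∃ θ' < (0:ℝ), HasDerivAt (fun s => thetaFun (x s) (y s)) θ' t) ∧
        thetaFun (x t) (y t) > Real.arctan (d / c)) := by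
  obtain ⟨hxc, hyc, hnn, hx0, hy0, hmain⟩ := hsol
  obtain ⟨u, hupos, hroot, hcpos, hdc⟩ := const_facts α β γ δ c d hα hδ hH hc hd
  -- a positive combination direction
  obtain ⟨b, hbpos, hb1, hb2⟩ : ∃ b : ℝ, 0 < b ∧ 0 < α + b * γ ∧ 0 < β + b * δ := by
    rcases le_or_gt 0 γ with hg | hg
    · refine ⟨(|β| + 1) / δ, by positivity, ?_, ?_⟩
      · have : 0 ≤ (|β| + 1) / δ * γ := mul_nonneg (by positivity) hg
        linarith
      · have : (|β| + 1) / δ * δ = |β| + 1 := div_mul_cancel₀ _ hδ.ne'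
        rw [this]
        have := neg_abs_le β
        linarith
    · rcases le_or_gt 0 β with hb | hb
      · have hγ0 : γ ≠ 0 := ne_of_lt hg
        have hγ' : (0:ℝ) < -γ := by linarith
        have hbp : 0 < α / (2 * (-γ)) := div_pos hα (by linarith)
        refine ⟨α / (2 * (-γ)), hbp, ?_, ?_⟩
        · have h1 : α / (2 * (-γ)) * γ = -(α / 2) := by
            rw [div_mul_eq_mul_div, div_eq_iff (by linarith : 2 * (-γ) ≠ 0)]
            ring
          rw [h1]; linarith
        · have : 0 < α / (2 * (-γ)) * δ := mul_pos hbp hδ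
          linarith
      · have hβγ : β * γ < α * δ := by
          rcases hH with h | h
          · exfalso
            rcases le_max_iff.mp h with h' | h' <;> linarith
          · exact h
        have hγ' : (0:ℝ) < -γ := by linarith
        have h1 : -β / δ < α / (-γ) := by
          rw [div_lt_div_iff₀ hδ hγ']
          nlinarith
        refine ⟨(α / (-γ) + -β / δ) / 2, ?_, ?_, ?_⟩
        · have h2 : 0 < -β / δ := div_pos (by linarith) hδ
          have h2' : 0 < α / (-γ) := div_pos hα hγ'
          linarith
        · have h3 : (α / (-γ) + -β / δ) / 2 < α / (-γ) := by linarith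
          have h4 : (α / (-γ) + -β / δ) / 2 * (-γ) < α / (-γ) * (-γ) :=
            mul_lt_mul_of_pos_right h3 hγ'
          have h5 : α / (-γ) * (-γ) = α := div_mul_cancel₀ _ hγ'.ne'
          nlinarith
        · have h3 : -β / δ < (α / (-γ) + -β / δ) / 2 := by linarith
          have h4 : -β / δ * δ < (α / (-γ) + -β / δ) / 2 * δ :=
            mul_lt_mul_of_pos_right h3 hδ
          have h5 : -β / δ * δ = -β := div_mul_cancel₀ _ hδ.ne'
          nlinarith
  set φ₀ := x₀ + b * y₀ with hφ₀def
  have hφ₀ : 0 < φ₀ := by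
    rcases hx₀.eq_or_lt with h | h
    · have hy : y₀ ≠ 0 := fun hy => hne ⟨h.symm, hy⟩
      have : 0 < y₀ := lt_of_le_of_ne hy₀ (Ne.symm hy)
      rw [hφ₀def, ← h]
      nlinarith
    · nlinarith [mul_nonneg hbpos.le hy₀]
  -- lower bound for x + b y
  have hφ : ∀ t ≥ (0:ℝ), φ₀ ≤ x t + b * y t := by
    intro t ht
    obtain ⟨_, _, hix, hiy, hex, hey⟩ := hmain t ht
    have hFnn : 0 ≤ ∫ s in (0:ℝ)..t, 1 / x s := by
      apply intervalIntegral.integral_nonneg ht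
      intro s hs
      have := (hnn s hs.1).1
      positivity
    have hGnn : 0 ≤ ∫ s in (0:ℝ)..t, 1 / y s := by
      apply intervalIntegral.integral_nonneg ht
      intro s hs
      have := (hnn s hs.1).2
      positivity
    have : x t + b * y t = φ₀ + (α + b * γ) * (∫ s in (0:ℝ)..t, 1 / x s)
        + (β + b * δ) * (∫ s in (0:ℝ)..t, 1 / y s) := by
      rw [hex, hey, hφ₀def]; ring
    nlinarith [mul_nonneg hb1.le hFnn, mul_nonneg hb2.le hGnn]
  -- positivity of x and y for t > 0
  have hxpos : ∀ t > (0:ℝ), 0 < x t := by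
    intro t ht
    rcases (hnn t ht.le).1.eq_or_lt with h | h
    · exfalso
      have hyt : 0 < y t := by
        have := hφ t ht.le
        nlinarith [(hnn t ht.le).2]
      obtain ⟨hnullx, hnully, hix, hiy, hex, hey⟩ := hmain t ht.le
      refine no_zero_aux (p := α) (q := β) hα.le ht
        (hyc.continuousAt (Ici_mem_nhds ht)) h.symm hyt
        (fun s hs => (hnn s hs.1).1) (fun s hs => (hnn s hs.1).2)
        hnullx hix hiy ?_
      intro r hr
      obtain ⟨_, _, hixr, hiyr, hexr, heyr⟩ := hmain r hr.1
      have hsub1 : (∫ s in (0:ℝ)..t, 1 / x s) - (∫ s in (0:ℝ)..r, 1 / x s)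
          = ∫ s in r..t, 1 / x s := intervalIntegral.integral_interval_sub_left hix hixr
      have hsub2 : (∫ s in (0:ℝ)..t, 1 / y s) - (∫ s in (0:ℝ)..r, 1 / y s)
          = ∫ s in r..t, 1 / y s := intervalIntegral.integral_interval_sub_left hiy hiyr
      rw [← hsub1, ← hsub2]
      have hxt : x t = 0 := h.symm
      rw [hexr]
      rw [hxt] at hex
      linarith [hex]
    · exact h
  have hypos : ∀ t > (0:ℝ), 0 < y t := by
    intro t ht
    rcases (hnn t ht.le).2.eq_or_lt with h | h
    · exfalso
      have hxt : 0 < x t := by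
        have := hφ t ht.le
        nlinarith [(hnn t ht.le).1]
      obtain ⟨hnullx, hnully, hix, hiy, hex, hey⟩ := hmain t ht.le
      refine no_zero_aux (p := δ) (q := γ) hδ.le ht
        (hxc.continuousAt (Ici_mem_nhds ht)) h.symm hxt
        (fun s hs => (hnn s hs.1).2) (fun s hs => (hnn s hs.1).1)
        hnully hiy hix ?_
      intro r hr
      obtain ⟨_, _, hixr, hiyr, hexr, heyr⟩ := hmain r hr.1
      have hsub1 : (∫ s in (0:ℝ)..t, 1 / y s) - (∫ s in (0:ℝ)..r, 1 / y s)
          = ∫ s in r..t, 1 / y s := intervalIntegral.integral_interval_sub_left hiy hiyr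
      have hsub2 : (∫ s in (0:ℝ)..t, 1 / x s) - (∫ s in (0:ℝ)..r, 1 / x s)
          = ∫ s in r..t, 1 / x s := intervalIntegral.integral_interval_sub_left hix hixr
      rw [← hsub1, ← hsub2]
      have hyt : y t = 0 := h.symm
      rw [heyr]
      rw [hyt] at hey
      linarith [hey]
    · exact h
  -- derivatives of x and y
  have hder : ∀ t > (0:ℝ), HasDerivAt x (α * (1 / x t) + β * (1 / y t)) t ∧
      HasDerivAt y (γ * (1 / x t) + δ * (1 / y t)) t := by
    intro t ht
    have hcx : ∀ s ∈ Ioi (0:ℝ), ContinuousAt (fun r => 1 / x r) s := by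
      intro s hs
      have hxs : ContinuousAt x s := hxc.continuousAt (Ici_mem_nhds hs)
      exact continuousAt_const.div hxs (hxpos s hs).ne'
    have hcy : ∀ s ∈ Ioi (0:ℝ), ContinuousAt (fun r => 1 / y r) s := by
      intro s hs
      have hys : ContinuousAt y s := hyc.continuousAt (Ici_mem_nhds hs)
      exact continuousAt_const.div hys (hypos s hs).ne'
    obtain ⟨_, _, hix, hiy, _, _⟩ := hmain t ht.le
    have hFd : HasDerivAt (fun r => ∫ s in (0:ℝ)..r, 1 / x s) (1 / x t) t :=
      intervalIntegral.integral_hasDerivAt_right hix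
        (ContinuousAt.stronglyMeasurableAtFilter isOpen_Ioi hcx t ht) (hcx t ht)
    have hGd : HasDerivAt (fun r => ∫ s in (0:ℝ)..r, 1 / y s) (1 / y t) t :=
      intervalIntegral.integral_hasDerivAt_right hiy
        (ContinuousAt.stronglyMeasurableAtFilter isOpen_Ioi hcy t ht) (hcy t ht)
    have hevx : (fun r => x₀ + (α * (∫ s in (0:ℝ)..r, 1 / x s)
        + β * (∫ s in (0:ℝ)..r, 1 / y s))) =ᶠ[nhds t] x := by
      filter_upwards [Ici_mem_nhds ht] with r hr
      rw [(hmain r hr).2.2.2.2.1]; ring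
    have hevy : (fun r => y₀ + (γ * (∫ s in (0:ℝ)..r, 1 / x s)
        + δ * (∫ s in (0:ℝ)..r, 1 / y s))) =ᶠ[nhds t] y := by
      filter_upwards [Ici_mem_nhds ht] with r hr
      rw [(hmain r hr).2.2.2.2.2]; ring
    constructor
    · exact (((hFd.const_mul α).add (hGd.const_mul β)).const_add x₀).congr_of_eventuallyEq
        hevx.symm
    · exact (((hFd.const_mul γ).add (hGd.const_mul δ)).const_add y₀).congr_of_eventuallyEq
        hevy.symm
  set θs := Real.arctan u with hθsdef
  have hθdc : Real.arctan (d / c) = θs := by rw [hdc]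
  have hrlb : ∀ s ≥ (0:ℝ), φ₀ ^ 2 / (1 + b ^ 2) ≤ x s ^ 2 + y s ^ 2 := by
    intro s hs
    have h := hφ s hs
    rw [div_le_iff₀ (by positivity)]
    nlinarith [sq_nonneg (b * x s - y s), (hnn s hs).1, (hnn s hs).2,
      mul_self_le_mul_self hφ₀.le h]
  set ρ := φ₀ ^ 2 / (1 + b ^ 2) with hρdef
  have hρpos : 0 < ρ := by positivity
  have hr2pos : ∀ s ≥ (0:ℝ), 0 < x s ^ 2 + y s ^ 2 :=
    fun s hs => lt_of_lt_of_le hρpos (hrlb s hs)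
  set T := fun s => thetaFun (x s) (y s) with hTdef
  have hTeq : ∀ s, x s ≠ 0 → T s = Real.arctan (y s / x s) := by
    intro s hx
    simp only [hTdef, thetaFun, if_neg hx]
  have hTcont : ContinuousOn T (Ici 0) := by
    have hAcont : ContinuousOn
        (fun s => Real.arccos (x s / Real.sqrt (x s ^ 2 + y s ^ 2))) (Ici 0) := by
      apply Real.continuous_arccos.comp_continuousOn
      apply ContinuousOn.div hxc
      · exact Real.continuous_sqrt.comp_continuousOn ((hxc.pow 2).add (hyc.pow 2))
      · intro s hs
        exact (Real.sqrt_pos.mpr (hr2pos s hs)).ne'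
    apply hAcont.congr
    intro s hs
    by_cases hxz : x s = 0
    · have hys : 0 < y s := by
        have h := hφ s hs
        rw [hxz] at h
        nlinarith [(hnn s hs).2]
      show T s = Real.arccos (x s / Real.sqrt (x s ^ 2 + y s ^ 2))
      simp only [hTdef, thetaFun, if_pos hxz, hxz, zero_div, Real.arccos_zero]
    · have hx : 0 < x s := lt_of_le_of_ne (hnn s hs).1 (Ne.symm hxz)
      have hy := (hnn s hs).2
      show T s = Real.arccos (x s / Real.sqrt (x s ^ 2 + y s ^ 2))
      rw [hTeq s hxz]
      have key : x s * Real.sqrt (1 + (y s / x s) ^ 2) = Real.sqrt (x s ^ 2 + y s ^ 2) := by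
        calc x s * Real.sqrt (1 + (y s / x s) ^ 2)
            = Real.sqrt (x s ^ 2) * Real.sqrt (1 + (y s / x s) ^ 2) := by
              rw [Real.sqrt_sq hx.le]
          _ = Real.sqrt (x s ^ 2 * (1 + (y s / x s) ^ 2)) :=
              (Real.sqrt_mul (sq_nonneg _) _).symm
          _ = Real.sqrt (x s ^ 2 + y s ^ 2) := by
              congr 1
              field_simp
      have hcos : x s / Real.sqrt (x s ^ 2 + y s ^ 2) = Real.cos (Real.arctan (y s / x s)) := by
        rw [Real.cos_arctan, ← key]
        have hS : 0 < Real.sqrt (1 + (y s / x s) ^ 2) := Real.sqrt_pos.mpr (by positivity)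
        field_simp
      have h0 : 0 ≤ Real.arctan (y s / x s) := by
        have h0' : Real.arctan 0 ≤ Real.arctan (y s / x s) :=
          Real.arctan_strictMono.monotone (by positivity)
        simpa [Real.arctan_zero] using h0'
      have hπ : Real.arctan (y s / x s) ≤ Real.pi := by
        have h1 := Real.arctan_lt_pi_div_two (y s / x s)
        have := Real.pi_pos
        linarith
      rw [hcos, Real.arccos_cos h0 hπ]
  -- factored angular drift
  set Ψ := fun t => (u - y t / x t) * (δ / (y t / x t * u) + α) with hΨdef
  have hψfac : ∀ t > (0:ℝ), δ / (y t / x t) - α * (y t / x t) + (γ - β) = Ψ t := by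
    intro t ht
    refine psi_factor α δ u (y t / x t) (γ - β) hupos.ne'
      (div_pos (hypos t ht) (hxpos t ht)).ne' ?_
    linear_combination hroot
  have hS2pos : ∀ t > (0:ℝ), 0 < δ / (y t / x t * u) + α := by
    intro t ht
    have hv := div_pos (hypos t ht) (hxpos t ht)
    have : 0 < δ / (y t / x t * u) := div_pos hδ (mul_pos hv hupos)
    linarith
  have hTd : ∀ t > (0:ℝ), HasDerivAt T (Ψ t / (x t ^ 2 + y t ^ 2)) t := by
    intro t ht
    have hxt := hxpos t ht
    have hyt := hypos t ht
    obtain ⟨hx', hy'⟩ := hder t ht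
    have hu' := hy'.div hx' hxt.ne'
    have harc := (Real.hasDerivAt_arctan (y t / x t)).comp t hu'
    have hev : T =ᶠ[nhds t] fun s => Real.arctan (y s / x s) := by
      have hcont : ContinuousAt x t := hxc.continuousAt (Ici_mem_nhds ht)
      filter_upwards [hcont.preimage_mem_nhds (Ioi_mem_nhds hxt)] with s hs
      exact hTeq s (ne_of_gt hs)
    have hD := harc.congr_of_eventuallyEq hev
    refine hD.congr_deriv ?_
    rw [← hψfac t ht]
    have h1 : x t ≠ 0 := hxt.ne'
    have h2 : y t ≠ 0 := hyt.ne'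
    have h3 : x t ^ 2 + y t ^ 2 ≠ 0 := (hr2pos t ht.le).ne'
    field_simp
    ring
  -- order translation
  have hTltIff : ∀ t > (0:ℝ), (T t < θs ↔ y t / x t < u) := by
    intro t ht
    rw [hTeq t (hxpos t ht).ne', hθsdef]
    exact Real.arctan_strictMono.lt_iff_lt
  have hTleIff : ∀ t > (0:ℝ), (T t ≤ θs ↔ y t / x t ≤ u) := by
    intro t ht
    rw [hTeq t (hxpos t ht).ne', hθsdef]
    exact Real.arctan_strictMono.le_iff_le
  have hTgtIff : ∀ t > (0:ℝ), (θs < T t ↔ u < y t / x t) := by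
    intro t ht
    rw [hTeq t (hxpos t ht).ne', hθsdef]
    exact Real.arctan_strictMono.lt_iff_lt
  -- L1 : stays below
  have L1 : T 0 ≤ θs → ∀ r ≥ (0:ℝ), T r ≤ θs := by
    intro h0 r hr
    by_contra hgt
    push_neg at hgt
    have hrpos : 0 < r := by
      rcases hr.eq_or_lt with h | h
      · exact absurd (h ▸ h0) (not_le.mpr hgt)
      · exact h
    set S := {s | s ∈ Icc (0:ℝ) r ∧ T s ≤ θs} with hSdef
    have hSne : S.Nonempty := ⟨0, ⟨le_refl 0, hrpos.le⟩, h0⟩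
    have hSbdd : BddAbove S := ⟨r, fun s hs => hs.1.2⟩
    have hScl : IsClosed S := by
      have hSeq : S = Icc 0 r ∩ T ⁻¹' (Iic θs) := by
        ext s; simp [hSdef]
      rw [hSeq]
      exact (hTcont.mono (Icc_subset_Ici_self)).preimage_isClosed_of_isClosed
        isClosed_Icc isClosed_Iic
    set t₀ := sSup S with ht₀def
    have ht₀S : t₀ ∈ S := hScl.csSup_mem hSne hSbdd
    have ht₀r : t₀ < r :=
      lt_of_le_of_ne ht₀S.1.2 (fun h => (not_le.mpr hgt) (h ▸ ht₀S.2))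
    have hmid : ∀ s, s ∈ Ioc t₀ r → θs < T s := by
      intro s hs
      by_contra hle
      push_neg at hle
      have hsS : s ∈ S := ⟨⟨le_trans ht₀S.1.1 hs.1.le, hs.2⟩, hle⟩
      exact absurd (le_csSup hSbdd hsS) (not_le.mpr hs.1)
    have hanti : StrictAntiOn T (Icc t₀ r) := by
      apply strictAntiOn_of_deriv_neg (convex_Icc _ _)
          (hTcont.mono (fun z hz => le_trans ht₀S.1.1 hz.1))
      intro s hs
      rw [interior_Icc] at hs
      have hs0 : 0 < s := lt_of_le_of_lt ht₀S.1.1 hs.1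
      rw [(hTd s hs0).deriv]
      apply div_neg_of_neg_of_pos ?_ (hr2pos s hs0.le)
      have hvgt : u < y s / x s := (hTgtIff s hs0).mp (hmid s ⟨hs.1, hs.2.le⟩)
      exact mul_neg_of_neg_of_pos (by linarith) (hS2pos s hs0)
    have := hanti ⟨le_refl t₀, ht₀r.le⟩ ⟨ht₀r.le, le_refl r⟩ ht₀r
    linarith [ht₀S.2]
  -- L2 : stays above
  have L2 : θs ≤ T 0 → ∀ r ≥ (0:ℝ), θs ≤ T r := by
    intro h0 r hr
    by_contra hlt
    push_neg at hlt
    have hrpos : 0 < r := by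
      rcases hr.eq_or_lt with h | h
      · exact absurd (h ▸ h0) (not_le.mpr hlt)
      · exact h
    set S := {s | s ∈ Icc (0:ℝ) r ∧ θs ≤ T s} with hSdef
    have hSne : S.Nonempty := ⟨0, ⟨le_refl 0, hrpos.le⟩, h0⟩
    have hSbdd : BddAbove S := ⟨r, fun s hs => hs.1.2⟩
    have hScl : IsClosed S := by
      have hSeq : S = Icc 0 r ∩ T ⁻¹' (Ici θs) := by
        ext s; simp [hSdef]
      rw [hSeq]
      exact (hTcont.mono (Icc_subset_Ici_self)).preimage_isClosed_of_isClosed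
        isClosed_Icc isClosed_Ici
    set t₀ := sSup S with ht₀def
    have ht₀S : t₀ ∈ S := hScl.csSup_mem hSne hSbdd
    have ht₀r : t₀ < r :=
      lt_of_le_of_ne ht₀S.1.2 (fun h => (not_le.mpr hlt) (h ▸ ht₀S.2))
    have hmid : ∀ s, s ∈ Ioc t₀ r → T s < θs := by
      intro s hs
      by_contra hle
      push_neg at hle
      have hsS : s ∈ S := ⟨⟨le_trans ht₀S.1.1 hs.1.le, hs.2⟩, hle⟩
      exact absurd (le_csSup hSbdd hsS) (not_le.mpr hs.1)
    have hmono : StrictMonoOn T (Icc t₀ r) := by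
      apply strictMonoOn_of_deriv_pos (convex_Icc _ _)
          (hTcont.mono (fun z hz => le_trans ht₀S.1.1 hz.1))
      intro s hs
      rw [interior_Icc] at hs
      have hs0 : 0 < s := lt_of_le_of_lt ht₀S.1.1 hs.1
      rw [(hTd s hs0).deriv]
      apply div_pos ?_ (hr2pos s hs0.le)
      have hvlt : y s / x s < u := (hTltIff s hs0).mp (hmid s ⟨hs.1, hs.2.le⟩)
      exact mul_pos (by linarith) (hS2pos s hs0)
    have := hmono ⟨le_refl t₀, ht₀r.le⟩ ⟨ht₀r.le, le_refl r⟩ ht₀r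
    linarith [ht₀S.2]
  -- L3 : strict below is preserved (Gronwall)
  have L3 : T 0 < θs → ∀ r > (0:ℝ), T r < θs := by
    intro h0 r hr
    have hle := L1 h0.le
    rcases lt_or_eq_of_le (hle r hr.le) with h | h
    · exact h
    exfalso
    set S := {s | s ∈ Icc (0:ℝ) r ∧ θs ≤ T s} with hSdef
    have hSne : S.Nonempty := ⟨r, ⟨hr.le, le_refl r⟩, h.ge⟩
    have hSbdd : BddBelow S := ⟨0, fun s hs => hs.1.1⟩
    have hScl : IsClosed S := by
      have hSeq : S = Icc 0 r ∩ T ⁻¹' (Ici θs) := by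
        ext s; simp [hSdef]
      rw [hSeq]
      exact (hTcont.mono (Icc_subset_Ici_self)).preimage_isClosed_of_isClosed
        isClosed_Icc isClosed_Ici
    set t₀ := sInf S with ht₀def
    have ht₀S : t₀ ∈ S := hScl.csInf_mem hSne hSbdd
    have hT₀ : T t₀ = θs := le_antisymm (hle t₀ ht₀S.1.1) ht₀S.2
    have ht₀pos : 0 < t₀ := by
      rcases ht₀S.1.1.eq_or_lt with hh | hh
      · exact absurd (hh ▸ hT₀) (ne_of_lt h0)
      · exact hh
    have hbefore : ∀ s ∈ Ico (0:ℝ) t₀, T s < θs := by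
      intro s hs
      by_contra hlee
      push_neg at hlee
      have hsS : s ∈ S := ⟨⟨hs.1, le_trans hs.2.le ht₀S.1.2⟩, hlee⟩
      exact absurd (csInf_le hSbdd hsS) (not_le.mpr hs.2)
    have hmono : MonotoneOn T (Icc 0 t₀) := by
      apply monotoneOn_of_deriv_nonneg (convex_Icc _ _)
          (hTcont.mono (fun z hz => hz.1))
      · intro s hs
        rw [interior_Icc] at hs
        exact (hTd s hs.1).differentiableAt.differentiableWithinAt
      · intro s hs
        rw [interior_Icc] at hs
        rw [(hTd s hs.1).deriv]
        apply div_nonneg ?_ (hr2pos s hs.1.le).le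
        have hvle : y s / x s ≤ u := (hTleIff s hs.1).mp
          (hle s hs.1.le)
        exact mul_nonneg (by linarith) (hS2pos s hs.1).le
    set t₂ := t₀ / 2 with ht₂def
    have ht₂pos : 0 < t₂ := by rw [ht₂def]; linarith
    have ht₂lt : t₂ < t₀ := by rw [ht₂def]; linarith
    set v₂ := y t₂ / x t₂ with hv₂def
    have hv₂pos : 0 < v₂ := div_pos (hypos t₂ ht₂pos) (hxpos t₂ ht₂pos)
    have hT₂lt : T t₂ < θs := hbefore t₂ ⟨ht₂pos.le, ht₂lt⟩
    have hvbounds : ∀ s ∈ Icc t₂ t₀, v₂ ≤ y s / x s ∧ y s / x s ≤ u := by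
      intro s hs
      have hs0 : 0 < s := lt_of_lt_of_le ht₂pos hs.1
      constructor
      · have hTm := hmono ⟨ht₂pos.le, ht₂lt.le⟩ ⟨hs0.le, hs.2⟩ hs.1
        rw [hTeq t₂ (hxpos t₂ ht₂pos).ne', hTeq s (hxpos s hs0).ne'] at hTm
        exact Real.arctan_strictMono.le_iff_le.mp hTm
      · exact (hTleIff s hs0).mp (hle s hs0.le)
    set M := (δ / (v₂ * u) + α) * (1 + u ^ 2) / ρ with hMdef
    have hL2pos : 0 < δ / (v₂ * u) + α := by
      have h1 : 0 < δ / (v₂ * u) := div_pos hδ (mul_pos hv₂pos hupos)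
      linarith
    have hMpos : 0 < M := by
      rw [hMdef]
      exact div_pos (mul_pos hL2pos (by positivity)) hρpos
    -- key differential inequality on (t₂, t₀)
    have hkey : ∀ s ∈ Icc t₂ t₀, Ψ s / (x s ^ 2 + y s ^ 2) ≤ M * (θs - T s) := by
      intro s hs
      have hs0 : 0 < s := lt_of_lt_of_le ht₂pos hs.1
      obtain ⟨hvl, hvu⟩ := hvbounds s hs
      have hΨnn : 0 ≤ Ψ s :=
        mul_nonneg (by linarith) (hS2pos s hs0).le
      have hstep1 : Ψ s / (x s ^ 2 + y s ^ 2) ≤ Ψ s / ρ :=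
        div_le_div_of_nonneg_left hΨnn hρpos (hrlb s hs0.le)
      have hstep2 : Ψ s ≤ (δ / (v₂ * u) + α) * (u - y s / x s) := by
        rw [hΨdef]
        have hfa : δ / (y s / x s * u) + α ≤ δ / (v₂ * u) + α := by
          have : δ / (y s / x s * u) ≤ δ / (v₂ * u) := by
            apply div_le_div_of_nonneg_left hδ.le (mul_pos hv₂pos hupos)
            exact mul_le_mul_of_nonneg_right hvl hupos.le
          linarith
        calc (u - y s / x s) * (δ / (y s / x s * u) + α)
            ≤ (u - y s / x s) * (δ / (v₂ * u) + α) :=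
              mul_le_mul_of_nonneg_left hfa (by linarith)
          _ = (δ / (v₂ * u) + α) * (u - y s / x s) := by ring
      have hstep3 : u - y s / x s ≤ (1 + u ^ 2) * (θs - T s) := by
        have hvnn : 0 ≤ y s / x s :=
          (div_pos (hypos s hs0) (hxpos s hs0)).le
        have := arctan_diff_lb u (y s / x s) u hvnn hvu (le_refl u)
        rw [hTeq s (hxpos s hs0).ne', hθsdef]
        linarith
      have hstep4 : Ψ s ≤ (δ / (v₂ * u) + α) * ((1 + u ^ 2) * (θs - T s)) := by
        calc Ψ s ≤ (δ / (v₂ * u) + α) * (u - y s / x s) := hstep2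
          _ ≤ (δ / (v₂ * u) + α) * ((1 + u ^ 2) * (θs - T s)) :=
              mul_le_mul_of_nonneg_left hstep3 hL2pos.le
      calc Ψ s / (x s ^ 2 + y s ^ 2) ≤ Ψ s / ρ := hstep1
        _ ≤ ((δ / (v₂ * u) + α) * ((1 + u ^ 2) * (θs - T s))) / ρ :=
            (div_le_div_iff_of_pos_right hρpos).mpr hstep4
        _ = M * (θs - T s) := by rw [hMdef]; ring
    -- Gronwall
    set E := fun s => (θs - T s) * Real.exp (M * s) with hEdef
    have hEd : ∀ s ∈ Ioo t₂ t₀, HasDerivAt E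
        ((-(Ψ s / (x s ^ 2 + y s ^ 2))) * Real.exp (M * s)
          + (θs - T s) * (Real.exp (M * s) * M)) s := by
      intro s hs
      have hs0 : 0 < s := lt_trans ht₂pos hs.1
      have h1 : HasDerivAt (fun r => θs - T r) (-(Ψ s / (x s ^ 2 + y s ^ 2))) s :=
        (hTd s hs0).const_sub θs
      have h2 : HasDerivAt (fun r => Real.exp (M * r)) (Real.exp (M * s) * M) s := by
        have := ((hasDerivAt_id s).const_mul M).exp
        simpa using this
      exact h1.mul h2
    have hEmono : MonotoneOn E (Icc t₂ t₀) := by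
      apply monotoneOn_of_deriv_nonneg (convex_Icc _ _)
      · apply ContinuousOn.mul
        · exact continuousOn_const.sub (hTcont.mono (fun z hz => le_trans ht₂pos.le hz.1))
        · exact (Real.continuous_exp.comp (continuous_const.mul continuous_id)).continuousOn
      · intro s hs
        rw [interior_Icc] at hs
        exact (hEd s hs).differentiableAt.differentiableWithinAt
      · intro s hs
        rw [interior_Icc] at hs
        rw [(hEd s hs).deriv]
        have hk := hkey s ⟨hs.1.le, hs.2.le⟩
        have hexp : 0 < Real.exp (M * s) := Real.exp_pos _
        nlinarith [mul_le_mul_of_nonneg_right hk hexp.le]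
    have hlast := hEmono ⟨le_refl t₂, ht₂lt.le⟩ ⟨ht₂lt.le, le_refl t₀⟩ ht₂lt.le
    rw [hEdef] at hlast
    simp only at hlast
    rw [hT₀] at hlast
    have hE₂ : 0 < (θs - T t₂) * Real.exp (M * t₂) :=
      mul_pos (by linarith) (Real.exp_pos _)
    nlinarith [hlast, hE₂]
  -- ge version of order translation
  have hTgeIff : ∀ t > (0:ℝ), (θs ≤ T t ↔ u ≤ y t / x t) := by
    intro t ht
    rw [hTeq t (hxpos t ht).ne', hθsdef]
    exact Real.arctan_strictMono.le_iff_le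
  -- L4 : strict above is preserved (Gronwall)
  have L4 : θs < T 0 → ∀ r > (0:ℝ), θs < T r := by
    intro h0 r hr
    have hge := L2 h0.le
    rcases lt_or_eq_of_le (hge r hr.le) with h | h
    · exact h
    exfalso
    set S := {s | s ∈ Icc (0:ℝ) r ∧ T s ≤ θs} with hSdef
    have hSne : S.Nonempty := ⟨r, ⟨hr.le, le_refl r⟩, h.ge⟩
    have hSbdd : BddBelow S := ⟨0, fun s hs => hs.1.1⟩
    have hScl : IsClosed S := by
      have hSeq : S = Icc 0 r ∩ T ⁻¹' (Iic θs) := by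
        ext s; simp [hSdef]
      rw [hSeq]
      exact (hTcont.mono (Icc_subset_Ici_self)).preimage_isClosed_of_isClosed
        isClosed_Icc isClosed_Iic
    set t₀ := sInf S with ht₀def
    have ht₀S : t₀ ∈ S := hScl.csInf_mem hSne hSbdd
    have hT₀ : T t₀ = θs := le_antisymm ht₀S.2 (hge t₀ ht₀S.1.1)
    have ht₀pos : 0 < t₀ := by
      rcases ht₀S.1.1.eq_or_lt with hh | hh
      · exact absurd (hh ▸ hT₀) (ne_of_gt h0)
      · exact hh
    have hbefore : ∀ s ∈ Ico (0:ℝ) t₀, θs < T s := by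
      intro s hs
      by_contra hlee
      push_neg at hlee
      have hsS : s ∈ S := ⟨⟨hs.1, le_trans hs.2.le ht₀S.1.2⟩, hlee⟩
      exact absurd (csInf_le hSbdd hsS) (not_le.mpr hs.2)
    have hanti : AntitoneOn T (Icc 0 t₀) := by
      apply antitoneOn_of_deriv_nonpos (convex_Icc _ _)
          (hTcont.mono (fun z hz => hz.1))
      · intro s hs
        rw [interior_Icc] at hs
        exact (hTd s hs.1).differentiableAt.differentiableWithinAt
      · intro s hs
        rw [interior_Icc] at hs
        rw [(hTd s hs.1).deriv]
        apply div_nonpos_of_nonpos_of_nonneg ?_ (hr2pos s hs.1.le).le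
        have hvge : u ≤ y s / x s := (hTgeIff s hs.1).mp (hge s hs.1.le)
        exact mul_nonpos_of_nonpos_of_nonneg (by linarith) (hS2pos s hs.1).le
    set t₂ := t₀ / 2 with ht₂def
    have ht₂pos : 0 < t₂ := by rw [ht₂def]; linarith
    have ht₂lt : t₂ < t₀ := by rw [ht₂def]; linarith
    set v₂ := y t₂ / x t₂ with hv₂def
    have hv₂pos : 0 < v₂ := div_pos (hypos t₂ ht₂pos) (hxpos t₂ ht₂pos)
    have hT₂gt : θs < T t₂ := hbefore t₂ ⟨ht₂pos.le, ht₂lt⟩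
    have hvbounds : ∀ s ∈ Icc t₂ t₀, u ≤ y s / x s ∧ y s / x s ≤ v₂ := by
      intro s hs
      have hs0 : 0 < s := lt_of_lt_of_le ht₂pos hs.1
      constructor
      · exact (hTgeIff s hs0).mp (hge s hs0.le)
      · have hTm := hanti ⟨ht₂pos.le, ht₂lt.le⟩ ⟨hs0.le, hs.2⟩ hs.1
        rw [hTeq t₂ (hxpos t₂ ht₂pos).ne', hTeq s (hxpos s hs0).ne'] at hTm
        exact Real.arctan_strictMono.le_iff_le.mp hTm
    set M := (δ / (u * u) + α) * (1 + v₂ ^ 2) / ρ with hMdef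
    have hL2pos : 0 < δ / (u * u) + α := by
      have h1 : 0 < δ / (u * u) := div_pos hδ (mul_pos hupos hupos)
      linarith
    have hMpos : 0 < M := by
      rw [hMdef]
      exact div_pos (mul_pos hL2pos (by positivity)) hρpos
    have hkey : ∀ s ∈ Icc t₂ t₀, -(Ψ s / (x s ^ 2 + y s ^ 2)) ≤ M * (T s - θs) := by
      intro s hs
      have hs0 : 0 < s := lt_of_lt_of_le ht₂pos hs.1
      obtain ⟨hvl, hvu⟩ := hvbounds s hs
      have hΨnp : -Ψ s = (y s / x s - u) * (δ / (y s / x s * u) + α) := by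
        rw [hΨdef]; ring
      have hΨnn : 0 ≤ -Ψ s := by
        rw [hΨnp]
        exact mul_nonneg (by linarith) (hS2pos s hs0).le
      have hstep1 : -Ψ s / (x s ^ 2 + y s ^ 2) ≤ -Ψ s / ρ :=
        div_le_div_of_nonneg_left hΨnn hρpos (hrlb s hs0.le)
      have hstep2 : -Ψ s ≤ (δ / (u * u) + α) * (y s / x s - u) := by
        rw [hΨnp]
        have hfa : δ / (y s / x s * u) + α ≤ δ / (u * u) + α := by
          have : δ / (y s / x s * u) ≤ δ / (u * u) := by
            apply div_le_div_of_nonneg_left hδ.le (mul_pos hupos hupos)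
            exact mul_le_mul_of_nonneg_right hvl hupos.le
          linarith
        calc (y s / x s - u) * (δ / (y s / x s * u) + α)
            ≤ (y s / x s - u) * (δ / (u * u) + α) :=
              mul_le_mul_of_nonneg_left hfa (by linarith)
          _ = (δ / (u * u) + α) * (y s / x s - u) := by ring
      have hstep3 : y s / x s - u ≤ (1 + v₂ ^ 2) * (T s - θs) := by
        have := arctan_diff_lb v₂ u (y s / x s) hupos.le hvl hvu
        rw [hTeq s (hxpos s hs0).ne', hθsdef]
        linarith
      have hstep4 : -Ψ s ≤ (δ / (u * u) + α) * ((1 + v₂ ^ 2) * (T s - θs)) := by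
        calc -Ψ s ≤ (δ / (u * u) + α) * (y s / x s - u) := hstep2
          _ ≤ (δ / (u * u) + α) * ((1 + v₂ ^ 2) * (T s - θs)) :=
              mul_le_mul_of_nonneg_left hstep3 hL2pos.le
      calc -(Ψ s / (x s ^ 2 + y s ^ 2)) = -Ψ s / (x s ^ 2 + y s ^ 2) := by ring
        _ ≤ -Ψ s / ρ := hstep1
        _ ≤ ((δ / (u * u) + α) * ((1 + v₂ ^ 2) * (T s - θs))) / ρ :=
            (div_le_div_iff_of_pos_right hρpos).mpr hstep4
        _ = M * (T s - θs) := by rw [hMdef]; ring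
    set E := fun s => (T s - θs) * Real.exp (M * s) with hEdef
    have hEd : ∀ s ∈ Ioo t₂ t₀, HasDerivAt E
        ((Ψ s / (x s ^ 2 + y s ^ 2)) * Real.exp (M * s)
          + (T s - θs) * (Real.exp (M * s) * M)) s := by
      intro s hs
      have hs0 : 0 < s := lt_trans ht₂pos hs.1
      have h1 : HasDerivAt (fun r => T r - θs) (Ψ s / (x s ^ 2 + y s ^ 2)) s :=
        (hTd s hs0).sub_const θs
      have h2 : HasDerivAt (fun r => Real.exp (M * r)) (Real.exp (M * s) * M) s := by
        have := ((hasDerivAt_id s).const_mul M).exp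
        simpa using this
      exact h1.mul h2
    have hEmono : MonotoneOn E (Icc t₂ t₀) := by
      apply monotoneOn_of_deriv_nonneg (convex_Icc _ _)
      · apply ContinuousOn.mul
        · exact (hTcont.mono (fun z hz => le_trans ht₂pos.le hz.1)).sub continuousOn_const
        · exact (Real.continuous_exp.comp (continuous_const.mul continuous_id)).continuousOn
      · intro s hs
        rw [interior_Icc] at hs
        exact (hEd s hs).differentiableAt.differentiableWithinAt
      · intro s hs
        rw [interior_Icc] at hs
        rw [(hEd s hs).deriv]
        have hk := hkey s ⟨hs.1.le, hs.2.le⟩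
        have hexp : 0 < Real.exp (M * s) := Real.exp_pos _
        nlinarith [mul_le_mul_of_nonneg_right hk hexp.le]
    have hlast := hEmono ⟨le_refl t₂, ht₂lt.le⟩ ⟨ht₂lt.le, le_refl t₀⟩ ht₂lt.le
    rw [hEdef] at hlast
    simp only at hlast
    rw [hT₀] at hlast
    have hE₂ : 0 < (T t₂ - θs) * Real.exp (M * t₂) :=
      mul_pos (by linarith) (Real.exp_pos _)
    nlinarith [hlast, hE₂]
  -- assembly
  intro t ht
  have hT0 : thetaFun x₀ y₀ = T 0 := by
    rw [hTdef]
    simp only [hx0, hy0]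
  have hTt : thetaFun (x t) (y t) = T t := rfl
  rw [hθdc, hT0, hTt]
  refine ⟨?_, ?_, ?_⟩
  · intro hlt
    have hTr : T t < θs := L3 hlt t ht
    have hvlt : y t / x t < u := (hTltIff t ht).mp hTr
    have hpos : 0 < Ψ t / (x t ^ 2 + y t ^ 2) :=
      div_pos (mul_pos (by linarith) (hS2pos t ht)) (hr2pos t ht.le)
    exact ⟨⟨_, hpos, hTd t ht⟩, hTr⟩
  · intro heq0
    have h1 : T t ≤ θs := L1 heq0.le t ht.le
    have h2 : θs ≤ T t := L2 heq0.ge t ht.le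
    have hTt' : T t = θs := le_antisymm h1 h2
    have hveq : y t / x t = u := by
      have := hTt'
      rw [hTeq t (hxpos t ht).ne', hθsdef] at this
      exact Real.arctan_injective this
    have hΨ0 : Ψ t = 0 := by
      rw [hΨdef]
      simp only [hveq, sub_self, zero_mul]
    have hD := hTd t ht
    rw [hΨ0, zero_div] at hD
    exact ⟨hD, hTt'⟩
  · intro hgt
    have hTr : θs < T t := L4 hgt t ht
    have hvgt : u < y t / x t := (hTgtIff t ht).mp hTr
    have hneg : Ψ t / (x t ^ 2 + y t ^ 2) < 0 :=
      div_neg_of_neg_of_pos (mul_neg_of_neg_of_pos (by linarith) (hS2pos t ht))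
        (hr2pos t ht.le)
    exact ⟨⟨_, hneg, hTd t ht⟩, hTr⟩
end

section
/- Assume hypothesis (H) and fix λ > 0, μ > 0 with λα + μγ > 0 and λβ + μδ > 0. Let (x(·), y(·)) be a solution to the system starting at (x₀,y₀) ∈ S°. Then for all t > 0: x(t) ≥ min( x₀ , c(λx₀ + μy₀)/(λc + μd) ) and y(t) ≥ min( y₀ , d(λx₀ + μy₀)/(λc + μd) ). -/
open MeasureTheory

set_option maxHeartbeats 1000000

/-- Core lemma: lower bound for the first coordinate, under the clean hypotheses
`c > 0`, `d > 0`, `α d + β c ≥ 0`. -/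
lemma aux_lb (α β γ δ lam mu c d x₀ y₀ : ℝ) (hα : 0 < α)
    (hlam : 0 < lam) (hmu : 0 < mu) (hcpos : 0 < c) (hdpos : 0 < d)
    (hcd : 0 ≤ α * d + β * c)
    (ha : 0 < lam * α + mu * γ) (hb : 0 < lam * β + mu * δ)
    (hx₀ : 0 ≤ x₀) (hy₀ : 0 ≤ y₀) (hz₀ : 0 < lam * x₀ + mu * y₀)
    (x y : ℝ → ℝ) (hsol : IsSolution α β γ δ x₀ y₀ x y) :
    ∀ t > (0:ℝ), min x₀ (c * (lam * x₀ + mu * y₀) / (lam * c + mu * d)) ≤ x t := by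
  obtain ⟨hxc, hyc, hnn, hx0, hy0, hmain⟩ := hsol
  intro t ht
  set z₀ := lam * x₀ + mu * y₀ with hz₀def
  have hL : 0 < lam * c + mu * d := by positivity
  set m := c * z₀ / (lam * c + mu * d) with hmdef
  have hmpos : 0 < m := by positivity
  rcases le_or_gt x₀ 0 with hx0le | hx0pos
  · have hx00 : x₀ = 0 := le_antisymm hx0le hx₀
    calc min x₀ m ≤ x₀ := min_le_left _ _
    _ = 0 := hx00
    _ ≤ x t := (hnn t ht.le).1
  set M := min x₀ m with hMdef
  have hMpos : 0 < M := lt_min hx0pos hmpos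
  by_contra hcon
  push_neg at hcon
  -- nonnegativity of the two running integrals
  have hF : ∀ s, 0 ≤ s → 0 ≤ ∫ u in (0:ℝ)..s, 1 / x u := fun s hs =>
    intervalIntegral.integral_nonneg hs (fun u hu => by
      have := (hnn u hu.1).1; positivity)
  have hG : ∀ s, 0 ≤ s → 0 ≤ ∫ u in (0:ℝ)..s, 1 / y u := fun s hs =>
    intervalIntegral.integral_nonneg hs (fun u hu => by
      have := (hnn u hu.1).2; positivity)
  -- the linear combination z = lam x + mu y never goes below z₀
  have hz : ∀ s, 0 ≤ s → z₀ ≤ lam * x s + mu * y s := by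
    intro s hs
    obtain ⟨_, _, _, _, hex, hey⟩ := hmain s hs
    have hFs := hF s hs
    have hGs := hG s hs
    rw [hex, hey]
    nlinarith [mul_nonneg ha.le hFs, mul_nonneg hb.le hGs]
  -- y is bounded below when x is small
  have hylb : ∀ s, 0 ≤ s → x s < m → d * z₀ / (lam * c + mu * d) < y s := by
    intro s hs hxs
    have hzs := hz s hs
    rw [hmdef, lt_div_iff₀ hL] at hxs
    rw [div_lt_iff₀ hL]
    nlinarith [mul_lt_mul_of_pos_left hxs hlam]
  -- the last time x is at least M
  have hxcIcc : ContinuousOn x (Set.Icc 0 t) :=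
    hxc.mono (Set.Icc_subset_Ici_self)
  set S : Set ℝ := Set.Icc (0:ℝ) t ∩ x ⁻¹' (Set.Ici M) with hSdef
  have hSne : S.Nonempty := ⟨0, ⟨le_refl 0, ht.le⟩, by
    simp only [Set.mem_preimage, Set.mem_Ici, hx0]; exact min_le_left _ _⟩
  have hSclosed : IsClosed S :=
    hxcIcc.preimage_isClosed_of_isClosed isClosed_Icc isClosed_Ici
  have hScomp : IsCompact S :=
    isCompact_Icc.of_isClosed_subset hSclosed Set.inter_subset_left
  set τ := sSup S with hτdef
  have hτS : τ ∈ S := hScomp.sSup_mem hSne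
  have hτ0 : 0 ≤ τ := hτS.1.1
  have hτt : τ ≤ t := hτS.1.2
  have hxτ : M ≤ x τ := hτS.2
  have hτlt : τ < t := by
    rcases lt_or_eq_of_le hτt with h | h
    · exact h
    · exact absurd hxτ (by rw [h]; exact not_le.2 hcon)
  have hsmall : ∀ s, τ < s → s ≤ t → x s < M := by
    intro s hs1 hs2
    by_contra hle
    push_neg at hle
    have hsS : s ∈ S := ⟨⟨hτ0.trans hs1.le, hs2⟩, hle⟩
    exact absurd (le_csSup hScomp.bddAbove hsS) (not_le.2 hs1)
  -- integrability pieces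
  obtain ⟨hNx, hNy, hIx, hIy, hExt, hEyt⟩ := hmain t ht.le
  obtain ⟨_, _, hIxτ0, hIyτ0, hExτ, hEyτ⟩ := hmain τ hτ0
  have hsub : Set.uIcc τ t ⊆ Set.uIcc (0:ℝ) t := by
    rw [Set.uIcc_of_le hτt, Set.uIcc_of_le ht.le]
    exact Set.Icc_subset_Icc hτ0 le_rfl
  have hIx2 : IntervalIntegrable (fun s => 1 / x s) volume τ t := hIx.mono_set hsub
  have hIy2 : IntervalIntegrable (fun s => 1 / y s) volume τ t := hIy.mono_set hsub
  have hsub0 : Set.uIcc (0:ℝ) τ ⊆ Set.uIcc (0:ℝ) t := by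
    rw [Set.uIcc_of_le hτ0, Set.uIcc_of_le ht.le]
    exact Set.Icc_subset_Icc le_rfl hτt
  have hIx1 : IntervalIntegrable (fun s => 1 / x s) volume 0 τ := hIx.mono_set hsub0
  have hIy1 : IntervalIntegrable (fun s => 1 / y s) volume 0 τ := hIy.mono_set hsub0
  have hadd_x : (∫ s in (0:ℝ)..τ, 1 / x s) + (∫ s in τ..t, 1 / x s)
      = ∫ s in (0:ℝ)..t, 1 / x s :=
    intervalIntegral.integral_add_adjacent_intervals hIx1 hIx2
  have hadd_y : (∫ s in (0:ℝ)..τ, 1 / y s) + (∫ s in τ..t, 1 / y s)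
      = ∫ s in (0:ℝ)..t, 1 / y s :=
    intervalIntegral.integral_add_adjacent_intervals hIy1 hIy2
  -- the key integral is nonnegative
  have hkey : 0 ≤ ∫ s in τ..t, (α * (1 / x s) + β * (1 / y s)) := by
    apply intervalIntegral.integral_nonneg_of_ae_restrict hτt
    have hnull : volume {s | s ∈ Set.Icc τ t ∧ x s = 0} = 0 := by
      apply measure_mono_null _ hNx
      intro s hs
      exact ⟨⟨hτ0.trans hs.1.1, hs.1.2⟩, hs.2⟩
    have h1 : ∀ᵐ s ∂(volume : Measure ℝ), s ∈ Set.Icc τ t → x s ≠ 0 := by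
      rw [ae_iff]
      apply measure_mono_null _ hnull
      intro s hs
      simp only [Set.mem_setOf_eq, not_forall, not_not] at hs ⊢
      tauto
    have h2 : ∀ᵐ s ∂(volume : Measure ℝ), s ≠ τ := by
      rw [ae_iff]
      have : {s : ℝ | ¬s ≠ τ} = {τ} := by ext s; simp
      rw [this]
      exact measure_singleton τ
    rw [Filter.EventuallyLE, ae_restrict_iff' measurableSet_Icc]
    filter_upwards [h1, h2] with s hxs hsτ hmem
    simp only [Pi.zero_apply]
    have hsτ' : τ < s := lt_of_le_of_ne hmem.1 (Ne.symm hsτ)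
    have hs0 : 0 ≤ s := hτ0.trans hmem.1
    have hxspos : 0 < x s := lt_of_le_of_ne (hnn s hs0).1 (Ne.symm (hxs hmem))
    have hxsM : x s < M := hsmall s hsτ' hmem.2
    have hxsm : x s < m := hxsM.trans_le (min_le_right _ _)
    have hys : d * z₀ / (lam * c + mu * d) < y s := hylb s hs0 hxsm
    have hyspos : 0 < y s := lt_trans (by positivity) hys
    have hnum : 0 < α * y s + β * x s := by
      rcases le_or_gt 0 β with hβ | hβ
      · have := add_pos_of_pos_of_nonneg (mul_pos hα hyspos) (mul_nonneg hβ (hnn s hs0).1)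
        linarith only [this]
      · have hys' : d * z₀ < y s * (lam * c + mu * d) := (div_lt_iff₀ hL).1 hys
        have hxs' : x s * (lam * c + mu * d) < c * z₀ := by
          rw [← lt_div_iff₀ hL]; exact hxsm
        have t1 : α * (d * z₀) < α * (y s * (lam * c + mu * d)) :=
          mul_lt_mul_of_pos_left hys' hα
        have t2 : β * (c * z₀) < β * (x s * (lam * c + mu * d)) :=
          mul_lt_mul_of_neg_left hxs' hβ
        have t3 : 0 ≤ (α * d + β * c) * z₀ := mul_nonneg hcd hz₀.le
        have t4 : 0 < (α * y s + β * x s) * (lam * c + mu * d) := by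
          have expand : (α * y s + β * x s) * (lam * c + mu * d)
              = α * (y s * (lam * c + mu * d)) + β * (x s * (lam * c + mu * d)) := by ring
          have expand2 : (α * d + β * c) * z₀ = α * (d * z₀) + β * (c * z₀) := by ring
          rw [expand]
          rw [expand2] at t3
          linarith only [t1, t2, t3]
        exact lt_of_mul_lt_mul_right
          (by linarith only [t4] : 0 * (lam * c + mu * d) < (α * y s + β * x s) * (lam * c + mu * d)) hL.le
    have heq : α * (1 / x s) + β * (1 / y s) = (α * y s + β * x s) / (x s * y s) := by
      field_simp [hxspos.ne', hyspos.ne']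
    rw [heq]
    positivity
  -- conclude
  have hintadd : α * (∫ s in τ..t, 1 / x s) + β * (∫ s in τ..t, 1 / y s)
      = ∫ s in τ..t, (α * (1 / x s) + β * (1 / y s)) := by
    rw [intervalIntegral.integral_add (hIx2.const_mul α) (hIy2.const_mul β),
      intervalIntegral.integral_const_mul, intervalIntegral.integral_const_mul]
  have hxt : x t = x τ + (α * (∫ s in τ..t, 1 / x s) + β * (∫ s in τ..t, 1 / y s)) := by
    rw [hExt, hExτ, ← hadd_x, ← hadd_y]; ring
  rw [hintadd] at hxt
  have : M ≤ x t := by linarith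
  exact absurd this (not_le.2 hcon)

/-- Algebraic facts about the constants `c` and `d`. -/
lemma cd_facts (α β γ δ : ℝ) (hα : 0 < α) (hδ : 0 < δ)
    (hH : max β γ ≥ 0 ∨ β * γ < α * δ)
    (c d : ℝ)
    (hc : c = Real.sqrt (2 * α + β / δ * (β - γ + Real.sqrt ((β - γ) ^ 2 + 4 * α * δ))))
    (hd : d = Real.sqrt (2 * δ + γ / α * (γ - β + Real.sqrt ((β - γ) ^ 2 + 4 * α * δ)))) :
    0 < c ∧ 0 < d ∧ 0 ≤ α * d + β * c ∧ 0 ≤ δ * c + γ * d := by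
  set θ := Real.sqrt ((β - γ) ^ 2 + 4 * α * δ) with hθdef
  have hθ2 : θ ^ 2 = (β - γ) ^ 2 + 4 * α * δ := Real.sq_sqrt (by positivity)
  have hθpos : 0 < θ := Real.sqrt_pos.2 (by positivity)
  have habs : |β - γ| < θ := by
    rw [hθdef, ← Real.sqrt_sq_eq_abs]
    exact Real.sqrt_lt_sqrt (sq_nonneg _) (by nlinarith)
  obtain ⟨habs1, habs2⟩ := abs_lt.1 habs
  have he : 0 < γ - β + θ := by linarith
  have hf : 0 < β - γ + θ := by linarith
  have hef : (γ - β + θ) * (β - γ + θ) = 4 * α * δ := by nlinarith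
  have hg : 0 < β + γ + θ := by
    by_contra hcon
    push_neg at hcon
    have h1 : β + γ ≤ -θ := by linarith
    have h2 : α * δ ≤ β * γ := by nlinarith
    rcases hH with h | h
    · have hprod : 0 < β * γ := lt_of_lt_of_le (mul_pos hα hδ) h2
      have hβneg : β < 0 := by nlinarith
      have hγneg : γ < 0 := by nlinarith
      rcases le_max_iff.1 h with h' | h' <;> linarith
    · linarith
  have hcarg : 2 * α + β / δ * (β - γ + θ)
      = (β - γ + θ) * (β + γ + θ) / (2 * δ) := by
    rw [eq_div_iff (by positivity : (2*δ:ℝ) ≠ 0)]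
    field_simp
    linear_combination (-1 : ℝ) * hθ2
  have hdarg : 2 * δ + γ / α * (γ - β + θ)
      = (γ - β + θ) * (β + γ + θ) / (2 * α) := by
    rw [eq_div_iff (by positivity : (2*α:ℝ) ≠ 0)]
    field_simp
    linear_combination (-1 : ℝ) * hθ2
  have hcargpos : 0 < 2 * α + β / δ * (β - γ + θ) := by
    rw [hcarg]; positivity
  have hdargpos : 0 < 2 * δ + γ / α * (γ - β + θ) := by
    rw [hdarg]; positivity
  have hcpos : 0 < c := hc ▸ Real.sqrt_pos.2 hcargpos
  have hdpos : 0 < d := hd ▸ Real.sqrt_pos.2 hdargpos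
  have hc2' : 2 * δ * c ^ 2 = (β - γ + θ) * (β + γ + θ) := by
    rw [hc, Real.sq_sqrt hcargpos.le, hcarg]
    field_simp
  have hd2' : 2 * α * d ^ 2 = (γ - β + θ) * (β + γ + θ) := by
    rw [hd, Real.sq_sqrt hdargpos.le, hdarg]
    field_simp
  refine ⟨hcpos, hdpos, ?_, ?_⟩
  · rcases le_or_gt 0 β with hβ | hβ
    · exact add_nonneg (mul_pos hα hdpos).le (mul_nonneg hβ hcpos.le)
    · have hesq : 4 * β ^ 2 < (γ - β + θ) ^ 2 := by nlinarith
      have hstep : 4 * β ^ 2 * ((β - γ + θ) * (β + γ + θ))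
          ≤ (γ - β + θ) ^ 2 * ((β - γ + θ) * (β + γ + θ)) :=
        mul_le_mul_of_nonneg_right hesq.le (by positivity)
      have e2fg : (γ - β + θ) ^ 2 * ((β - γ + θ) * (β + γ + θ))
          = (2 * α * d ^ 2) * (4 * α * δ) := by
        calc (γ - β + θ) ^ 2 * ((β - γ + θ) * (β + γ + θ))
            = ((γ - β + θ) * (β + γ + θ)) * ((γ - β + θ) * (β - γ + θ)) := by ring
          _ = (2 * α * d ^ 2) * (4 * α * δ) := by rw [hd2', hef]
      have b2fg : 4 * β ^ 2 * ((β - γ + θ) * (β + γ + θ))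
          = 4 * β ^ 2 * (2 * δ * c ^ 2) := by rw [hc2']
      have hkey : β ^ 2 * c ^ 2 ≤ α ^ 2 * d ^ 2 := by
        nlinarith [hstep, e2fg, b2fg, hδ]
      have hlin : 0 < α * d - β * c := by
        nlinarith [mul_pos hα hdpos, mul_pos (neg_pos.2 hβ) hcpos]
      nlinarith [hkey, hlin]
  · rcases le_or_gt 0 γ with hγ | hγ
    · exact add_nonneg (mul_pos hδ hcpos).le (mul_nonneg hγ hdpos.le)
    · have hfsq : 4 * γ ^ 2 < (β - γ + θ) ^ 2 := by nlinarith
      have hstep : 4 * γ ^ 2 * ((γ - β + θ) * (β + γ + θ))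
          ≤ (β - γ + θ) ^ 2 * ((γ - β + θ) * (β + γ + θ)) :=
        mul_le_mul_of_nonneg_right hfsq.le (by positivity)
      have f2eg : (β - γ + θ) ^ 2 * ((γ - β + θ) * (β + γ + θ))
          = (2 * δ * c ^ 2) * (4 * α * δ) := by
        calc (β - γ + θ) ^ 2 * ((γ - β + θ) * (β + γ + θ))
            = ((β - γ + θ) * (β + γ + θ)) * ((γ - β + θ) * (β - γ + θ)) := by ring
          _ = (2 * δ * c ^ 2) * (4 * α * δ) := by rw [hc2', hef]
      have g2eg : 4 * γ ^ 2 * ((γ - β + θ) * (β + γ + θ))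
          = 4 * γ ^ 2 * (2 * α * d ^ 2) := by rw [hd2']
      have hkey : γ ^ 2 * d ^ 2 ≤ δ ^ 2 * c ^ 2 := by
        nlinarith [hstep, f2eg, g2eg, hα]
      have hlin : 0 < δ * c - γ * d := by
        nlinarith [mul_pos hδ hcpos, mul_pos (neg_pos.2 hγ) hdpos]
      nlinarith [hkey, hlin]

/-- Under (H), with `λ, μ > 0` such that `λα + μγ > 0` and `λβ + μδ > 0`,
any solution starting at `(x₀, y₀) ∈ S°` satisfies for all `t > 0`:
`x(t) ≥ min (x₀, c (λx₀ + μy₀) / (λc + μd))` and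
`y(t) ≥ min (y₀, d (λx₀ + μy₀) / (λc + μd))`. -/
theorem lower_bounds (α β γ δ : ℝ) (hα : 0 < α) (hδ : 0 < δ)
    (hH : max β γ ≥ 0 ∨ β * γ < α * δ)
    (lam mu : ℝ) (hlam : 0 < lam) (hmu : 0 < mu)
    (h1 : 0 < lam * α + mu * γ) (h2 : 0 < lam * β + mu * δ)
    (c d : ℝ)
    (hc : c = Real.sqrt (2 * α + β / δ * (β - γ + Real.sqrt ((β - γ) ^ 2 + 4 * α * δ))))
    (hd : d = Real.sqrt (2 * δ + γ / α * (γ - β + Real.sqrt ((β - γ) ^ 2 + 4 * α * δ))))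
    (x₀ y₀ : ℝ) (hx₀ : 0 ≤ x₀) (hy₀ : 0 ≤ y₀) (hne : ¬(x₀ = 0 ∧ y₀ = 0))
    (x y : ℝ → ℝ) (hsol : IsSolution α β γ δ x₀ y₀ x y) :
    ∀ t > (0:ℝ),
      min x₀ (c * (lam * x₀ + mu * y₀) / (lam * c + mu * d)) ≤ x t ∧
      min y₀ (d * (lam * x₀ + mu * y₀) / (lam * c + mu * d)) ≤ y t := by
  obtain ⟨hcpos, hdpos, hcd1, hcd2⟩ := cd_facts α β γ δ hα hδ hH c d hc hd
  have hz₀ : 0 < lam * x₀ + mu * y₀ := by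
    rcases lt_or_eq_of_le hx₀ with h | h
    · nlinarith
    · rcases lt_or_eq_of_le hy₀ with h' | h'
      · nlinarith
      · exact absurd ⟨h.symm, h'.symm⟩ hne
  have hsol' : IsSolution δ γ β α y₀ x₀ y x := by
    obtain ⟨hxc, hyc, hnn, hx0, hy0, hmain⟩ := hsol
    refine ⟨hyc, hxc, fun t ht => ⟨(hnn t ht).2, (hnn t ht).1⟩, hy0, hx0, fun t ht => ?_⟩
    obtain ⟨hNx, hNy, hIx, hIy, hEx, hEy⟩ := hmain t ht
    exact ⟨hNy, hNx, hIy, hIx, by rw [hEy]; ring, by rw [hEx]; ring⟩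
  intro t ht
  constructor
  · exact aux_lb α β γ δ lam mu c d x₀ y₀ hα hlam hmu hcpos hdpos hcd1 h1 h2 hx₀ hy₀ hz₀
      x y hsol t ht
  · have := aux_lb δ γ β α mu lam d c y₀ x₀ hδ hmu hlam hdpos hcpos hcd2
      (by linarith) (by linarith) hy₀ hx₀ (by linarith) y x hsol' t ht
    have heq : d * (mu * y₀ + lam * x₀) / (mu * d + lam * c)
        = d * (lam * x₀ + mu * y₀) / (lam * c + mu * d) := by ring_nf
    rwa [heq] at this
end

section
/- Assume hypothesis (H). Let (x(·), y(·)) be a solution to the system starting at any point of S. Then lim_{t→∞} y(t)/x(t) = d/c. -/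
open MeasureTheory

lemma isSolution_symm {α β γ δ x₀ y₀ : ℝ} {x y : ℝ → ℝ}
    (h : IsSolution α β γ δ x₀ y₀ x y) : IsSolution δ γ β α y₀ x₀ y x := by
  obtain ⟨hx, hy, hnn, hx0, hy0, h6⟩ := h
  refine ⟨hy, hx, fun t ht => ⟨(hnn t ht).2, (hnn t ht).1⟩, hy0, hx0, fun t ht => ?_⟩
  obtain ⟨n1, n2, i1, i2, e1, e2⟩ := h6 t ht
  exact ⟨n2, n1, i2, i1, by rw [e2]; ring, by rw [e1]; ring⟩


lemma le_on_Ici_of_hasDerivAt {f F : ℝ → ℝ} {a : ℝ}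
    (hf : ∀ t ≥ a, HasDerivAt f (F t) t) (hF : ∀ t > a, F t ≤ 0) :
    ∀ t ≥ a, f t ≤ f a := by
  have h : AntitoneOn f (Set.Ici a) := by
    apply antitoneOn_of_deriv_nonpos (convex_Ici a)
      (fun t ht => (hf t ht).continuousAt.continuousWithinAt)
    · intro t ht
      rw [interior_Ici] at ht
      exact ((hf t (le_of_lt ht)).differentiableAt).differentiableWithinAt
    · intro t ht
      rw [interior_Ici] at ht
      rw [(hf t (le_of_lt ht)).deriv]
      exact hF t ht
  exact fun t ht => h Set.self_mem_Ici ht ht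

lemma slope_no_gap (R g D G : ℝ → ℝ) (t₂ k K m : ℝ) (hk : 0 < k) (hK : 0 < K)
    (hg0 : 0 < g t₂)
    (hgpos : ∀ t ≥ t₂, 0 < g t)
    (hR : ∀ t ≥ t₂, HasDerivAt R (D t) t) (hg : ∀ t ≥ t₂, HasDerivAt g (G t) t)
    (hD : ∀ t ≥ t₂, D t ≤ -k / g t) (hG : ∀ t ≥ t₂, G t ≤ K)
    (hm : ∀ t ≥ t₂, m ≤ R t) : False := by
  set Lf : ℝ → ℝ := fun t => g t₂ + K * (t - t₂) with hLf
  have hLfderiv : ∀ t : ℝ, HasDerivAt Lf K t := by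
    intro t
    have h1 : HasDerivAt (fun u : ℝ => K * (u - t₂)) (K * 1) t :=
      ((hasDerivAt_id t).sub_const t₂).const_mul K
    have h2 : HasDerivAt (fun u : ℝ => K * (u - t₂)) K t := by simpa using h1
    exact h2.const_add (g t₂)
  have hLfpos : ∀ t ≥ t₂, 0 < Lf t := by
    intro t ht
    have : (0:ℝ) ≤ K * (t - t₂) := mul_nonneg hK.le (by linarith)
    simp only [hLf]; linarith
  -- step 1 : g t ≤ Lf t
  have hgle : ∀ t ≥ t₂, g t ≤ Lf t := by
    have := le_on_Ici_of_hasDerivAt (f := fun t => g t - Lf t) (F := fun t => G t - K)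
      (a := t₂) (fun t ht => (hg t ht).sub (hLfderiv t))
      (fun t ht => by simpa using sub_nonpos.mpr (hG t ht.le))
    intro t ht
    have h2 := this t ht
    simp only [hLf] at h2 ⊢
    linarith
  -- step 2 : φ decreasing
  set φ : ℝ → ℝ := fun t => R t + (k / K) * Real.log (Lf t) with hφ
  have hφderiv : ∀ t ≥ t₂, HasDerivAt φ (D t + (k / K) * ((Lf t)⁻¹ * K)) t := by
    intro t ht
    have hlog : HasDerivAt (fun u => Real.log (Lf u)) ((Lf t)⁻¹ * K) t :=
      (Real.hasDerivAt_log (ne_of_gt (hLfpos t ht))).comp t (hLfderiv t)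
    exact (hR t ht).add (hlog.const_mul (k / K))
  have hφle : ∀ t ≥ t₂, φ t ≤ φ t₂ := by
    apply le_on_Ici_of_hasDerivAt hφderiv
    intro t ht
    have h1 : (k / K) * ((Lf t)⁻¹ * K) = k / Lf t := by
      field_simp
    rw [h1]
    have h2 : k / Lf t ≤ k / g t :=
      div_le_div_of_nonneg_left hk.le (hgpos t ht.le) (hgle t ht.le)
    have h3 := hD t ht.le
    have : -k / g t = -(k / g t) := by ring
    linarith [this ▸ h3]
  -- choose the witness time
  set E : ℝ := Real.log (g t₂) + (K / k) * (R t₂ - m) + 1 with hE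
  set T : ℝ := t₂ + Real.exp E / K with hT
  have hTt₂ : t₂ ≤ T := by
    have := Real.exp_pos E
    have := div_pos this hK
    simp only [hT]; linarith
  have hLfT : Lf T = g t₂ + Real.exp E := by
    simp only [hLf, hT]
    field_simp
    ring
  have hlogT : E ≤ Real.log (Lf T) := by
    rw [hLfT]
    calc E = Real.log (Real.exp E) := (Real.log_exp E).symm
    _ ≤ Real.log (g t₂ + Real.exp E) := by
        apply Real.log_le_log (Real.exp_pos E)
        linarith
  have h1 := hφle T hTt₂
  have h2 := hm T hTt₂
  have hkK : 0 < k / K := div_pos hk hK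
  have h3 : m + (k / K) * E ≤ R t₂ + (k / K) * Real.log (g t₂) := by
    have : (k / K) * E ≤ (k / K) * Real.log (Lf T) :=
      mul_le_mul_of_nonneg_left hlogT hkK.le
    have hLft₂ : Lf t₂ = g t₂ := by simp [hLf]
    simp only [hφ, hLft₂] at h1
    linarith
  have h4 : (k / K) * E = (k / K) * Real.log (g t₂) + (R t₂ - m) + k / K := by
    rw [hE]
    field_simp
  linarith

lemma slope_invariant (R : ℝ → ℝ) (ρ t₀ : ℝ) (hcont : ContinuousOn R (Set.Ici t₀))
    (hderiv : ∀ t > t₀, R t > ρ → ∃ Dv, HasDerivAt R Dv t ∧ Dv < 0)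
    (h0 : R t₀ ≤ ρ) : ∀ t ≥ t₀, R t ≤ ρ := by
  intro t₁ ht₁
  by_contra hcon
  push_neg at hcon
  have ht₀₁ : t₀ < t₁ := by
    rcases lt_or_eq_of_le ht₁ with h | h
    · exact h
    · exfalso; rw [← h] at hcon; linarith
  set S : Set ℝ := {t ∈ Set.Icc t₀ t₁ | R t ≤ ρ} with hS
  have hSne : S.Nonempty := ⟨t₀, ⟨Set.left_mem_Icc.mpr ht₁, h0⟩⟩
  have hSbdd : BddAbove S := BddAbove.mono (fun u hu => hu.1) bddAbove_Icc
  have hSclosed : IsClosed S := by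
    have h1 : ContinuousOn R (Set.Icc t₀ t₁) := hcont.mono (fun u hu => hu.1)
    have := h1.preimage_isClosed_of_isClosed isClosed_Icc (isClosed_Iic (a := ρ))
    have h2 : S = Set.Icc t₀ t₁ ∩ R ⁻¹' Set.Iic ρ := by
      ext u
      simp only [hS, Set.mem_setOf_eq, Set.mem_inter_iff, Set.mem_preimage, Set.mem_Iic]
    rw [h2]
    exact this
  set u := sSup S with hu
  have huS : u ∈ S := hSclosed.csSup_mem hSne hSbdd
  have hut₁ : u < t₁ := by
    rcases lt_or_eq_of_le huS.1.2 with h | h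
    · exact h
    · exfalso; have := huS.2; rw [h] at this; linarith
  have hgt : ∀ t ∈ Set.Ioc u t₁, ρ < R t := by
    intro t ht
    by_contra hcon2
    push_neg at hcon2
    have : t ∈ S := ⟨⟨le_trans huS.1.1 ht.1.le, ht.2⟩, hcon2⟩
    have := le_csSup hSbdd this
    linarith [ht.1]
  have hanti : StrictAntiOn R (Set.Icc u t₁) := by
    apply strictAntiOn_of_deriv_neg (convex_Icc u t₁)
      (hcont.mono (fun w hw => le_trans huS.1.1 hw.1))
    intro t ht
    rw [interior_Icc] at ht
    obtain ⟨Dv, hDv, hDvneg⟩ := hderiv t (lt_of_le_of_lt huS.1.1 ht.1)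
      (hgt t ⟨ht.1, ht.2.le⟩)
    rw [hDv.deriv]; exact hDvneg
  have := hanti (Set.left_mem_Icc.mpr hut₁.le) (Set.right_mem_Icc.mpr hut₁.le) hut₁
  have h2 := huS.2
  linarith

namespace SlopeAux

variable {α β γ δ x₀ y₀ : ℝ} {x y : ℝ → ℝ}

lemma sol_ii (h : IsSolution α β γ δ x₀ y₀ x y) {s t : ℝ} (hs : 0 ≤ s) (ht : 0 ≤ t) :
    IntervalIntegrable (fun u => 1 / x u) volume s t := by
  have hM : (0:ℝ) ≤ max s t := le_trans hs (le_max_left s t)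
  have := (h.2.2.2.2.2 (max s t) hM).2.2.1
  apply this.mono_set
  rw [Set.uIcc_of_le hM]
  intro u hu
  rw [Set.mem_uIcc] at hu
  constructor
  · rcases hu with h'|h' <;> [exact le_trans hs h'.1; exact le_trans ht h'.1]
  · rcases hu with h'|h' <;> [exact le_trans h'.2 (le_max_right s t); exact le_trans h'.2 (le_max_left s t)]

lemma sol_int_nonneg (h : IsSolution α β γ δ x₀ y₀ x y) {s t : ℝ} (hs : 0 ≤ s) (hst : s ≤ t) :
    0 ≤ ∫ u in s..t, 1 / x u := by
  apply intervalIntegral.integral_nonneg hst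
  intro u hu
  have := (h.2.2.1 u (le_trans hs hu.1)).1
  positivity

lemma sol_diff (h : IsSolution α β γ δ x₀ y₀ x y) {s t : ℝ} (hs : 0 ≤ s) (hst : s ≤ t) :
    x t = x s + α * (∫ u in s..t, 1 / x u) + β * (∫ u in s..t, 1 / y u) := by
  have ht : (0:ℝ) ≤ t := le_trans hs hst
  obtain ⟨_, _, i1t, i2t, e1t, _⟩ := h.2.2.2.2.2 t ht
  obtain ⟨_, _, i1s, i2s, e1s, _⟩ := h.2.2.2.2.2 s hs
  have d1 : (∫ u in (0:ℝ)..t, 1 / x u) - (∫ u in (0:ℝ)..s, 1 / x u) = ∫ u in s..t, 1 / x u :=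
    intervalIntegral.integral_interval_sub_left i1t i1s
  have d2 : (∫ u in (0:ℝ)..t, 1 / y u) - (∫ u in (0:ℝ)..s, 1 / y u) = ∫ u in s..t, 1 / y u :=
    intervalIntegral.integral_interval_sub_left i2t i2s
  rw [e1t, e1s, ← d1, ← d2]
  ring

lemma sol_int_le (h : IsSolution α β γ δ x₀ y₀ x y) {m s t : ℝ} (hm : 0 < m)
    (hs : 0 ≤ s) (hst : s ≤ t) (hb : ∀ u ∈ Set.Icc s t, m ≤ x u) :
    ∫ u in s..t, 1 / x u ≤ (t - s) / m := by
  have h1 : ∫ u in s..t, 1 / x u ≤ ∫ _u in s..t, 1 / m := by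
    apply intervalIntegral.integral_mono_on hst (sol_ii h hs (le_trans hs hst))
      intervalIntegrable_const
    intro u hu
    exact one_div_le_one_div_of_le hm (hb u hu)
  have h2 : ∫ _u in s..t, (1:ℝ) / m = (t - s) * (1 / m) := by
    simp [intervalIntegral.integral_const]
  rw [h2] at h1
  calc ∫ u in s..t, 1 / x u ≤ (t - s) * (1/m) := h1
    _ = (t - s) / m := by ring

lemma sol_restrict_null (h : IsSolution α β γ δ x₀ y₀ x y) {s t : ℝ} (hs : 0 ≤ s) (hst : s ≤ t) :
    ∀ᵐ u ∂volume.restrict (Set.Ioc s t), x u ≠ 0 := by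
  have hnull := (h.2.2.2.2.2 t (le_trans hs hst)).1
  rw [ae_iff]
  have hsub : {u | ¬ x u ≠ 0} ∩ Set.Ioc s t ⊆ {u ∈ Set.Icc (0:ℝ) t | x u = 0} := by
    intro u hu
    refine ⟨⟨le_trans hs hu.2.1.le, hu.2.2⟩, not_not.mp hu.1⟩
  rw [Measure.restrict_apply' measurableSet_Ioc]
  exact measure_mono_null hsub hnull

lemma sol_int_pos (h : IsSolution α β γ δ x₀ y₀ x y) {s t : ℝ} (hs : 0 ≤ s) (hst : s < t) :
    0 < ∫ u in s..t, 1 / x u := by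
  rcases lt_or_eq_of_le (sol_int_nonneg h hs hst.le) with hlt | heq0
  · exact hlt
  exfalso
  have hae : (fun u => 1 / x u) =ᵐ[volume.restrict (Set.Ioc s t)] 0 := by
    rw [← intervalIntegral.integral_eq_zero_iff_of_le_of_nonneg_ae hst.le ?_ (sol_ii h hs (le_trans hs hst.le))]
    · exact heq0.symm
    · apply ae_restrict_of_forall_mem measurableSet_Ioc
      intro u hu
      have := (h.2.2.1 u (le_trans hs hu.1.le)).1
      positivity
  have hne := sol_restrict_null h hs hst.le
  have hfalse : ∀ᵐ u ∂volume.restrict (Set.Ioc s t), False := by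
    filter_upwards [hae, hne] with u h1 h2
    apply h2
    have : (1:ℝ) / x u = 0 := h1
    simpa [one_div, inv_eq_zero] using this
  have h0 : volume.restrict (Set.Ioc s t) Set.univ = 0 := by
    have := hfalse
    rw [ae_iff] at this
    simpa using this
  rw [Measure.restrict_apply_univ] at h0
  rw [Real.volume_Ioc] at h0
  have : (0:ℝ) < t - s := by linarith
  simp [ENNReal.ofReal_eq_zero, not_lt.mpr] at h0
  linarith
lemma integral_linear (C a b : ℝ) : ∫ u in a..b, C * (b - u) = C * (b - a)^2 / 2 := by
  have h1 : (∫ u in a..b, C * (b - u)) = ∫ u in a..b, (C * b - C * u) := by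
    congr 1; funext u; ring
  have hInt : IntervalIntegrable (fun u : ℝ => C * u) volume a b :=
    (continuous_const.mul continuous_id).intervalIntegrable a b
  rw [h1, intervalIntegral.integral_sub intervalIntegrable_const hInt,
    intervalIntegral.integral_const, smul_eq_mul]
  have h3 : (∫ u in a..b, C * u) = C * ∫ u in a..b, u := intervalIntegral.integral_const_mul _ _
  rw [h3, integral_id]
  ring

lemma exists_lammu (α β γ δ : ℝ) (hα : 0 < α) (hδ : 0 < δ)
    (hH : max β γ ≥ 0 ∨ β * γ < α * δ) :
    ∃ lam mu : ℝ, 0 < lam ∧ 0 < mu ∧ 0 < lam * α + mu * γ ∧ 0 < lam * β + mu * δ := by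
  have hbg : (0 ≤ β ∧ 0 ≤ γ) ∨ β * γ < α * δ := by
    rcases hH with h | h
    · rcases le_or_gt 0 β with hβ | hβ
      · rcases le_or_gt 0 γ with hγ | hγ
        · exact Or.inl ⟨hβ, hγ⟩
        · right; nlinarith
      · have hγ : 0 ≤ γ := by
          rcases le_total β γ with h2 | h2
          · rwa [max_eq_right h2] at h
          · rw [max_eq_left h2] at h; linarith
        right; nlinarith
    · exact Or.inr h
  rcases hbg with ⟨hβ, hγ⟩ | hlt
  · exact ⟨1, 1, one_pos, one_pos, by nlinarith, by nlinarith⟩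
  rcases le_or_gt 0 β with hβ | hβ
  · refine ⟨(|γ| + 1)/α, 1, by positivity, one_pos, ?_, ?_⟩
    · have : ((|γ| + 1)/α) * α = |γ| + 1 := by field_simp
      rw [this]
      have := neg_abs_le γ
      linarith
    · nlinarith [mul_nonneg (by positivity : (0:ℝ) ≤ (|γ| + 1)/α) hβ]
  · -- β < 0
    set a₁ : ℝ := max (-γ/α) 0 with ha₁
    set a₂ : ℝ := δ/(-β) with ha₂
    have ha₂pos : 0 < a₂ := by apply div_pos hδ; linarith
    have ha₁₂ : a₁ < a₂ := by
      rcases max_cases (-γ/α) 0 with ⟨h1, h2⟩ | ⟨h1, h2⟩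
      · rw [ha₁, h1]
        rw [div_lt_div_iff₀ hα (by linarith : (0:ℝ) < -β)]
        nlinarith
      · rw [ha₁, h1]; exact ha₂pos
    refine ⟨(a₁ + a₂)/2, 1, by nlinarith [le_max_right (-γ/α) 0], one_pos, ?_, ?_⟩
    · have h1 : -γ/α < (a₁ + a₂)/2 := by
        have := le_max_left (-γ/α) 0
        rw [ha₁] at *
        linarith
      rw [div_lt_div_iff₀ hα (by norm_num : (0:ℝ) < 2)] at h1
      nlinarith
    · have h1 : (a₁ + a₂)/2 < δ/(-β) := by rw [← ha₂]; linarith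
      rw [lt_div_iff₀ (by linarith : (0:ℝ) < -β)] at h1
      nlinarith

set_option maxHeartbeats 1000000 in
lemma sol_pos (hα : 0 < α) (h : IsSolution α β γ δ x₀ y₀ x y)
    (ho : ∀ t > (0:ℝ), x t = 0 → 0 < y t) : ∀ t > (0:ℝ), 0 < x t := by
  intro t₁ ht₁
  obtain ⟨hxc, hyc, hnn, hx0, hy0, h6⟩ := h
  have h' : IsSolution α β γ δ x₀ y₀ x y := ⟨hxc, hyc, hnn, hx0, hy0, h6⟩
  have hx₀ : 0 ≤ x₀ := hx0 ▸ (hnn 0 le_rfl).1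
  rcases le_or_gt 0 β with hβ | hβ
  · -- β ≥ 0 : x is increasing
    obtain ⟨_, _, _, i2, e1, _⟩ := h6 t₁ ht₁.le
    have hIx : 0 < ∫ u in (0:ℝ)..t₁, 1 / x u := sol_int_pos h' le_rfl ht₁
    have hIy : 0 ≤ ∫ u in (0:ℝ)..t₁, 1 / y u := sol_int_nonneg (isSolution_symm h') le_rfl ht₁.le
    rw [e1]; nlinarith
  -- β < 0
  by_contra hcon
  push_neg at hcon
  have hxt₁ : x t₁ = 0 := le_antisymm hcon (hnn t₁ ht₁.le).1
  have hyt₁ : 0 < y t₁ := ho t₁ ht₁ hxt₁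
  obtain ⟨m, hmpos, hmlt⟩ : ∃ m, 0 < m ∧ m < y t₁ := ⟨y t₁ / 2, by positivity, by linarith⟩
  -- neighborhood where y > m
  have hyca : ContinuousAt y t₁ := hyc.continuousAt (Ici_mem_nhds ht₁)
  have hev : ∀ᶠ u in nhds t₁, y u ∈ Set.Ioi m :=
    hyca (Ioi_mem_nhds hmlt)
  obtain ⟨ε, hεpos, hball⟩ := Metric.eventually_nhds_iff.mp hev
  obtain ⟨C, hCpos, hC⟩ : ∃ C, 0 < C ∧ C = -β / m :=
    ⟨-β / m, div_pos (by linarith) hmpos, rfl⟩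
  obtain ⟨hh, hhpos, hhle1, hhle2, hhle⟩ :
      ∃ hh, 0 < hh ∧ hh ≤ t₁/2 ∧ hh ≤ ε/2 ∧ hh ≤ α / C^2 := by
    refine ⟨min (min (t₁/2) (ε/2)) (α / C^2), ?_, ?_, ?_, min_le_right _ _⟩
    · apply lt_min (lt_min (by linarith) (by linarith)); positivity
    · exact le_trans (min_le_left _ _) (min_le_left _ _)
    · exact le_trans (min_le_left _ _) (min_le_right _ _)
  obtain ⟨s, hsdef⟩ : ∃ s, s = t₁ - hh := ⟨t₁ - hh, rfl⟩
  have hs0 : 0 < s := by rw [hsdef]; linarith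
  have hst : s < t₁ := by rw [hsdef]; linarith
  have hts : t₁ - s = hh := by rw [hsdef]; ring
  have hyb : ∀ u ∈ Set.Icc s t₁, m < y u := by
    intro u hu
    apply hball
    rw [Real.dist_eq, abs_lt]
    constructor
    · rw [hsdef] at hu; have := hu.1; linarith
    · have := hu.2; linarith
  -- bounds on x on [s, t₁]
  have hxu : ∀ u ∈ Set.Icc s t₁, x u ≤ C * (t₁ - u) := by
    intro u hu
    have hu0 : 0 ≤ u := le_trans hs0.le hu.1
    have heq := sol_diff h' hu0 hu.2
    rw [hxt₁] at heq
    have hI : 0 ≤ ∫ v in u..t₁, 1 / x v := sol_int_nonneg h' hu0 hu.2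
    have hJ : ∫ v in u..t₁, 1 / y v ≤ (t₁ - u) / m := by
      apply sol_int_le (isSolution_symm h') hmpos hu0 hu.2
      intro v hv
      exact (hyb v ⟨le_trans hu.1 hv.1, hv.2⟩).le
    have hCm : C * (t₁ - u) = -β * ((t₁ - u)/m) := by rw [hC]; field_simp
    rw [hCm]
    nlinarith
  -- bound on the integral of 1/x
  have hIs : α * (∫ v in s..t₁, 1 / x v) ≤ C * hh := by
    have heq := sol_diff h' hs0.le hst.le
    rw [hxt₁] at heq
    have hxs : 0 ≤ x s := (hnn s hs0.le).1
    have hJ : ∫ v in s..t₁, 1 / y v ≤ (t₁ - s) / m := by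
      apply sol_int_le (isSolution_symm h') hmpos hs0.le hst.le
      intro v hv; exact (hyb v hv).le
    have hCm : C * hh = -β * (hh/m) := by rw [hC]; field_simp
    rw [hCm]
    rw [hts] at hJ
    nlinarith
  -- bound on the integral of x
  have hxint : IntervalIntegrable x volume s t₁ := by
    apply ContinuousOn.intervalIntegrable
    apply hxc.mono
    intro u hu
    rw [Set.uIcc_of_le hst.le] at hu
    exact le_trans hs0.le hu.1
  have hgint : IntervalIntegrable (fun u => C * (t₁ - u)) volume s t₁ :=
    ((continuous_const.mul (continuous_const.sub continuous_id)).intervalIntegrable s t₁)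
  have hintx : ∫ u in s..t₁, x u ≤ C * hh^2 / 2 := by
    have h1 : ∫ u in s..t₁, x u ≤ ∫ u in s..t₁, C * (t₁ - u) :=
      intervalIntegral.integral_mono_on hst.le hxint hgint hxu
    have h2 : ∫ u in s..t₁, C * (t₁ - u) = C * (t₁ - s)^2/2 := integral_linear C s t₁
    rw [hts] at h2
    linarith
  -- AM-GM pointwise a.e.
  obtain ⟨r, hrpos, hr⟩ : ∃ r, 0 < r ∧ r = α / C := ⟨α / C, by positivity, rfl⟩
  have hamgm : (fun _u : ℝ => (1:ℝ)) ≤ᵐ[volume.restrict (Set.Icc s t₁)]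
      (fun u => x u * (1/(2*r)) + (r/2) * (1 / x u)) := by
    have hne := sol_restrict_null h' hs0.le hst.le
    have hne' : ∀ᵐ u ∂volume.restrict (Set.Icc s t₁), x u ≠ 0 := by
      have hsub : (volume.restrict (Set.Icc s t₁)) {u | ¬ x u ≠ 0} = 0 := by
        rw [Measure.restrict_apply' measurableSet_Icc]
        have hnull := (h6 t₁ ht₁.le).1
        apply measure_mono_null _ hnull
        intro u hu
        exact ⟨⟨le_trans hs0.le hu.2.1, hu.2.2⟩, not_not.mp hu.1⟩
      rw [ae_iff]; exact hsub
    have hpos' : ∀ᵐ u ∂volume.restrict (Set.Icc s t₁), 0 ≤ x u := by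
      apply ae_restrict_of_forall_mem measurableSet_Icc
      intro u hu
      exact (hnn u (le_trans hs0.le hu.1)).1
    filter_upwards [hne', hpos'] with u h1 h2
    have hxupos : 0 < x u := lt_of_le_of_ne h2 (Ne.symm h1)
    have key : x u * (1/(2*r)) + (r/2) * (1 / x u) - 1 =
        (x u - r)^2 / (2 * r * x u) := by field_simp; ring
    have h3 : 0 ≤ (x u - r)^2 / (2 * r * x u) := by positivity
    show (1:ℝ) ≤ x u * (1/(2*r)) + (r/2) * (1 / x u)
    rw [← key] at h3
    linarith
  have hcomb : IntervalIntegrable (fun u => x u * (1/(2*r)) + (r/2) * (1 / x u)) volume s t₁ := by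
    apply IntervalIntegrable.add
    · exact hxint.mul_const _
    · exact (sol_ii h' hs0.le ht₁.le).const_mul _
  have hmono := intervalIntegral.integral_mono_ae_restrict hst.le
    (intervalIntegrable_const) hcomb hamgm
  have hleft : ∫ _u in s..t₁, (1:ℝ) = hh := by
    rw [intervalIntegral.integral_const, smul_eq_mul, mul_one, hts]
  have hright : ∫ u in s..t₁, (x u * (1/(2*r)) + (r/2) * (1 / x u)) =
      (∫ u in s..t₁, x u) * (1/(2*r)) + (r/2) * (∫ u in s..t₁, 1 / x u) := by
    rw [intervalIntegral.integral_add (hxint.mul_const _) ((sol_ii h' hs0.le ht₁.le).const_mul _)]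
    rw [intervalIntegral.integral_mul_const, intervalIntegral.integral_const_mul]
  rw [hleft, hright] at hmono
  -- final contradiction
  have hIsle : ∫ v in s..t₁, 1 / x v ≤ C * hh / α := by
    rw [le_div_iff₀ hα]; linarith [hIs]
  have hintxnn : 0 ≤ ∫ u in s..t₁, x u := by
    apply intervalIntegral.integral_nonneg hst.le
    intro u hu
    exact (hnn u (le_trans hs0.le hu.1)).1
  have hterm1 : (∫ u in s..t₁, x u) * (1/(2*r)) ≤ (C * hh^2/2) * (1/(2*r)) := by
    apply mul_le_mul_of_nonneg_right hintx
    positivity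
  have hterm2 : (r/2) * (∫ u in s..t₁, 1 / x u) ≤ (r/2) * (C * hh / α) := by
    apply mul_le_mul_of_nonneg_left hIsle
    positivity
  have hCne : C ≠ 0 := ne_of_gt hCpos
  have hαne : α ≠ 0 := ne_of_gt hα
  have hr2 : (r/2) * (C * hh / α) = hh / 2 := by
    rw [hr]; field_simp
  have hr3 : (C * hh^2/2) * (1/(2*r)) = C^2 * hh^2 / (4*α) := by
    rw [hr]; field_simp; ring
  rw [hr2] at hterm2
  rw [hr3] at hterm1
  -- so hh ≤ C²hh²/(4α) + hh/2, i.e. hh/2 ≤ C²hh²/(4α), i.e. 2α ≤ C²hh ≤ α : contradiction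
  have hfin : hh / 2 ≤ C^2 * hh^2 / (4*α) := by linarith
  rw [div_le_div_iff₀ (by norm_num) (by positivity)] at hfin
  have h5 : hh * C^2 ≤ α := (le_div_iff₀ (by positivity)).mp hhle
  nlinarith [hfin, h5, hhpos, hα]

lemma sol_pos_all (hα : 0 < α) (hδ : 0 < δ)
    (hH : max β γ ≥ 0 ∨ β * γ < α * δ)
    (h : IsSolution α β γ δ x₀ y₀ x y) : ∀ t > (0:ℝ), 0 < x t ∧ 0 < y t := by
  obtain ⟨lam, mu, hlam, hmu, hp, hq⟩ := exists_lammu α β γ δ hα hδ hH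
  have hx₀ : 0 ≤ x₀ := h.2.2.2.1 ▸ (h.2.2.1 0 le_rfl).1
  have hy₀ : 0 ≤ y₀ := h.2.2.2.2.1 ▸ (h.2.2.1 0 le_rfl).2
  have hw : ∀ t > (0:ℝ), 0 < lam * x t + mu * y t := by
    intro t ht
    obtain ⟨_, _, _, _, e1, e2⟩ := h.2.2.2.2.2 t ht.le
    have hIx : 0 < ∫ u in (0:ℝ)..t, 1 / x u := sol_int_pos h le_rfl ht
    have hIy : 0 ≤ ∫ u in (0:ℝ)..t, 1 / y u := sol_int_nonneg (isSolution_symm h) le_rfl ht.le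
    rw [e1, e2]
    nlinarith
  have hox : ∀ t > (0:ℝ), x t = 0 → 0 < y t := by
    intro t ht hxt
    have := hw t ht
    rw [hxt] at this
    nlinarith
  have hoy : ∀ t > (0:ℝ), y t = 0 → 0 < x t := by
    intro t ht hyt
    have := hw t ht
    rw [hyt] at this
    nlinarith
  intro t ht
  refine ⟨sol_pos hα h hox t ht, ?_⟩
  apply sol_pos hδ (isSolution_symm h) hoy t ht

end SlopeAux
namespace SlopeAux

lemma sol_hasDerivAt (hα : 0 < α) (hδ : 0 < δ)
    (hH : max β γ ≥ 0 ∨ β * γ < α * δ)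
    (h : IsSolution α β γ δ x₀ y₀ x y) :
    ∀ t > (0:ℝ), HasDerivAt x (α*(1/x t)+β*(1/y t)) t ∧
      HasDerivAt y (γ*(1/x t)+δ*(1/y t)) t := by
  have hpos := sol_pos_all hα hδ hH h
  have h1x : ContinuousOn (fun s => 1 / x s) (Set.Ioi (0:ℝ)) := by
    apply ContinuousOn.div continuousOn_const (h.1.mono Set.Ioi_subset_Ici_self)
    exact fun u hu => ne_of_gt (hpos u hu).1
  have h1y : ContinuousOn (fun s => 1 / y s) (Set.Ioi (0:ℝ)) := by
    apply ContinuousOn.div continuousOn_const (h.2.1.mono Set.Ioi_subset_Ici_self)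
    exact fun u hu => ne_of_gt (hpos u hu).2
  intro t ht
  have hA : HasDerivAt (fun u => ∫ s in (0:ℝ)..u, 1 / x s) (1 / x t) t :=
    intervalIntegral.integral_hasDerivAt_right (sol_ii h le_rfl ht.le)
      (h1x.stronglyMeasurableAtFilter isOpen_Ioi t ht)
      (h1x.continuousAt (Ioi_mem_nhds ht))
  have hB : HasDerivAt (fun u => ∫ s in (0:ℝ)..u, 1 / y s) (1 / y t) t :=
    intervalIntegral.integral_hasDerivAt_right (sol_ii (isSolution_symm h) le_rfl ht.le)
      (h1y.stronglyMeasurableAtFilter isOpen_Ioi t ht)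
      (h1y.continuousAt (Ioi_mem_nhds ht))
  constructor
  · have hg : HasDerivAt (fun u => x₀ + (α * (∫ s in (0:ℝ)..u, 1 / x s)
        + β * (∫ s in (0:ℝ)..u, 1 / y s))) (α*(1/x t)+β*(1/y t)) t :=
      (((hA.const_mul α).add (hB.const_mul β))).const_add x₀
    apply hg.congr_of_eventuallyEq
    apply Filter.eventuallyEq_of_mem (Ioi_mem_nhds ht)
    intro u hu
    have := (h.2.2.2.2.2 u (le_of_lt hu)).2.2.2.2.1
    rw [this]; ring
  · have hg : HasDerivAt (fun u => y₀ + (γ * (∫ s in (0:ℝ)..u, 1 / x s)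
        + δ * (∫ s in (0:ℝ)..u, 1 / y s))) (γ*(1/x t)+δ*(1/y t)) t :=
      (((hA.const_mul γ).add (hB.const_mul δ))).const_add y₀
    apply hg.congr_of_eventuallyEq
    apply Filter.eventuallyEq_of_mem (Ioi_mem_nhds ht)
    intro u hu
    have := (h.2.2.2.2.2 u (le_of_lt hu)).2.2.2.2.2
    rw [this]; ring

end SlopeAux
set_option maxHeartbeats 4000000 in
/-- Under (H), any solution starting at a point of `S` satisfies
`y(t) / x(t) → d / c` as `t → ∞`. -/
theorem slope_limit (α β γ δ : ℝ) (hα : 0 < α) (hδ : 0 < δ)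
    (hH : max β γ ≥ 0 ∨ β * γ < α * δ)
    (c d : ℝ)
    (hc : c = Real.sqrt (2 * α + β / δ * (β - γ + Real.sqrt ((β - γ) ^ 2 + 4 * α * δ))))
    (hd : d = Real.sqrt (2 * δ + γ / α * (γ - β + Real.sqrt ((β - γ) ^ 2 + 4 * α * δ))))
    (x₀ y₀ : ℝ) (hx₀ : 0 ≤ x₀) (hy₀ : 0 ≤ y₀)
    (x y : ℝ → ℝ) (hsol : IsSolution α β γ δ x₀ y₀ x y) :
    Filter.Tendsto (fun t => y t / x t) Filter.atTop (nhds (d / c)) := by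
  have hpos := SlopeAux.sol_pos_all hα hδ hH hsol
  have hderiv := SlopeAux.sol_hasDerivAt hα hδ hH hsol
  -- the constants
  obtain ⟨Δ, hΔdef⟩ : ∃ Δ, Δ = Real.sqrt ((β - γ) ^ 2 + 4 * α * δ) := ⟨_, rfl⟩
  have hΔsq : Δ ^ 2 = (β - γ) ^ 2 + 4 * α * δ := by
    rw [hΔdef]; exact Real.sq_sqrt (by nlinarith [sq_nonneg (β - γ), mul_pos hα hδ])
  have hΔpos : 0 < Δ := by
    rw [hΔdef]; exact Real.sqrt_pos.mpr (by nlinarith [sq_nonneg (β - γ), mul_pos hα hδ])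
  have habs1 : γ - β < Δ := by nlinarith [hΔsq, hΔpos, mul_pos hα hδ]
  have habs2 : β - γ < Δ := by nlinarith [hΔsq, hΔpos, mul_pos hα hδ]
  obtain ⟨ρ, hρdef⟩ : ∃ ρ : ℝ, ρ = (γ - β + Δ) / (2 * α) := ⟨_, rfl⟩
  obtain ⟨ρ₂, hρ₂def⟩ : ∃ ρ₂ : ℝ, ρ₂ = (γ - β - Δ) / (2 * α) := ⟨_, rfl⟩
  have hρpos : 0 < ρ := by rw [hρdef]; exact div_pos (by linarith) (by linarith)
  have hρ₂neg : ρ₂ < 0 := by rw [hρ₂def]; exact div_neg_of_neg_of_pos (by linarith) (by linarith)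
  have hsum : 2 * α * ρ = γ - β + Δ := by rw [hρdef]; field_simp
  have hsum2 : 2 * α * ρ₂ = γ - β - Δ := by rw [hρ₂def]; field_simp
  have hne4 : (4:ℝ) * α ≠ 0 := by positivity
  have hroot : α * ρ ^ 2 + (β - γ) * ρ - δ = 0 := by
    have h4 : 4 * α * (α * ρ ^ 2 + (β - γ) * ρ - δ) = 0 := by
      linear_combination (2 * α * ρ + γ - β + Δ + 2 * (β - γ)) * hsum + hΔsq
    exact (mul_eq_zero.mp h4).resolve_left hne4
  have hsum12 : α * (ρ + ρ₂) = γ - β := by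
    linear_combination (hsum + hsum2) / 2
  have hprod : α * (ρ * ρ₂) = -δ := by
    have h4 : 4 * α * (α * (ρ * ρ₂) + δ) = 0 := by
      linear_combination (2 * α * ρ₂) * hsum + (γ - β + Δ) * hsum2 - hΔsq
    have := (mul_eq_zero.mp h4).resolve_left hne4
    linarith
  have hfac : ∀ X Y : ℝ, δ * X ^ 2 + (γ - β) * X * Y - α * Y ^ 2
      = -α * (Y - ρ * X) * (Y - ρ₂ * X) := by
    intro X Y
    linear_combination (-(X * Y)) * hsum12 + X ^ 2 * hprod
  have hprodkey : ρ * (β - γ + Δ) = 2 * δ := by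
    have hne2 : (2:ℝ) * α ≠ 0 := by positivity
    have h4 : 2 * α * (ρ * (β - γ + Δ) - 2 * δ) = 0 := by
      linear_combination (β - γ + Δ) * hsum + hΔsq
    have := (mul_eq_zero.mp h4).resolve_left hne2
    linarith
  -- d / c = ρ
  have hβγcase : (0 ≤ β ∧ 0 ≤ γ) ∨ β * γ < α * δ := by
    rcases hH with h | h
    · rcases le_or_gt 0 β with hβ | hβ
      · rcases le_or_gt 0 γ with hγ | hγ
        · exact Or.inl ⟨hβ, hγ⟩
        · right; nlinarith [mul_pos hα hδ]
      · have hγ : 0 ≤ γ := by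
          rcases le_total β γ with h2 | h2
          · rwa [max_eq_right h2] at h
          · rw [max_eq_left h2] at h; linarith
        right; nlinarith [mul_pos hα hδ]
    · exact Or.inr h
  have hc2pos : 0 < 2 * α + β / δ * (β - γ + Δ) := by
    rcases le_or_gt 0 β with hβ | hβ
    · have h1 : 0 < β - γ + Δ := by linarith
      have h2 : 0 ≤ β / δ * (β - γ + Δ) := mul_nonneg (div_nonneg hβ hδ.le) h1.le
      linarith
    · have hβγ : β * γ < α * δ := by
        rcases hβγcase with ⟨h1, _⟩ | h1
        · linarith
        · exact h1
      have h1 : 0 < 2 * α * δ + β ^ 2 - β * γ := by nlinarith [mul_pos hα hδ]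
      have h2 : β ^ 2 * Δ ^ 2 < (2 * α * δ + β ^ 2 - β * γ) ^ 2 := by
        nlinarith [hΔsq, mul_pos (mul_pos hα hδ) (sub_pos.mpr hβγ)]
      have ha : 0 ≤ -(β * Δ) := by nlinarith [mul_nonneg (by linarith : (0:ℝ) ≤ -β) hΔpos.le]
      have h3 : -(β * Δ) < 2 * α * δ + β ^ 2 - β * γ := by nlinarith [h1, h2, ha]
      have h4 : 0 < 2 * α * δ + β * (β - γ + Δ) := by nlinarith [h3]
      have h5 : 2 * α + β / δ * (β - γ + Δ) = (2 * α * δ + β * (β - γ + Δ)) / δ := by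
        field_simp
      rw [h5]; exact div_pos h4 hδ
  have hd2pos : 0 < 2 * δ + γ / α * (γ - β + Δ) := by
    rcases le_or_gt 0 γ with hγ | hγ
    · have h1 : 0 < γ - β + Δ := by linarith
      have h2 : 0 ≤ γ / α * (γ - β + Δ) := mul_nonneg (div_nonneg hγ hα.le) h1.le
      linarith
    · have hβγ : β * γ < α * δ := by
        rcases hβγcase with ⟨_, h1⟩ | h1
        · linarith
        · exact h1
      have h1 : 0 < 2 * α * δ + γ ^ 2 - β * γ := by nlinarith [mul_pos hα hδ]
      have h2 : γ ^ 2 * Δ ^ 2 < (2 * α * δ + γ ^ 2 - β * γ) ^ 2 := by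
        nlinarith [hΔsq, mul_pos (mul_pos hα hδ) (sub_pos.mpr hβγ)]
      have ha : 0 ≤ -(γ * Δ) := by nlinarith [mul_nonneg (by linarith : (0:ℝ) ≤ -γ) hΔpos.le]
      have h3 : -(γ * Δ) < 2 * α * δ + γ ^ 2 - β * γ := by nlinarith [h1, h2, ha]
      have h4 : 0 < 2 * α * δ + γ * (γ - β + Δ) := by nlinarith [h3]
      have h5 : 2 * δ + γ / α * (γ - β + Δ) = (2 * α * δ + γ * (γ - β + Δ)) / α := by
        field_simp
      rw [h5]; exact div_pos h4 hα
  have hcpos : 0 < c := by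
    rw [hc, ← hΔdef]; exact Real.sqrt_pos.mpr hc2pos
  have hdc : d / c = ρ := by
    have hid : 2 * δ + γ / α * (γ - β + Δ) = ρ ^ 2 * (2 * α + β / δ * (β - γ + Δ)) := by
      have hαne : α ≠ 0 := ne_of_gt hα
      have hδne : δ ≠ 0 := ne_of_gt hδ
      field_simp
      linear_combination -γ*δ*hsum - α*ρ*β*hprodkey - 2*α*δ*hroot
    have h1 : d = ρ * c := by
      rw [hd, ← hΔdef, hid, hc, ← hΔdef, Real.sqrt_mul (sq_nonneg ρ), Real.sqrt_sq hρpos.le]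
    rw [h1, mul_div_assoc, div_self (ne_of_gt hcpos), mul_one]
  rw [hdc]
  -- the ratio function
  obtain ⟨R, hRdef⟩ : ∃ R : ℝ → ℝ, R = fun u => y u / x u := ⟨_, rfl⟩
  rw [show (fun t => y t / x t) = R from hRdef.symm]
  have hRpos : ∀ t > (0:ℝ), 0 < R t := fun t ht => by
    rw [hRdef]; exact div_pos (hpos t ht).2 (hpos t ht).1
  have hR' : ∀ t > (0:ℝ), HasDerivAt R ((-α * (R t - ρ) * (R t - ρ₂)) / (x t * y t)) t := by
    intro t ht
    obtain ⟨hx', hy'⟩ := hderiv t ht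
    have hxp := (hpos t ht).1
    have hyp := (hpos t ht).2
    have h1 : HasDerivAt (fun u => y u / x u)
        (((γ*(1/x t)+δ*(1/y t)) * x t - y t * (α*(1/x t)+β*(1/y t))) / x t ^ 2) t :=
      hy'.div hx' (ne_of_gt hxp)
    have h2 : ((γ*(1/x t)+δ*(1/y t)) * x t - y t * (α*(1/x t)+β*(1/y t))) / x t ^ 2
        = (-α * (y t / x t - ρ) * (y t / x t - ρ₂)) / (x t * y t) := by
      have hnum := hfac (x t) (y t)
      rw [div_eq_div_iff (by positivity) (by positivity)]
      field_simp
      nlinarith [hnum, sq_nonneg (x t)]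
    rw [h2] at h1
    rw [hRdef]
    exact h1
  -- continuity of R on right half-lines
  have hcontR : ∀ t₀ > (0:ℝ), ContinuousOn R (Set.Ici t₀) := by
    intro t₀ ht₀ t ht
    exact ((hR' t (lt_of_lt_of_le ht₀ ht)).continuousAt).continuousWithinAt
  -- derivative of x*y and its bound
  have hg' : ∀ t > (0:ℝ), HasDerivAt (fun u => x u * y u)
      ((α*(1/x t)+β*(1/y t)) * y t + x t * (γ*(1/x t)+δ*(1/y t))) t := by
    intro t ht
    exact (hderiv t ht).1.mul (hderiv t ht).2
  have hGbound : ∀ t > (0:ℝ), ∀ m' M' : ℝ, 0 < m' → m' ≤ R t → R t ≤ M' →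
      (α*(1/x t)+β*(1/y t)) * y t + x t * (γ*(1/x t)+δ*(1/y t))
        ≤ α * M' + |β| + |γ| + δ / m' := by
    intro t ht m' M' hm' h1 h2
    have hxp := (hpos t ht).1
    have hyp := (hpos t ht).2
    have e1 : (α*(1/x t)+β*(1/y t)) * y t + x t * (γ*(1/x t)+δ*(1/y t))
        = α * R t + β + γ + δ * (x t / y t) := by
      rw [hRdef]; field_simp; ring
    have e2 : x t / y t = 1 / R t := by rw [hRdef]; rw [one_div_div]
    have e3 : 1 / R t ≤ 1 / m' := one_div_le_one_div_of_le hm' h1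
    have e4 : δ * (1 / R t) ≤ δ / m' := by
      calc δ * (1 / R t) ≤ δ * (1 / m') := mul_le_mul_of_nonneg_left e3 hδ.le
      _ = δ / m' := by ring
    rw [e1, e2]
    have := mul_le_mul_of_nonneg_left h2 hα.le
    linarith [le_abs_self β, le_abs_self γ]
  -- sign facts
  have hDneg : ∀ t > (0:ℝ), ρ < R t → (-α * (R t - ρ) * (R t - ρ₂)) / (x t * y t) < 0 := by
    intro t ht hgt
    apply div_neg_of_neg_of_pos
    · have h2 : 0 < R t - ρ₂ := by have := hRpos t ht; linarith
      nlinarith [mul_pos (mul_pos hα (sub_pos.mpr hgt)) h2]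
    · exact mul_pos (hpos t ht).1 (hpos t ht).2
  have hDnonneg : ∀ t > (0:ℝ), R t ≤ ρ → 0 ≤ (-α * (R t - ρ) * (R t - ρ₂)) / (x t * y t) := by
    intro t ht hle
    apply div_nonneg _ (mul_pos (hpos t ht).1 (hpos t ht).2).le
    have h2 : 0 < R t - ρ₂ := by have := hRpos t ht; linarith
    nlinarith [mul_nonneg (mul_nonneg hα.le (by linarith : (0:ℝ) ≤ ρ - R t)) h2.le]
  -- dichotomy
  by_cases hcase : ∃ t₁ ≥ (1:ℝ), R t₁ ≤ ρ
  · -- case: R eventually below ρ, R is nondecreasing from t₁ on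
    obtain ⟨t₁, ht₁, hRt₁⟩ := hcase
    have ht₁pos : (0:ℝ) < t₁ := lt_of_lt_of_le one_pos ht₁
    have hinv : ∀ t ≥ t₁, R t ≤ ρ := by
      apply slope_invariant R ρ t₁ (hcontR t₁ ht₁pos) _ hRt₁
      intro t ht hgt
      exact ⟨_, hR' t (lt_trans ht₁pos ht), hDneg t (lt_trans ht₁pos ht) hgt⟩
    have hmono : MonotoneOn R (Set.Ici t₁) := by
      apply monotoneOn_of_deriv_nonneg (convex_Ici t₁) (hcontR t₁ ht₁pos)
      · intro t ht
        rw [interior_Ici] at ht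
        exact ((hR' t (lt_trans ht₁pos ht)).differentiableAt).differentiableWithinAt
      · intro t ht
        rw [interior_Ici] at ht
        rw [(hR' t (lt_trans ht₁pos ht)).deriv]
        exact hDnonneg t (lt_trans ht₁pos ht) (hinv t ht.le)
    obtain ⟨R₂, hR₂def⟩ : ∃ R₂ : ℝ → ℝ, R₂ = fun t => R (max t t₁) := ⟨_, rfl⟩
    have hRR₂ : ∀ t ≥ t₁, R₂ t = R t := by
      intro t ht; rw [hR₂def]; simp only [max_eq_left ht]
    have hR₂mono : Monotone R₂ := by
      intro a b hab
      rw [hR₂def]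
      exact hmono (le_max_right a t₁) (le_max_right b t₁) (max_le_max hab le_rfl)
    have hR₂bdd : BddAbove (Set.range R₂) := by
      refine ⟨ρ, ?_⟩
      rintro v ⟨t, rfl⟩
      rw [hR₂def]
      exact hinv _ (le_max_right t t₁)
    have htend2 := tendsto_atTop_ciSup hR₂mono hR₂bdd
    obtain ⟨L, hLdef⟩ : ∃ L : ℝ, L = ⨆ t, R₂ t := ⟨_, rfl⟩
    rw [← hLdef] at htend2
    have htendR : Filter.Tendsto R Filter.atTop (nhds L) := by
      apply htend2.congr'
      filter_upwards [Filter.eventually_ge_atTop t₁] with t ht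
      exact hRR₂ t ht
    have hLle : L ≤ ρ := by
      rw [hLdef]
      apply ciSup_le
      intro t
      rw [hR₂def]
      exact hinv _ (le_max_right t t₁)
    have hRleL : ∀ t ≥ t₁, R t ≤ L := by
      intro t ht
      rw [← hRR₂ t ht, hLdef]
      exact le_ciSup hR₂bdd t
    have hRgeBot : ∀ t ≥ t₁, R t₁ ≤ R t := fun t ht => hmono Set.self_mem_Ici ht ht
    have hLeq : L = ρ := by
      by_contra hne
      have hLlt : L < ρ := lt_of_le_of_ne hLle hne
      have hRt₁pos := hRpos t₁ ht₁pos
      obtain ⟨k, hkpos, hkdef⟩ : ∃ k, 0 < k ∧ k = α * (ρ - L) * (R t₁ - ρ₂) :=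
        ⟨_, mul_pos (mul_pos hα (by linarith)) (by linarith), rfl⟩
      obtain ⟨K, hKpos, hKdef⟩ : ∃ K, 0 < K ∧ K = max (α * ρ + |β| + |γ| + δ / (R t₁)) 1 :=
        ⟨_, lt_of_lt_of_le one_pos (le_max_right _ _), rfl⟩
      apply slope_no_gap (fun t => -R t) (fun t => x t * y t)
        (fun t => -((-α * (R t - ρ) * (R t - ρ₂)) / (x t * y t)))
        (fun t => (α*(1/x t)+β*(1/y t)) * y t + x t * (γ*(1/x t)+δ*(1/y t)))
        t₁ k K (-ρ) hkpos hKpos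
        (mul_pos (hpos t₁ ht₁pos).1 (hpos t₁ ht₁pos).2)
        (fun t ht => mul_pos (hpos t (lt_of_lt_of_le ht₁pos ht)).1
          (hpos t (lt_of_lt_of_le ht₁pos ht)).2)
        (fun t ht => (hR' t (lt_of_lt_of_le ht₁pos ht)).neg)
        (fun t ht => hg' t (lt_of_lt_of_le ht₁pos ht))
        ?_ ?_ ?_
      · -- derivative bound
        intro t ht
        have htpos := lt_of_lt_of_le ht₁pos ht
        have hgpos := mul_pos (hpos t htpos).1 (hpos t htpos).2
        have h1 : R t ≤ L := hRleL t ht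
        have h2 : R t₁ ≤ R t := hRgeBot t ht
        have hnum : k ≤ -α * (R t - ρ) * (R t - ρ₂) := by
          rw [hkdef]
          nlinarith [mul_nonneg (mul_nonneg hα.le (by linarith : (0:ℝ) ≤ ρ - R t))
              (by linarith : (0:ℝ) ≤ R t - R t₁),
            mul_nonneg (mul_nonneg hα.le (by linarith : (0:ℝ) ≤ R t₁ - ρ₂))
              (by linarith : (0:ℝ) ≤ L - R t)]
        have h3 : k / (x t * y t) ≤ (-α * (R t - ρ) * (R t - ρ₂)) / (x t * y t) :=
          (div_le_div_iff_of_pos_right hgpos).mpr hnum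
        have h4 : -((-α * (R t - ρ) * (R t - ρ₂)) / (x t * y t)) ≤ -(k / (x t * y t)) := by
          linarith
        calc -((-α * (R t - ρ) * (R t - ρ₂)) / (x t * y t)) ≤ -(k / (x t * y t)) := h4
        _ = -k / (x t * y t) := by ring
      · -- growth bound
        intro t ht
        have htpos := lt_of_lt_of_le ht₁pos ht
        have h1 : R t₁ ≤ R t := hRgeBot t ht
        have h2 : R t ≤ ρ := hinv t ht
        have hb := hGbound t htpos (R t₁) ρ hRt₁pos h1 h2
        calc (α*(1/x t)+β*(1/y t)) * y t + x t * (γ*(1/x t)+δ*(1/y t))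
            ≤ α * ρ + |β| + |γ| + δ / (R t₁) := hb
        _ ≤ K := by rw [hKdef]; exact le_max_left _ _
      · -- lower bound on -R
        intro t ht
        have := hinv t ht
        show -ρ ≤ -R t
        linarith
    rw [hLeq] at htendR
    exact htendR
  · -- case: R always above ρ on [1, ∞)
    push_neg at hcase
    have hanti : AntitoneOn R (Set.Ici 1) := by
      apply antitoneOn_of_deriv_nonpos (convex_Ici 1) (hcontR 1 one_pos)
      · intro t ht
        rw [interior_Ici] at ht
        have htpos : (0:ℝ) < t := lt_trans one_pos ht
        exact ((hR' t htpos).differentiableAt).differentiableWithinAt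
      · intro t ht
        rw [interior_Ici] at ht
        have htpos : (0:ℝ) < t := lt_trans one_pos ht
        rw [(hR' t htpos).deriv]
        exact (hDneg t htpos (hcase t ht.le)).le
    obtain ⟨R₂, hR₂def⟩ : ∃ R₂ : ℝ → ℝ, R₂ = fun t => R (max t 1) := ⟨_, rfl⟩
    have hRR₂ : ∀ t ≥ (1:ℝ), R₂ t = R t := by
      intro t ht; rw [hR₂def]; simp only [max_eq_left ht]
    have hR₂anti : Antitone R₂ := by
      intro a b hab
      rw [hR₂def]
      exact hanti (le_max_right a 1) (le_max_right b 1) (max_le_max hab le_rfl)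
    have hR₂bdd : BddBelow (Set.range R₂) := by
      refine ⟨ρ, ?_⟩
      rintro v ⟨t, rfl⟩
      rw [hR₂def]
      exact (hcase _ (le_max_right t 1)).le
    have htend2 := tendsto_atTop_ciInf hR₂anti hR₂bdd
    obtain ⟨L, hLdef⟩ : ∃ L : ℝ, L = ⨅ t, R₂ t := ⟨_, rfl⟩
    rw [← hLdef] at htend2
    have htendR : Filter.Tendsto R Filter.atTop (nhds L) := by
      apply htend2.congr'
      filter_upwards [Filter.eventually_ge_atTop (1:ℝ)] with t ht
      exact hRR₂ t ht
    have hLge : ρ ≤ L := by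
      rw [hLdef]
      apply le_ciInf
      intro t
      rw [hR₂def]
      exact (hcase _ (le_max_right t 1)).le
    have hRgeL : ∀ t ≥ (1:ℝ), L ≤ R t := by
      intro t ht
      rw [← hRR₂ t ht, hLdef]
      exact ciInf_le hR₂bdd t
    have hRleTop : ∀ t ≥ (1:ℝ), R t ≤ R 1 := fun t ht => hanti Set.self_mem_Ici ht ht
    have hLeq : L = ρ := by
      by_contra hne
      have hLgt : ρ < L := lt_of_le_of_ne hLge (Ne.symm hne)
      obtain ⟨k, hkpos, hkdef⟩ : ∃ k, 0 < k ∧ k = α * (L - ρ) * (ρ - ρ₂) :=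
        ⟨_, by nlinarith, rfl⟩
      obtain ⟨K, hKpos, hKdef⟩ : ∃ K, 0 < K ∧ K = max (α * (R 1) + |β| + |γ| + δ / ρ) 1 :=
        ⟨_, lt_of_lt_of_le one_pos (le_max_right _ _), rfl⟩
      apply slope_no_gap R (fun t => x t * y t)
        (fun t => (-α * (R t - ρ) * (R t - ρ₂)) / (x t * y t))
        (fun t => (α*(1/x t)+β*(1/y t)) * y t + x t * (γ*(1/x t)+δ*(1/y t)))
        1 k K ρ hkpos hKpos
        (mul_pos (hpos 1 one_pos).1 (hpos 1 one_pos).2)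
        (fun t ht => mul_pos (hpos t (lt_of_lt_of_le one_pos ht)).1
          (hpos t (lt_of_lt_of_le one_pos ht)).2)
        (fun t ht => hR' t (lt_of_lt_of_le one_pos ht))
        (fun t ht => hg' t (lt_of_lt_of_le one_pos ht))
        ?_ ?_ ?_
      · intro t ht
        have htpos := lt_of_lt_of_le one_pos ht
        have hgpos := mul_pos (hpos t htpos).1 (hpos t htpos).2
        have h1 : L ≤ R t := hRgeL t ht
        have hnum : -α * (R t - ρ) * (R t - ρ₂) ≤ -k := by
          rw [hkdef]
          have h2 : ρ < R t := hcase t ht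
          nlinarith [mul_nonneg (mul_nonneg hα.le (by linarith : (0:ℝ) ≤ R t - ρ))
              (by linarith : (0:ℝ) ≤ R t - ρ),
            mul_nonneg (mul_nonneg hα.le (by linarith : (0:ℝ) ≤ ρ - ρ₂))
              (by linarith : (0:ℝ) ≤ R t - L)]
        have h3 : (-α * (R t - ρ) * (R t - ρ₂)) / (x t * y t) ≤ -k / (x t * y t) :=
          (div_le_div_iff_of_pos_right hgpos).mpr hnum
        exact h3
      · intro t ht
        have htpos := lt_of_lt_of_le one_pos ht
        have h1 : ρ ≤ R t := (hcase t ht).le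
        have h2 : R t ≤ R 1 := hRleTop t ht
        have hb := hGbound t htpos ρ (R 1) hρpos h1 h2
        calc (α*(1/x t)+β*(1/y t)) * y t + x t * (γ*(1/x t)+δ*(1/y t))
            ≤ α * (R 1) + |β| + |γ| + δ / ρ := hb
        _ ≤ K := by rw [hKdef]; exact le_max_left _ _
      · intro t ht
        exact (hcase t ht).le
    rw [hLeq] at htendR
    exact htendR
end

section
/- Assume hypothesis (H). For every (x₀, y₀) with x₀ > 0 and y₀ > 0 there exists a unique solution (x(·), y(·)) to the system starting at (x₀, y₀), and this solution satisfies x(t) > 0 and y(t) > 0 for all t ≥ 0. -/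
open MeasureTheory

section Helpers
open Filter Real Set intervalIntegral
open scoped Topology NNReal

section Aux

variable (α β γ δ x₀ y₀ : ℝ)

noncomputable def Dd : ℝ := Real.sqrt ((β - γ)^2 + 4*α*δ)
noncomputable def lamp : ℝ := ((β + γ) + Dd α β γ δ)/2
noncomputable def lamm : ℝ := ((β + γ) - Dd α β γ δ)/2
noncomputable def coefP : ℝ := ((lamp α β γ δ - γ)*x₀ + α*y₀)/(Dd α β γ δ)
noncomputable def coefR : ℝ := (δ*x₀ + (lamp α β γ δ - β)*y₀)/(Dd α β γ δ)
noncomputable def Xf (τ : ℝ) : ℝ :=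
  coefP α β γ δ x₀ y₀ * Real.exp (lamp α β γ δ * τ)
    + (x₀ - coefP α β γ δ x₀ y₀) * Real.exp (lamm α β γ δ * τ)
noncomputable def Yf (τ : ℝ) : ℝ :=
  coefR α β γ δ x₀ y₀ * Real.exp (lamp α β γ δ * τ)
    + (y₀ - coefR α β γ δ x₀ y₀) * Real.exp (lamm α β γ δ * τ)

variable {α β γ δ x₀ y₀ : ℝ}

lemma Dd_pos (hα : 0 < α) (hδ : 0 < δ) : 0 < Dd α β γ δ :=
  Real.sqrt_pos.2 (by positivity)

lemma Dd_sq (hα : 0 < α) (hδ : 0 < δ) : (Dd α β γ δ)^2 = (β - γ)^2 + 4*α*δ :=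
  Real.sq_sqrt (by positivity)

lemma lamp_sub_lamm : lamp α β γ δ - lamm α β γ δ = Dd α β γ δ := by
  simp [lamp, lamm]; ring

lemma lamp_add_lamm : lamp α β γ δ + lamm α β γ δ = β + γ := by
  simp [lamp, lamm]; ring

lemma lamp_mul_lamm (hα : 0 < α) (hδ : 0 < δ) :
    lamp α β γ δ * lamm α β γ δ = β*γ - α*δ := by
  have h := Dd_sq (α := α) (β := β) (γ := γ) (δ := δ) hα hδ
  simp only [lamp, lamm]
  nlinarith [h]

lemma Dd_gt_abs (hα : 0 < α) (hδ : 0 < δ) : |β - γ| < Dd α β γ δ := by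
  have h1 : 0 < Dd α β γ δ := Dd_pos hα hδ
  have h := Dd_sq (α := α) (β := β) (γ := γ) (δ := δ) hα hδ
  nlinarith [abs_nonneg (β - γ), sq_abs (β - γ)]

lemma gamma_lt_lamp (hα : 0 < α) (hδ : 0 < δ) : γ < lamp α β γ δ := by
  have := Dd_gt_abs (α := α) (β := β) (γ := γ) (δ := δ) hα hδ
  have := abs_lt.1 this
  simp only [lamp]; linarith [this.1]

lemma beta_lt_lamp (hα : 0 < α) (hδ : 0 < δ) : β < lamp α β γ δ := by
  have := Dd_gt_abs (α := α) (β := β) (γ := γ) (δ := δ) hα hδ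
  have := abs_lt.1 this
  simp only [lamp]; linarith [this.2]

lemma lamp_pos (hα : 0 < α) (hδ : 0 < δ) (hH : max β γ ≥ 0 ∨ β * γ < α * δ) :
    0 < lamp α β γ δ := by
  rcases hH with h | h
  · rcases max_cases β γ with ⟨h1, _⟩ | ⟨h1, _⟩
    · exact lt_of_le_of_lt (h1 ▸ h) (beta_lt_lamp hα hδ)
    · exact lt_of_le_of_lt (h1 ▸ h) (gamma_lt_lamp hα hδ)
  · by_contra hle
    push_neg at hle
    have hmm : lamm α β γ δ < lamp α β γ δ := by
      have := Dd_pos (α := α) (β := β) (γ := γ) (δ := δ) hα hδ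
      have := lamp_sub_lamm (α := α) (β := β) (γ := γ) (δ := δ)
      linarith
    have := lamp_mul_lamm hα hδ (β := β) (γ := γ)
    nlinarith

lemma coefP_pos (hα : 0 < α) (hδ : 0 < δ) (hx₀ : 0 < x₀) (hy₀ : 0 < y₀) :
    0 < coefP α β γ δ x₀ y₀ := by
  have h1 := gamma_lt_lamp (α := α) (β := β) (γ := γ) (δ := δ) hα hδ
  have h2 := Dd_pos (α := α) (β := β) (γ := γ) (δ := δ) hα hδ
  have : 0 < (lamp α β γ δ - γ)*x₀ + α*y₀ := by nlinarith
  exact div_pos this h2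

lemma coefR_pos (hα : 0 < α) (hδ : 0 < δ) (hx₀ : 0 < x₀) (hy₀ : 0 < y₀) :
    0 < coefR α β γ δ x₀ y₀ := by
  have h1 := beta_lt_lamp (α := α) (β := β) (γ := γ) (δ := δ) hα hδ
  have h2 := Dd_pos (α := α) (β := β) (γ := γ) (δ := δ) hα hδ
  have : 0 < δ*x₀ + (lamp α β γ δ - β)*y₀ := by nlinarith
  exact div_pos this h2

lemma Xf_zero : Xf α β γ δ x₀ y₀ 0 = x₀ := by simp [Xf]

lemma Yf_zero : Yf α β γ δ x₀ y₀ 0 = y₀ := by simp [Yf]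

lemma Xf_pos (hα : 0 < α) (hδ : 0 < δ) (hx₀ : 0 < x₀) (hy₀ : 0 < y₀)
    {τ : ℝ} (hτ : 0 ≤ τ) : 0 < Xf α β γ δ x₀ y₀ τ := by
  have hP := coefP_pos hα hδ hx₀ hy₀ (β := β) (γ := γ)
  have hmm : lamm α β γ δ ≤ lamp α β γ δ := by
    have := Dd_pos (α := α) (β := β) (γ := γ) (δ := δ) hα hδ
    have := lamp_sub_lamm (α := α) (β := β) (γ := γ) (δ := δ)
    linarith
  have hexp : Real.exp (lamm α β γ δ * τ) ≤ Real.exp (lamp α β γ δ * τ) :=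
    Real.exp_le_exp.2 (by nlinarith)
  have hx : x₀ * Real.exp (lamm α β γ δ * τ) ≤ Xf α β γ δ x₀ y₀ τ := by
    simp only [Xf]; nlinarith
  have : 0 < x₀ * Real.exp (lamm α β γ δ * τ) := by positivity
  linarith

lemma Yf_pos (hα : 0 < α) (hδ : 0 < δ) (hx₀ : 0 < x₀) (hy₀ : 0 < y₀)
    {τ : ℝ} (hτ : 0 ≤ τ) : 0 < Yf α β γ δ x₀ y₀ τ := by
  have hR := coefR_pos hα hδ hx₀ hy₀ (β := β) (γ := γ)
  have hmm : lamm α β γ δ ≤ lamp α β γ δ := by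
    have := Dd_pos (α := α) (β := β) (γ := γ) (δ := δ) hα hδ
    have := lamp_sub_lamm (α := α) (β := β) (γ := γ) (δ := δ)
    linarith
  have hexp : Real.exp (lamm α β γ δ * τ) ≤ Real.exp (lamp α β γ δ * τ) :=
    Real.exp_le_exp.2 (by nlinarith)
  have hy : y₀ * Real.exp (lamm α β γ δ * τ) ≤ Yf α β γ δ x₀ y₀ τ := by
    simp only [Yf]; nlinarith
  have : 0 < y₀ * Real.exp (lamm α β γ δ * τ) := by positivity
  linarith

end Aux

section Aux2
variable {α β γ δ x₀ y₀ : ℝ}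

lemma lamp_char (hα : 0 < α) (hδ : 0 < δ) :
    (lamp α β γ δ)^2 - (β+γ)*(lamp α β γ δ) + (β*γ - α*δ) = 0 := by
  have h := Dd_sq (α := α) (β := β) (γ := γ) (δ := δ) hα hδ
  simp only [lamp]; nlinarith [h]

lemma lamm_char (hα : 0 < α) (hδ : 0 < δ) :
    (lamm α β γ δ)^2 - (β+γ)*(lamm α β γ δ) + (β*γ - α*δ) = 0 := by
  have h := Dd_sq (α := α) (β := β) (γ := γ) (δ := δ) hα hδ
  simp only [lamm]; nlinarith [h]

lemma coefP_lamp (hα : 0 < α) (hδ : 0 < δ) :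
    coefP α β γ δ x₀ y₀ * lamp α β γ δ
      = β * coefP α β γ δ x₀ y₀ + α * coefR α β γ δ x₀ y₀ := by
  have hD := (Dd_pos (α := α) (β := β) (γ := γ) (δ := δ) hα hδ).ne'
  have hc := lamp_char (α := α) (β := β) (γ := γ) (δ := δ) hα hδ
  simp only [coefP, coefR]
  field_simp
  linear_combination x₀ * hc

lemma coefQ_lamm (hα : 0 < α) (hδ : 0 < δ) :
    (x₀ - coefP α β γ δ x₀ y₀) * lamm α β γ δ
      = β * (x₀ - coefP α β γ δ x₀ y₀) + α * (y₀ - coefR α β γ δ x₀ y₀) := by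
  have hD := (Dd_pos (α := α) (β := β) (γ := γ) (δ := δ) hα hδ).ne'
  have hc := lamm_char (α := α) (β := β) (γ := γ) (δ := δ) hα hδ
  have hsub : lamp α β γ δ - lamm α β γ δ = Dd α β γ δ := by simp [lamp, lamm]; ring
  have hadd : lamp α β γ δ + lamm α β γ δ = β + γ := by simp [lamp, lamm]; ring
  have h1 := coefP_lamp (α := α) (β := β) (γ := γ) (δ := δ) (x₀ := x₀) (y₀ := y₀) hα hδ
  have hPD : coefP α β γ δ x₀ y₀ * Dd α β γ δ = (lamp α β γ δ - γ)*x₀ + α*y₀ := by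
    rw [coefP, div_mul_cancel₀ _ hD]
  linear_combination (-1 : ℝ)*h1 + coefP α β γ δ x₀ y₀ * hsub + hPD + x₀ * hadd

lemma coefR_lamp (hα : 0 < α) (hδ : 0 < δ) :
    coefR α β γ δ x₀ y₀ * lamp α β γ δ
      = δ * coefP α β γ δ x₀ y₀ + γ * coefR α β γ δ x₀ y₀ := by
  have hD := (Dd_pos (α := α) (β := β) (γ := γ) (δ := δ) hα hδ).ne'
  have hc := lamp_char (α := α) (β := β) (γ := γ) (δ := δ) hα hδ
  simp only [coefP, coefR]
  field_simp
  linear_combination y₀ * hc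

lemma coefS_lamm (hα : 0 < α) (hδ : 0 < δ) :
    (y₀ - coefR α β γ δ x₀ y₀) * lamm α β γ δ
      = δ * (x₀ - coefP α β γ δ x₀ y₀) + γ * (y₀ - coefR α β γ δ x₀ y₀) := by
  have hD := (Dd_pos (α := α) (β := β) (γ := γ) (δ := δ) hα hδ).ne'
  have hc := lamm_char (α := α) (β := β) (γ := γ) (δ := δ) hα hδ
  have hsub : lamp α β γ δ - lamm α β γ δ = Dd α β γ δ := by simp [lamp, lamm]; ring
  have hadd : lamp α β γ δ + lamm α β γ δ = β + γ := by simp [lamp, lamm]; ring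
  have h1 := coefR_lamp (α := α) (β := β) (γ := γ) (δ := δ) (x₀ := x₀) (y₀ := y₀) hα hδ
  have hRD : coefR α β γ δ x₀ y₀ * Dd α β γ δ = δ*x₀ + (lamp α β γ δ - β)*y₀ := by
    rw [coefR, div_mul_cancel₀ _ hD]
  linear_combination (-1 : ℝ)*h1 + coefR α β γ δ x₀ y₀ * hsub + hRD + y₀ * hadd

lemma exp_hasDerivAt (c τ : ℝ) :
    HasDerivAt (fun τ => Real.exp (c * τ)) (c * Real.exp (c * τ)) τ := by
  have h := (Real.hasDerivAt_exp (c * τ)).comp τ ((hasDerivAt_id τ).const_mul c)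
  refine h.congr_deriv ?_
  simp only [id, mul_one]; ring

lemma Xf_hasDerivAt (hα : 0 < α) (hδ : 0 < δ) (τ : ℝ) :
    HasDerivAt (Xf α β γ δ x₀ y₀)
      (β * Xf α β γ δ x₀ y₀ τ + α * Yf α β γ δ x₀ y₀ τ) τ := by
  have h : HasDerivAt (Xf α β γ δ x₀ y₀)
      (coefP α β γ δ x₀ y₀ * (lamp α β γ δ * Real.exp (lamp α β γ δ * τ))
        + (x₀ - coefP α β γ δ x₀ y₀) * (lamm α β γ δ * Real.exp (lamm α β γ δ * τ))) τ :=
    ((exp_hasDerivAt _ τ).const_mul _).add ((exp_hasDerivAt _ τ).const_mul _)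
  convert h using 1
  have h1 := coefP_lamp (α := α) (β := β) (γ := γ) (δ := δ) (x₀ := x₀) (y₀ := y₀) hα hδ
  have h2 := coefQ_lamm (α := α) (β := β) (γ := γ) (δ := δ) (x₀ := x₀) (y₀ := y₀) hα hδ
  simp only [Xf, Yf]
  linear_combination (-(Real.exp (lamp α β γ δ * τ))) * h1 + (-(Real.exp (lamm α β γ δ * τ))) * h2

lemma Yf_hasDerivAt (hα : 0 < α) (hδ : 0 < δ) (τ : ℝ) :
    HasDerivAt (Yf α β γ δ x₀ y₀)
      (δ * Xf α β γ δ x₀ y₀ τ + γ * Yf α β γ δ x₀ y₀ τ) τ := by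
  have h : HasDerivAt (Yf α β γ δ x₀ y₀)
      (coefR α β γ δ x₀ y₀ * (lamp α β γ δ * Real.exp (lamp α β γ δ * τ))
        + (y₀ - coefR α β γ δ x₀ y₀) * (lamm α β γ δ * Real.exp (lamm α β γ δ * τ))) τ :=
    ((exp_hasDerivAt _ τ).const_mul _).add ((exp_hasDerivAt _ τ).const_mul _)
  convert h using 1
  have h1 := coefR_lamp (α := α) (β := β) (γ := γ) (δ := δ) (x₀ := x₀) (y₀ := y₀) hα hδ
  have h2 := coefS_lamm (α := α) (β := β) (γ := γ) (δ := δ) (x₀ := x₀) (y₀ := y₀) hα hδ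
  simp only [Xf, Yf]
  linear_combination (-(Real.exp (lamp α β γ δ * τ))) * h1 + (-(Real.exp (lamm α β γ δ * τ))) * h2

lemma Xf_continuous : Continuous (Xf α β γ δ x₀ y₀) := by
  unfold Xf; fun_prop

lemma Yf_continuous : Continuous (Yf α β γ δ x₀ y₀) := by
  unfold Yf; fun_prop

end Aux2

section Aux3
variable (α β γ δ x₀ y₀ lp lm P R : ℝ)

-- abstract version: F τ = P exp(lp τ) + Q exp(lm τ)
lemma expComb_tendsto (hlp : 0 < lp) (hlm : lm < lp) (hP : 0 < P) (Q : ℝ) :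
    Tendsto (fun τ => P * Real.exp (lp * τ) + Q * Real.exp (lm * τ)) atTop atTop := by
  have heq : (fun τ => P * Real.exp (lp * τ) + Q * Real.exp (lm * τ))
      = fun τ => Real.exp (lp * τ) * (P + Q * Real.exp ((lm - lp) * τ)) := by
    funext τ
    have : Real.exp (lp * τ) * Real.exp ((lm - lp) * τ) = Real.exp (lm * τ) := by
      rw [← Real.exp_add]; ring_nf
    rw [mul_add]
    linear_combination Q * this.symm
  rw [heq]
  have h1 : Tendsto (fun τ : ℝ => Real.exp (lp * τ)) atTop atTop :=
    Real.tendsto_exp_atTop.comp (Tendsto.const_mul_atTop hlp tendsto_id)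
  have h2 : Tendsto (fun τ : ℝ => P + Q * Real.exp ((lm - lp) * τ)) atTop (𝓝 P) := by
    have h3 : Tendsto (fun τ : ℝ => Real.exp ((lm - lp) * τ)) atTop (𝓝 0) :=
      Real.tendsto_exp_atBot.comp (Tendsto.const_mul_atTop_of_neg (by linarith) tendsto_id)
    have := (tendsto_const_nhds (x := P) (f := atTop)).add
      ((tendsto_const_nhds (x := Q) (f := atTop)).mul h3)
    simpa using this
  exact Tendsto.atTop_mul_pos hP h1 h2

end Aux3

section Aux4
variable {F : ℝ → ℝ}

noncomputable def tt (F : ℝ → ℝ) (τ : ℝ) : ℝ := ∫ s in (0:ℝ)..τ, F s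

lemma tt_hasDerivAt (hF : Continuous F) (τ : ℝ) : HasDerivAt (tt F) (F τ) τ :=
  integral_hasDerivAt_right (hF.intervalIntegrable _ _)
    (hF.stronglyMeasurableAtFilter _ _) hF.continuousAt

lemma tt_continuous (hF : Continuous F) : Continuous (tt F) :=
  continuous_iff_continuousAt.2 fun τ => (tt_hasDerivAt hF τ).continuousAt

lemma tt_zero : tt F 0 = 0 := integral_same

lemma tt_strictMonoOn (hF : Continuous F) (hFpos : ∀ τ ≥ (0:ℝ), 0 < F τ) :
    StrictMonoOn (tt F) (Ici 0) := by
  apply strictMonoOn_of_deriv_pos (convex_Ici 0) (tt_continuous hF).continuousOn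
  intro τ hτ
  rw [interior_Ici] at hτ
  rw [(tt_hasDerivAt hF τ).deriv]
  exact hFpos τ (le_of_lt hτ)

lemma tt_tendsto_atTop (hF : Continuous F) (hFpos : ∀ τ ≥ (0:ℝ), 0 < F τ)
    (hFtop : Tendsto F atTop atTop) : Tendsto (tt F) atTop atTop := by
  obtain ⟨τ₀, hτ₀⟩ := (hFtop.eventually_ge_atTop 1).exists_forall_of_atTop
  set τ₁ := max τ₀ 0 with hτ₁def
  have key : ∀ τ ≥ τ₁, tt F τ ≥ τ - τ₁ := by
    intro τ hτ
    have h0 : (0:ℝ) ≤ τ₁ := le_max_right _ _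
    have hi1 : IntervalIntegrable F volume 0 τ₁ := hF.intervalIntegrable _ _
    have hi2 : IntervalIntegrable F volume τ₁ τ := hF.intervalIntegrable _ _
    have hsplit : tt F τ = (∫ s in (0:ℝ)..τ₁, F s) + ∫ s in τ₁..τ, F s :=
      (integral_add_adjacent_intervals hi1 hi2).symm
    have h1 : (0:ℝ) ≤ ∫ s in (0:ℝ)..τ₁, F s := by
      apply intervalIntegral.integral_nonneg h0
      intro s hs; exact (hFpos s hs.1).le
    have h2 : τ - τ₁ ≤ ∫ s in τ₁..τ, F s := by
      have : ∫ s in τ₁..τ, (1:ℝ) ≤ ∫ s in τ₁..τ, F s := by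
        apply intervalIntegral.integral_mono_on hτ (intervalIntegrable_const) hi2
        intro s hs
        exact hτ₀ s (le_trans (le_max_left _ _) hs.1)
      simpa using this
    rw [hsplit]; linarith
  apply tendsto_atTop_mono' _ _ (tendsto_atTop_add_const_right atTop (-τ₁) tendsto_id)
  filter_upwards [eventually_ge_atTop τ₁] with τ hτ
  have := key τ hτ
  simpa [sub_eq_add_neg] using this

lemma tt_surj (hF : Continuous F) (hFpos : ∀ τ ≥ (0:ℝ), 0 < F τ)
    (hFtop : Tendsto F atTop atTop) : ∀ u ≥ (0:ℝ), ∃ τ ≥ (0:ℝ), tt F τ = u := by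
  intro u hu
  obtain ⟨b, hb⟩ := ((tt_tendsto_atTop hF hFpos hFtop).eventually_ge_atTop u).exists_forall_of_atTop
  set b₁ := max b 0 with hb₁
  have hbu : u ≤ tt F b₁ := hb b₁ (le_max_left _ _)
  have h0b : (0:ℝ) ≤ b₁ := le_max_right _ _
  have := intermediate_value_Icc h0b (tt_continuous hF).continuousOn
  have hmem : u ∈ Icc (tt F 0) (tt F b₁) := by
    rw [tt_zero]; exact ⟨hu, hbu⟩
  obtain ⟨τ, hτ, hτu⟩ := this hmem
  exact ⟨τ, hτ.1, hτu⟩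

open Classical in
/-- inverse of `tt F` on `[0, ∞)` -/
noncomputable def ss (F : ℝ → ℝ) (u : ℝ) : ℝ :=
  if h : ∃ τ ≥ (0:ℝ), tt F τ = u then h.choose else 0

lemma ss_spec (hF : Continuous F) (hFpos : ∀ τ ≥ (0:ℝ), 0 < F τ)
    (hFtop : Tendsto F atTop atTop) {u : ℝ} (hu : 0 ≤ u) :
    0 ≤ ss F u ∧ tt F (ss F u) = u := by
  have h := tt_surj hF hFpos hFtop u hu
  rw [ss]
  rw [dif_pos h]
  exact ⟨h.choose_spec.1, h.choose_spec.2⟩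


variable (hF : Continuous F) (hFpos : ∀ τ ≥ (0:ℝ), 0 < F τ)
    (hFtop : Tendsto F atTop atTop)
include hF hFpos hFtop

lemma tt_lt_tt {a b : ℝ} (ha : 0 ≤ a) (hb : 0 ≤ b) (h : tt F a < tt F b) : a < b := by
  by_contra hle
  push_neg at hle
  rcases eq_or_lt_of_le hle with h1 | h1
  · rw [h1] at h; exact lt_irrefl _ h
  · exact absurd (tt_strictMonoOn hF hFpos hb ha h1) (not_lt.2 h.le)

lemma ss_tt {τ : ℝ} (hτ : 0 ≤ τ) : ss F (tt F τ) = τ := by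
  have htt0 : 0 ≤ tt F τ := by
    rw [← tt_zero (F := F)]
    rcases eq_or_lt_of_le hτ with h | h
    · rw [h]
    · exact (tt_strictMonoOn hF hFpos (Set.mem_Ici.2 le_rfl) hτ h).le
  obtain ⟨h1, h2⟩ := ss_spec hF hFpos hFtop htt0
  exact (tt_strictMonoOn hF hFpos).injOn h1 hτ h2

lemma ss_zero : ss F 0 = 0 := by
  have := ss_tt hF hFpos hFtop (le_refl (0:ℝ))
  rwa [tt_zero] at this

lemma ss_continuousOn : ContinuousOn (ss F) (Ici 0) := by
  intro u hu
  rw [Metric.continuousWithinAt_iff]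
  intro ε hε
  obtain ⟨hτ0, hτtt⟩ := ss_spec hF hFpos hFtop hu
  set τ := ss F u with hτdef
  have hb0 : (0:ℝ) ≤ τ + ε/2 := by linarith
  have hbu : u < tt F (τ + ε/2) := by
    have := tt_strictMonoOn hF hFpos hτ0 hb0 (by linarith)
    rwa [hτtt] at this
  rcases lt_or_ge (τ - ε/2) 0 with hcase | hcase
  · refine ⟨tt F (τ + ε/2) - u, by linarith, ?_⟩
    intro u' hu' hdist
    rw [Real.dist_eq] at hdist ⊢
    obtain ⟨hσ0, hσtt⟩ := ss_spec hF hFpos hFtop hu'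
    have h1 : tt F (ss F u') < tt F (τ + ε/2) := by
      rw [hσtt]; cases' abs_lt.1 hdist with h h; linarith
    have h2 : ss F u' < τ + ε/2 := tt_lt_tt hF hFpos hFtop hσ0 hb0 h1
    rw [abs_lt]; constructor <;> linarith
  · have hau : tt F (τ - ε/2) < u := by
      have := tt_strictMonoOn hF hFpos hcase hτ0 (by linarith)
      rwa [hτtt] at this
    refine ⟨min (u - tt F (τ - ε/2)) (tt F (τ + ε/2) - u), by simp; constructor <;> linarith, ?_⟩
    intro u' hu' hdist
    rw [Real.dist_eq] at hdist ⊢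
    obtain ⟨hσ0, hσtt⟩ := ss_spec hF hFpos hFtop hu'
    have hd1 := lt_of_lt_of_le hdist (min_le_left _ _)
    have hd2 := lt_of_lt_of_le hdist (min_le_right _ _)
    have h1 : tt F (ss F u') < tt F (τ + ε/2) := by
      rw [hσtt]; cases' abs_lt.1 hd2 with h h; linarith
    have h1' : tt F (τ - ε/2) < tt F (ss F u') := by
      rw [hσtt]; cases' abs_lt.1 hd1 with h h; linarith
    have h2 : ss F u' < τ + ε/2 := tt_lt_tt hF hFpos hFtop hσ0 hb0 h1
    have h2' : τ - ε/2 < ss F u' := tt_lt_tt hF hFpos hFtop hcase hσ0 h1'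
    rw [abs_lt]; constructor <;> linarith

lemma ss_hasDerivAt {u : ℝ} (hu : 0 < u) :
    HasDerivAt (ss F) (F (ss F u))⁻¹ u := by
  have hmem : Ici (0:ℝ) ∈ 𝓝 u := mem_of_superset (Ioi_mem_nhds hu) Ioi_subset_Ici_self
  have hcont : ContinuousAt (ss F) u :=
    (ss_continuousOn hF hFpos hFtop).continuousAt hmem
  have hfg : ∀ᶠ y in 𝓝 u, tt F (ss F y) = y := by
    filter_upwards [Ioi_mem_nhds hu] with y hy
    exact (ss_spec hF hFpos hFtop hy.le).2
  exact HasDerivAt.of_local_left_inverse hcont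
    (tt_hasDerivAt hF (ss F u))
    (ne_of_gt (hFpos _ (ss_spec hF hFpos hFtop hu.le).1)) hfg

end Aux4

lemma integral_eq_of_deriv {x y : ℝ → ℝ} {a b x₀' : ℝ}
    (hxc : ContinuousOn x (Ici 0)) (hyc : ContinuousOn y (Ici 0))
    (hxpos : ∀ s ≥ (0:ℝ), 0 < x s) (hypos : ∀ s ≥ (0:ℝ), 0 < y s)
    (hx0 : x 0 = x₀')
    (hder : ∀ s > (0:ℝ), HasDerivAt x (a*(1/x s)+b*(1/y s)) s) :
    ∀ t ≥ (0:ℝ), x t = x₀' + a * (∫ s in (0:ℝ)..t, 1/x s) + b * (∫ s in (0:ℝ)..t, 1/y s) := by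
  intro t ht
  rcases eq_or_lt_of_le ht with h0 | ht
  · simp [← h0, ← hx0]
  set f : ℝ → ℝ := fun s => a*(1/x s) + b*(1/y s) with hfdef
  have hIcc : Icc (0:ℝ) t ⊆ Ici 0 := Icc_subset_Ici_self
  have h1xc : ContinuousOn (fun s => 1/x s) (Icc 0 t) := by
    apply ContinuousOn.div continuousOn_const (hxc.mono hIcc)
    intro s hs; exact (hxpos s hs.1).ne'
  have h1yc : ContinuousOn (fun s => 1/y s) (Icc 0 t) := by
    apply ContinuousOn.div continuousOn_const (hyc.mono hIcc)
    intro s hs; exact (hypos s hs.1).ne'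
  have hfc : ContinuousOn f (Icc 0 t) := (h1xc.const_smul a).add (h1yc.const_smul b)
  have hfint : ∀ c d : ℝ, c ∈ Icc (0:ℝ) t → d ∈ Icc (0:ℝ) t →
      IntervalIntegrable f volume c d := by
    intro c d hc hd
    exact (hfc.mono (uIcc_subset_Icc hc hd)).intervalIntegrable
  -- step A and B
  have hAB : ∀ ε ∈ Ioc (0:ℝ) t,
      x t - x ε = (∫ s in (0:ℝ)..t, f s) - ∫ s in (0:ℝ)..ε, f s := by
    intro ε hε
    have hA : ∫ s in ε..t, f s = x t - x ε := by
      apply intervalIntegral.integral_eq_sub_of_hasDerivAt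
      · intro s hs
        rw [uIcc_of_le hε.2] at hs
        exact hder s (lt_of_lt_of_le hε.1 hs.1)
      · exact hfint ε t ⟨hε.1.le, hε.2⟩ ⟨ht.le, le_rfl⟩
    have hB : (∫ s in (0:ℝ)..ε, f s) + ∫ s in ε..t, f s = ∫ s in (0:ℝ)..t, f s :=
      integral_add_adjacent_intervals
        (hfint 0 ε ⟨le_rfl, ht.le⟩ ⟨hε.1.le, hε.2⟩)
        (hfint ε t ⟨hε.1.le, hε.2⟩ ⟨ht.le, le_rfl⟩)
    rw [← hA]; linarith
  -- filter
  have hne : (𝓝[Ioc (0:ℝ) t] 0).NeBot := by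
    apply mem_closure_iff_nhdsWithin_neBot.1
    rw [closure_Ioc ht.ne]
    exact left_mem_Icc.2 ht.le
  -- bound
  obtain ⟨C, hC⟩ := (isCompact_Icc (a := (0:ℝ)) (b := t)).exists_bound_of_continuousOn hfc
  have hC0 : 0 ≤ C := le_trans (norm_nonneg (f 0)) (hC 0 (left_mem_Icc.2 ht.le))
  have hsmall : Tendsto (fun ε => ∫ s in (0:ℝ)..ε, f s) (𝓝[Ioc (0:ℝ) t] 0) (𝓝 0) := by
    apply squeeze_zero_norm' (a := fun ε => C * ε)
    · filter_upwards [self_mem_nhdsWithin] with ε hε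
      have := intervalIntegral.norm_integral_le_of_norm_le_const (C := C)
        (f := f) (a := 0) (b := ε) ?_
      · rwa [sub_zero, abs_of_pos hε.1] at this
      · intro s hs
        rw [uIoc_of_le hε.1.le] at hs
        exact hC s ⟨hs.1.le, le_trans hs.2 hε.2⟩
    · have : Tendsto (fun ε : ℝ => C * ε) (𝓝 0) (𝓝 (C * 0)) :=
        (continuous_const.mul continuous_id).tendsto 0
      rw [mul_zero] at this
      exact this.mono_left nhdsWithin_le_nhds
  have hxlim : Tendsto (fun ε => x t - x ε) (𝓝[Ioc (0:ℝ) t] 0) (𝓝 (x t - x₀')) := by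
    have hx0' : Tendsto x (𝓝[Ioc (0:ℝ) t] 0) (𝓝 x₀') := by
      have := (hxc 0 Set.self_mem_Ici).mono_left
        (nhdsWithin_mono 0 (fun s (hs : s ∈ Ioc (0:ℝ) t) => hs.1.le))
      rwa [hx0] at this
    exact tendsto_const_nhds.sub hx0'
  have hxlim2 : Tendsto (fun ε => x t - x ε) (𝓝[Ioc (0:ℝ) t] 0)
      (𝓝 ((∫ s in (0:ℝ)..t, f s) - 0)) := by
    apply Tendsto.congr' _ (tendsto_const_nhds.sub hsmall)
    filter_upwards [self_mem_nhdsWithin] with ε hε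
    exact (hAB ε hε).symm
  have hkey : x t - x₀' = (∫ s in (0:ℝ)..t, f s) - 0 := tendsto_nhds_unique hxlim hxlim2
  rw [sub_zero] at hkey
  have hsplit : (∫ s in (0:ℝ)..t, f s)
      = a * (∫ s in (0:ℝ)..t, 1/x s) + b * (∫ s in (0:ℝ)..t, 1/y s) := by
    have hix : IntervalIntegrable (fun s => a * (1/x s)) volume 0 t := by
      apply ContinuousOn.intervalIntegrable
      rw [uIcc_of_le ht.le]
      exact h1xc.const_smul a
    have hiy : IntervalIntegrable (fun s => b * (1/y s)) volume 0 t := by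
      apply ContinuousOn.intervalIntegrable
      rw [uIcc_of_le ht.le]
      exact h1yc.const_smul b
    rw [hfdef]
    rw [intervalIntegral.integral_add hix hiy, intervalIntegral.integral_const_mul,
      intervalIntegral.integral_const_mul]
  rw [hsplit] at hkey
  linarith

noncomputable section

def vf (α β γ δ : ℝ) (p : ℝ × ℝ) : ℝ × ℝ :=
  (α * (1/p.1) + β * (1/p.2), γ * (1/p.1) + δ * (1/p.2))

lemma inv_diff_bound {m a b : ℝ} (hm : 0 < m) (ha : m ≤ a) (hb : m ≤ b) :
    |1/a - 1/b| ≤ |a - b| / m^2 := by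
  have ha0 : 0 < a := lt_of_lt_of_le hm ha
  have hb0 : 0 < b := lt_of_lt_of_le hm hb
  have h1 : 1/a - 1/b = (b - a) / (a * b) := by field_simp
  rw [h1, abs_div, abs_of_pos (by positivity : (0:ℝ) < a * b), abs_sub_comm]
  gcongr
  nlinarith

lemma comp_bound {c1 c2 m : ℝ} {p q : ℝ × ℝ} (hm : 0 < m)
    (hp : p ∈ Ici m ×ˢ Ici m) (hq : q ∈ Ici m ×ˢ Ici m)
    (hd1 : |p.1 - q.1| ≤ dist p q) (hd2 : |p.2 - q.2| ≤ dist p q) :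
    |c1 * (1/p.1) + c2 * (1/p.2) - (c1 * (1/q.1) + c2 * (1/q.2))|
      ≤ (|c1| + |c2|) / m^2 * dist p q := by
  have key1 := inv_diff_bound hm hp.1 hq.1
  have key2 := inv_diff_bound hm hp.2 hq.2
  have heq : c1 * (1/p.1) + c2 * (1/p.2) - (c1 * (1/q.1) + c2 * (1/q.2))
      = c1 * (1/p.1 - 1/q.1) + c2 * (1/p.2 - 1/q.2) := by ring
  rw [heq]
  refine le_trans (abs_add_le _ _) ?_
  rw [abs_mul, abs_mul]
  have h1 : |c1| * |1/p.1 - 1/q.1| ≤ |c1| * (dist p q / m^2) := by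
    refine mul_le_mul_of_nonneg_left (le_trans key1 ?_) (abs_nonneg _)
    gcongr
  have h2 : |c2| * |1/p.2 - 1/q.2| ≤ |c2| * (dist p q / m^2) := by
    refine mul_le_mul_of_nonneg_left (le_trans key2 ?_) (abs_nonneg _)
    gcongr
  have hm2 : (0:ℝ) < m^2 := by positivity
  calc |c1| * |1/p.1 - 1/q.1| + |c2| * |1/p.2 - 1/q.2|
      ≤ |c1| * (dist p q / m^2) + |c2| * (dist p q / m^2) := add_le_add h1 h2
    _ = (|c1| + |c2|) / m^2 * dist p q := by ring

lemma vf_lipschitz (α β γ δ m : ℝ) (hm : 0 < m) :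
    LipschitzOnWith (Real.toNNReal ((|α| + |β| + |γ| + |δ|)/m^2)) (vf α β γ δ)
      (Ici m ×ˢ Ici m) := by
  rw [lipschitzOnWith_iff_dist_le_mul]
  intro p hp q hq
  have hKcoe : ((Real.toNNReal ((|α| + |β| + |γ| + |δ|)/m^2) : ℝ≥0) : ℝ)
      = (|α| + |β| + |γ| + |δ|)/m^2 := Real.coe_toNNReal _ (by positivity)
  rw [hKcoe]
  have hd1 : |p.1 - q.1| ≤ dist p q := by
    rw [Prod.dist_eq, Real.dist_eq]; exact le_max_left _ _
  have hd2 : |p.2 - q.2| ≤ dist p q := by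
    rw [Prod.dist_eq, Real.dist_eq]; exact le_max_right _ _
  have hdn : (0:ℝ) ≤ dist p q := dist_nonneg
  have hm2 : (0:ℝ) < m^2 := by positivity
  rw [vf, vf, Prod.dist_eq]
  apply max_le
  · rw [Real.dist_eq]
    refine le_trans (comp_bound hm hp hq hd1 hd2) ?_
    apply mul_le_mul_of_nonneg_right _ hdn
    exact (div_le_div_iff_of_pos_right hm2).2 (by linarith [abs_nonneg γ, abs_nonneg δ])
  · rw [Real.dist_eq]
    refine le_trans (comp_bound hm hp hq hd1 hd2) ?_
    apply mul_le_mul_of_nonneg_right _ hdn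
    exact (div_le_div_iff_of_pos_right hm2).2 (by linarith [abs_nonneg α, abs_nonneg β])

end

lemma ftc_inner {z : ℝ → ℝ} {t T : ℝ} (ht0 : 0 ≤ t) (htT : t < T)
    (hzc : ContinuousOn z (Ici 0)) (hzpos : ∀ s ∈ Icc (0:ℝ) T, 0 < z s)
    (hzint : IntervalIntegrable (fun s => 1 / z s) volume 0 t) :
    HasDerivWithinAt (fun u => ∫ s in (0:ℝ)..u, 1 / z s) (1 / z t) (Ici t) t := by
  apply intervalIntegral.integral_hasDerivWithinAt_right (t := Ioi t) hzint
  · refine ⟨Icc t T, ?_, ?_⟩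
    · rw [mem_nhdsWithin]
      exact ⟨Iio T, isOpen_Iio, htT, fun s hs => ⟨hs.2.le, hs.1.le⟩⟩
    · apply ContinuousOn.aestronglyMeasurable _ measurableSet_Icc
      apply continuousOn_const.div
        (hzc.mono (fun s hs => le_trans ht0 hs.1))
      exact fun s hs => (hzpos s ⟨le_trans ht0 hs.1, hs.2⟩).ne'
  · have h := hzc t (mem_Ici.2 ht0)
    exact (continuousWithinAt_const.div h
      (hzpos t ⟨ht0, htT.le⟩).ne').mono (fun s hs => le_trans ht0 (le_of_lt hs))

lemma sol_hasDerivWithin {α β γ δ x₀ y₀ : ℝ} {x y : ℝ → ℝ} {T : ℝ}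
    (hsol : IsSolution α β γ δ x₀ y₀ x y)
    (hpos : ∀ s ∈ Icc (0:ℝ) T, 0 < x s ∧ 0 < y s) :
    ∀ t ∈ Ico (0:ℝ) T, HasDerivWithinAt (fun s => (x s, y s))
      (vf α β γ δ (x t, y t)) (Ici t) t := by
  obtain ⟨hxc, hyc, hnn, hx0, hy0, hmain⟩ := hsol
  intro t ht
  obtain ⟨ht0, htT⟩ := ht
  have hdx := ftc_inner ht0 htT hxc (fun s hs => (hpos s hs).1) (hmain t ht0).2.2.1
  have hdy := ftc_inner ht0 htT hyc (fun s hs => (hpos s hs).2) (hmain t ht0).2.2.2.1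
  have hGx : HasDerivWithinAt
      (fun u => x₀ + α * (∫ s in (0:ℝ)..u, 1 / x s) + β * (∫ s in (0:ℝ)..u, 1 / y s))
      (α * (1 / x t) + β * (1 / y t)) (Ici t) t :=
    ((hdx.const_mul α).const_add x₀).add (hdy.const_mul β)
  have hGy : HasDerivWithinAt
      (fun u => y₀ + γ * (∫ s in (0:ℝ)..u, 1 / x s) + δ * (∫ s in (0:ℝ)..u, 1 / y s))
      (γ * (1 / x t) + δ * (1 / y t)) (Ici t) t :=
    ((hdx.const_mul γ).const_add y₀).add (hdy.const_mul δ)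
  have hx' : HasDerivWithinAt x (α * (1 / x t) + β * (1 / y t)) (Ici t) t := by
    apply hGx.congr
    · intro s hs
      exact (hmain s (le_trans ht0 hs)).2.2.2.2.1
    · exact (hmain t ht0).2.2.2.2.1
  have hy' : HasDerivWithinAt y (γ * (1 / x t) + δ * (1 / y t)) (Ici t) t := by
    apply hGy.congr
    · intro s hs
      exact (hmain s (le_trans ht0 hs)).2.2.2.2.2
    · exact (hmain t ht0).2.2.2.2.2
  exact hx'.prodMk hy'

lemma sol_eqOn {α β γ δ x₀ y₀ : ℝ} {x y x' y' : ℝ → ℝ} {T : ℝ} (hT : 0 ≤ T)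
    (hsol : IsSolution α β γ δ x₀ y₀ x y) (hsol' : IsSolution α β γ δ x₀ y₀ x' y')
    (hpos : ∀ s ∈ Icc (0:ℝ) T, 0 < x s ∧ 0 < y s)
    (hpos' : ∀ s ∈ Icc (0:ℝ) T, 0 < x' s ∧ 0 < y' s) :
    ∀ t ∈ Icc (0:ℝ) T, x t = x' t ∧ y t = y' t := by
  have hne : (Icc (0:ℝ) T).Nonempty := nonempty_Icc.2 hT
  have hIci : Icc (0:ℝ) T ⊆ Ici 0 := Icc_subset_Ici_self
  obtain ⟨z1, hz1, hz1min⟩ := isCompact_Icc.exists_isMinOn hne (hsol.1.mono hIci)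
  obtain ⟨z2, hz2, hz2min⟩ := isCompact_Icc.exists_isMinOn hne (hsol.2.1.mono hIci)
  obtain ⟨z3, hz3, hz3min⟩ := isCompact_Icc.exists_isMinOn hne (hsol'.1.mono hIci)
  obtain ⟨z4, hz4, hz4min⟩ := isCompact_Icc.exists_isMinOn hne (hsol'.2.1.mono hIci)
  set m : ℝ := min (min (x z1) (y z2)) (min (x' z3) (y' z4)) with hmdef
  have hm : 0 < m := by
    apply lt_min (lt_min ((hpos z1 hz1).1) ((hpos z2 hz2).2))
      (lt_min ((hpos' z3 hz3).1) ((hpos' z4 hz4).2))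
  have hxb : ∀ s ∈ Icc (0:ℝ) T, m ≤ x s := fun s hs =>
    le_trans (le_trans (min_le_left _ _) (min_le_left _ _)) (hz1min hs)
  have hyb : ∀ s ∈ Icc (0:ℝ) T, m ≤ y s := fun s hs =>
    le_trans (le_trans (min_le_left _ _) (min_le_right _ _)) (hz2min hs)
  have hxb' : ∀ s ∈ Icc (0:ℝ) T, m ≤ x' s := fun s hs =>
    le_trans (le_trans (min_le_right _ _) (min_le_left _ _)) (hz3min hs)
  have hyb' : ∀ s ∈ Icc (0:ℝ) T, m ≤ y' s := fun s hs =>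
    le_trans (le_trans (min_le_right _ _) (min_le_right _ _)) (hz4min hs)
  have heq : EqOn (fun s => (x s, y s)) (fun s => (x' s, y' s)) (Icc 0 T) := by
    apply ODE_solution_unique_of_mem_Icc_right
      (v := fun _ p => vf α β γ δ p) (s := fun _ => Ici m ×ˢ Ici m)
      (fun _ _ => vf_lipschitz α β γ δ m hm)
    · exact (hsol.1.mono hIci).prodMk (hsol.2.1.mono hIci)
    · exact sol_hasDerivWithin hsol hpos
    · intro s hs
      exact ⟨hxb s (Ico_subset_Icc_self hs), hyb s (Ico_subset_Icc_self hs)⟩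
    · exact (hsol'.1.mono hIci).prodMk (hsol'.2.1.mono hIci)
    · exact sol_hasDerivWithin hsol' hpos'
    · intro s hs
      exact ⟨hxb' s (Ico_subset_Icc_self hs), hyb' s (Ico_subset_Icc_self hs)⟩
    · simp only [hsol.2.2.2.1, hsol.2.2.2.2.1, hsol'.2.2.2.1, hsol'.2.2.2.2.1]
  intro t ht
  have := heq ht
  simp only [Prod.mk.injEq] at this
  exact this

end Helpers

/-- Under (H), for every `(x₀, y₀)` with `x₀ > 0`, `y₀ > 0` there exists a
unique solution starting at `(x₀, y₀)`, and it satisfies `x(t) > 0` and `y(t) > 0` for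
all `t ≥ 0`. -/
theorem existence_uniqueness_interior (α β γ δ : ℝ) (hα : 0 < α) (hδ : 0 < δ)
    (hH : max β γ ≥ 0 ∨ β * γ < α * δ)
    (x₀ y₀ : ℝ) (hx₀ : 0 < x₀) (hy₀ : 0 < y₀) :
    ∃ x y : ℝ → ℝ, IsSolution α β γ δ x₀ y₀ x y ∧
      (∀ t ≥ (0:ℝ), 0 < x t ∧ 0 < y t) ∧
      ∀ x' y' : ℝ → ℝ, IsSolution α β γ δ x₀ y₀ x' y' →
        ∀ t ≥ (0:ℝ), x' t = x t ∧ y' t = y t := by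
  classical
  set X : ℝ → ℝ := Xf α β γ δ x₀ y₀ with hXdef
  set Y : ℝ → ℝ := Yf α β γ δ x₀ y₀ with hYdef
  set F : ℝ → ℝ := fun τ => X τ * Y τ with hFdef
  have hXc : Continuous X := Xf_continuous
  have hYc : Continuous Y := Yf_continuous
  have hXpos : ∀ τ ≥ (0:ℝ), 0 < X τ := fun τ hτ => Xf_pos hα hδ hx₀ hy₀ hτ
  have hYpos : ∀ τ ≥ (0:ℝ), 0 < Y τ := fun τ hτ => Yf_pos hα hδ hx₀ hy₀ hτ
  have hF : Continuous F := hXc.mul hYc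
  have hFpos : ∀ τ ≥ (0:ℝ), 0 < F τ := fun τ hτ => mul_pos (hXpos τ hτ) (hYpos τ hτ)
  have hlm_lt : lamm α β γ δ < lamp α β γ δ := by
    have h1 := Dd_pos (α := α) (β := β) (γ := γ) (δ := δ) hα hδ
    have h2 := lamp_sub_lamm (α := α) (β := β) (γ := γ) (δ := δ)
    linarith
  have hXtop : Filter.Tendsto X Filter.atTop Filter.atTop := by
    have := expComb_tendsto (lamp α β γ δ) (lamm α β γ δ) (coefP α β γ δ x₀ y₀)
      (lamp_pos hα hδ hH) hlm_lt (coefP_pos hα hδ hx₀ hy₀) (x₀ - coefP α β γ δ x₀ y₀)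
    exact this
  have hYtop : Filter.Tendsto Y Filter.atTop Filter.atTop := by
    have := expComb_tendsto (lamp α β γ δ) (lamm α β γ δ) (coefR α β γ δ x₀ y₀)
      (lamp_pos hα hδ hH) hlm_lt (coefR_pos hα hδ hx₀ hy₀) (y₀ - coefR α β γ δ x₀ y₀)
    exact this
  have hFtop : Filter.Tendsto F Filter.atTop Filter.atTop := hXtop.atTop_mul_atTop₀ hYtop
  set σf : ℝ → ℝ := ss F with hσdef
  set xs : ℝ → ℝ := fun t => X (σf t) with hxsdef
  set ys : ℝ → ℝ := fun t => Y (σf t) with hysdef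
  have hσspec : ∀ {u : ℝ}, 0 ≤ u → 0 ≤ σf u ∧ tt F (σf u) = u :=
    fun {u} hu => ss_spec hF hFpos hFtop hu
  have hσ0 : σf 0 = 0 := ss_zero hF hFpos hFtop
  have hσcont : ContinuousOn σf (Set.Ici 0) := ss_continuousOn hF hFpos hFtop
  have hxs_pos : ∀ t ≥ (0:ℝ), 0 < xs t := fun t ht => hXpos _ (hσspec ht).1
  have hys_pos : ∀ t ≥ (0:ℝ), 0 < ys t := fun t ht => hYpos _ (hσspec ht).1
  have hxs_cont : ContinuousOn xs (Set.Ici 0) := hXc.comp_continuousOn hσcont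
  have hys_cont : ContinuousOn ys (Set.Ici 0) := hYc.comp_continuousOn hσcont
  have hxs0 : xs 0 = x₀ := by
    show X (σf 0) = x₀
    rw [hσ0]
    exact Xf_zero
  have hys0 : ys 0 = y₀ := by
    show Y (σf 0) = y₀
    rw [hσ0]
    exact Yf_zero
  have hders : ∀ s > (0:ℝ),
      HasDerivAt xs (α * (1 / xs s) + β * (1 / ys s)) s ∧
      HasDerivAt ys (γ * (1 / xs s) + δ * (1 / ys s)) s := by
    intro s hs
    have hσd : HasDerivAt σf (F (σf s))⁻¹ s := ss_hasDerivAt hF hFpos hFtop hs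
    have hσs0 : 0 ≤ σf s := (hσspec hs.le).1
    have hXp : 0 < X (σf s) := hXpos _ hσs0
    have hYp : 0 < Y (σf s) := hYpos _ hσs0
    constructor
    · have hdx := (Xf_hasDerivAt (α:=α) (β:=β) (γ:=γ) (δ:=δ) (x₀:=x₀) (y₀:=y₀) hα hδ (σf s)).comp s hσd
      have hfun : (Xf α β γ δ x₀ y₀ ∘ σf) = xs := rfl
      rw [hfun] at hdx
      refine hdx.congr_deriv (Eq.symm ?_)
      have hFv : F (σf s) = X (σf s) * Y (σf s) := rfl
      rw [hFv]
      show α * (1 / X (σf s)) + β * (1 / Y (σf s))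
        = (β * Xf α β γ δ x₀ y₀ (σf s) + α * Yf α β γ δ x₀ y₀ (σf s))
          * (X (σf s) * Y (σf s))⁻¹
      rw [show Xf α β γ δ x₀ y₀ (σf s) = X (σf s) from rfl,
        show Yf α β γ δ x₀ y₀ (σf s) = Y (σf s) from rfl]
      field_simp
      ring
    · have hdy := (Yf_hasDerivAt (α:=α) (β:=β) (γ:=γ) (δ:=δ) (x₀:=x₀) (y₀:=y₀) hα hδ (σf s)).comp s hσd
      have hfun : (Yf α β γ δ x₀ y₀ ∘ σf) = ys := rfl
      rw [hfun] at hdy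
      refine hdy.congr_deriv (Eq.symm ?_)
      have hFv : F (σf s) = X (σf s) * Y (σf s) := rfl
      rw [hFv]
      show γ * (1 / X (σf s)) + δ * (1 / Y (σf s))
        = (δ * Xf α β γ δ x₀ y₀ (σf s) + γ * Yf α β γ δ x₀ y₀ (σf s))
          * (X (σf s) * Y (σf s))⁻¹
      rw [show Xf α β γ δ x₀ y₀ (σf s) = X (σf s) from rfl,
        show Yf α β γ δ x₀ y₀ (σf s) = Y (σf s) from rfl]
      field_simp
      ring
  have hsolx : IsSolution α β γ δ x₀ y₀ xs ys := by
    refine ⟨hxs_cont, hys_cont,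
      fun t ht => ⟨(hxs_pos t ht).le, (hys_pos t ht).le⟩, hxs0, hys0, ?_⟩
    intro t ht
    have hxint : IntervalIntegrable (fun s => 1 / xs s) volume 0 t := by
      apply ContinuousOn.intervalIntegrable
      rw [Set.uIcc_of_le ht]
      exact continuousOn_const.div (hxs_cont.mono Set.Icc_subset_Ici_self)
        (fun s hs => (hxs_pos s hs.1).ne')
    have hyint : IntervalIntegrable (fun s => 1 / ys s) volume 0 t := by
      apply ContinuousOn.intervalIntegrable
      rw [Set.uIcc_of_le ht]
      exact continuousOn_const.div (hys_cont.mono Set.Icc_subset_Ici_self)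
        (fun s hs => (hys_pos s hs.1).ne')
    have hxe : {s ∈ Set.Icc (0:ℝ) t | xs s = 0} = ∅ := by
      ext s
      simp only [Set.mem_setOf_eq, Set.mem_Icc, Set.mem_empty_iff_false, iff_false, not_and]
      rintro ⟨hs0, -⟩ hz
      exact absurd hz (hxs_pos s hs0).ne'
    have hye : {s ∈ Set.Icc (0:ℝ) t | ys s = 0} = ∅ := by
      ext s
      simp only [Set.mem_setOf_eq, Set.mem_Icc, Set.mem_empty_iff_false, iff_false, not_and]
      rintro ⟨hs0, -⟩ hz
      exact absurd hz (hys_pos s hs0).ne'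
    refine ⟨by rw [hxe]; exact measure_empty, by rw [hye]; exact measure_empty,
      hxint, hyint, ?_, ?_⟩
    · exact integral_eq_of_deriv hxs_cont hys_cont hxs_pos hys_pos hxs0
        (fun s hs => (hders s hs).1) t ht
    · have := integral_eq_of_deriv hys_cont hxs_cont hys_pos hxs_pos hys0
        (fun s hs => by
          have h2 : δ * (1 / ys s) + γ * (1 / xs s) = γ * (1 / xs s) + δ * (1 / ys s) := by ring
          rw [h2]
          exact (hders s hs).2) t ht
      rw [this]
      ring
  -- positivity of an arbitrary solution
  have harb : ∀ x' y', IsSolution α β γ δ x₀ y₀ x' y' →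
      ∀ s ≥ (0:ℝ), 0 < x' s ∧ 0 < y' s := by
    intro x' y' hsol'
    by_contra hcon
    push_neg at hcon
    obtain ⟨s₀, hs₀0, hs₀⟩ := hcon
    set Z : Set ℝ := (Set.Ici 0 ∩ x' ⁻¹' {0}) ∪ (Set.Ici 0 ∩ y' ⁻¹' {0}) with hZdef
    have hZc : IsClosed Z :=
      (hsol'.1.preimage_isClosed_of_isClosed isClosed_Ici isClosed_singleton).union
        (hsol'.2.1.preimage_isClosed_of_isClosed isClosed_Ici isClosed_singleton)
    have hZne : Z.Nonempty := by
      refine ⟨s₀, ?_⟩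
      have hnn := hsol'.2.2.1 s₀ hs₀0
      rcases le_or_gt (x' s₀) 0 with h | h
      · exact Or.inl ⟨hs₀0, le_antisymm h hnn.1⟩
      · have h2 : y' s₀ ≤ 0 := hs₀ h
        exact Or.inr ⟨hs₀0, le_antisymm h2 hnn.2⟩
    have hZbdd : BddBelow Z := ⟨0, by rintro z (⟨hz, -⟩ | ⟨hz, -⟩) <;> exact hz⟩
    set t₀ := sInf Z with ht₀def
    have ht₀Z : t₀ ∈ Z := hZc.csInf_mem hZne hZbdd
    have ht₀0 : 0 ≤ t₀ := by rcases ht₀Z with ⟨h, -⟩ | ⟨h, -⟩ <;> exact h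
    have hx'0 : x' 0 = x₀ := hsol'.2.2.2.1
    have hy'0 : y' 0 = y₀ := hsol'.2.2.2.2.1
    have ht₀pos : 0 < t₀ := by
      rcases eq_or_lt_of_le ht₀0 with h | h
      · exfalso
        rcases ht₀Z with ⟨-, hz⟩ | ⟨-, hz⟩
        · rw [Set.mem_preimage, Set.mem_singleton_iff, ← h, hx'0] at hz
          exact absurd hz hx₀.ne'
        · rw [Set.mem_preimage, Set.mem_singleton_iff, ← h, hy'0] at hz
          exact absurd hz hy₀.ne'
      · exact h
    have hbefore : ∀ u, 0 ≤ u → u < t₀ → 0 < x' u ∧ 0 < y' u := by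
      intro u hu hut
      have hnotin : u ∉ Z := fun hin => absurd (csInf_le hZbdd hin) (not_le.2 hut)
      have hnn := hsol'.2.2.1 u hu
      constructor
      · rcases eq_or_lt_of_le hnn.1 with h | h
        · exact absurd (Or.inl ⟨hu, by
            rw [Set.mem_preimage, Set.mem_singleton_iff]; exact h.symm⟩) hnotin
        · exact h
      · rcases eq_or_lt_of_le hnn.2 with h | h
        · exact absurd (Or.inr ⟨hu, by
            rw [Set.mem_preimage, Set.mem_singleton_iff]; exact h.symm⟩) hnotin
        · exact h
    have heqb : ∀ u, 0 ≤ u → u < t₀ → x' u = xs u ∧ y' u = ys u := by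
      intro u hu hut
      exact sol_eqOn hu hsol' hsolx
        (fun s hs => hbefore s hs.1 (lt_of_le_of_lt hs.2 hut))
        (fun s hs => ⟨hxs_pos s hs.1, hys_pos s hs.1⟩) u ⟨hu, le_rfl⟩
    have hne2 : (nhdsWithin t₀ (Set.Ico 0 t₀)).NeBot := by
      apply mem_closure_iff_nhdsWithin_neBot.1
      rw [closure_Ico ht₀pos.ne]
      exact Set.right_mem_Icc.2 ht₀0
    have hsub : Set.Ico (0:ℝ) t₀ ⊆ Set.Ici 0 := fun s hs => hs.1
    have hx'lim : Filter.Tendsto x' (nhdsWithin t₀ (Set.Ico 0 t₀)) (nhds (x' t₀)) :=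
      (hsol'.1 t₀ ht₀0).mono_left (nhdsWithin_mono _ hsub)
    have hy'lim : Filter.Tendsto y' (nhdsWithin t₀ (Set.Ico 0 t₀)) (nhds (y' t₀)) :=
      (hsol'.2.1 t₀ ht₀0).mono_left (nhdsWithin_mono _ hsub)
    have hxslim : Filter.Tendsto xs (nhdsWithin t₀ (Set.Ico 0 t₀)) (nhds (xs t₀)) :=
      (hxs_cont t₀ ht₀0).mono_left (nhdsWithin_mono _ hsub)
    have hyslim : Filter.Tendsto ys (nhdsWithin t₀ (Set.Ico 0 t₀)) (nhds (ys t₀)) :=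
      (hys_cont t₀ ht₀0).mono_left (nhdsWithin_mono _ hsub)
    have hxeq : x' t₀ = xs t₀ := by
      apply tendsto_nhds_unique (hx'lim.congr' ?_) hxslim
      filter_upwards [self_mem_nhdsWithin] with u hu
      exact (heqb u hu.1 hu.2).1
    have hyeq : y' t₀ = ys t₀ := by
      apply tendsto_nhds_unique (hy'lim.congr' ?_) hyslim
      filter_upwards [self_mem_nhdsWithin] with u hu
      exact (heqb u hu.1 hu.2).2
    rcases ht₀Z with ⟨-, hz⟩ | ⟨-, hz⟩
    · rw [Set.mem_preimage, Set.mem_singleton_iff, hxeq] at hz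
      exact absurd hz (hxs_pos t₀ ht₀0).ne'
    · rw [Set.mem_preimage, Set.mem_singleton_iff, hyeq] at hz
      exact absurd hz (hys_pos t₀ ht₀0).ne'
  refine ⟨xs, ys, hsolx, fun t ht => ⟨hxs_pos t ht, hys_pos t ht⟩, ?_⟩
  intro x' y' hsol' t ht
  exact sol_eqOn ht hsol' hsolx
    (fun s hs => harb x' y' hsol' s hs.1)
    (fun s hs => ⟨hxs_pos s hs.1, hys_pos s hs.1⟩) t ⟨ht, le_rfl⟩
end
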